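/- arXiv:2403.15602 — 13 statements merged into one kernel-verified Lean document; each statement's English description precedes it below -/
import Mathlib

section
/- For every n ≥ 9, there exists an n-vertex rainbow C_5-saturated graph with at most ⌊5n/2⌋ − 4 edges; consequently sat*(n, C_5) ≤ ⌊5n/2⌋ − 4. -/
/-- A proper edge-coloring: any two distinct edges of `G` sharing a vertex
receive different colors. -/
def ProperEdgeColoring {V : Type*} (G : SimpleGraph V) (c : Sym2 V → ℕ) : Prop :=
  ∀ e₁ ∈ G.edgeSet, ∀ e₂ ∈ G.edgeSet, e₁ ≠ e₂ → (∃ v, v ∈ e₁ ∧ v ∈ e₂) → c e₁ ≠ c e₂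

/-- `G` contains a rainbow copy of the cycle `C_k` under the edge-coloring `c`:
there are `k` distinct vertices, cyclically consecutive ones adjacent, whose
`k` cycle edges receive pairwise distinct colors. -/
def HasRainbowCycle {V : Type*} (G : SimpleGraph V) (c : Sym2 V → ℕ) (k : ℕ) : Prop :=
  ∃ f : ZMod k → V, Function.Injective f ∧ (∀ i, G.Adj (f i) (f (i + 1))) ∧
    Function.Injective (fun i : ZMod k => c s(f i, f (i + 1)))

/-- `G` is (properly) rainbow `C_k`-saturated: some proper edge-coloring of `G`
has no rainbow `C_k`-copy, but for every pair of nonadjacent vertices `x, y`,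
every proper edge-coloring of `G + xy` contains a rainbow `C_k`-copy. -/
def RainbowSat {V : Type*} (G : SimpleGraph V) (k : ℕ) : Prop :=
  (∃ c, ProperEdgeColoring G c ∧ ¬ HasRainbowCycle G c k) ∧
  ∀ x y : V, x ≠ y → ¬ G.Adj x y →
    ∀ c, ProperEdgeColoring (G ⊔ SimpleGraph.fromEdgeSet {s(x, y)}) c →
      HasRainbowCycle (G ⊔ SimpleGraph.fromEdgeSet {s(x, y)}) c k

namespace RC5

/-- partner of a pendant vertex index -/
def pa (m : ℕ) : ℕ := if m % 2 = 0 then m + 1 else m - 1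

lemma pa_pa {m : ℕ} (h : 2 ≤ m) : pa (pa m) = m := by unfold pa; split_ifs <;> omega
lemma pa_ge {m : ℕ} (h : 2 ≤ m) : 2 ≤ pa m := by unfold pa; split_ifs <;> omega
lemma pa_ne (m : ℕ) : pa m ≠ m := by unfold pa; split_ifs <;> omega
lemma pa_inj {a b : ℕ} (ha : 2 ≤ a) (hb : 2 ≤ b) (h : pa a = pa b) : a = b := by
  unfold pa at h; split_ifs at h <;> omega

/-- the construction: hubs 0,1 adjacent to everything; other vertices in partner pairs. -/
def G (n : ℕ) : SimpleGraph (Fin n) where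
  Adj x y := x ≠ y ∧ (x.val ≤ 1 ∨ y.val ≤ 1 ∨ (2 ≤ x.val ∧ y.val = pa x.val))
  symm := ⟨by
    intro x y ⟨hne, h⟩
    refine ⟨hne.symm, ?_⟩
    rcases h with h | h | ⟨h2, h3⟩
    · right; left; exact h
    · left; exact h
    · right; right
      refine ⟨by rw [h3]; exact pa_ge h2, by rw [h3, pa_pa h2]⟩⟩
  loopless := ⟨fun x ⟨h, _⟩ => h rfl⟩

lemma G_adj {n : ℕ} (x y : Fin n) :
    (G n).Adj x y ↔ x ≠ y ∧ (x.val ≤ 1 ∨ y.val ≤ 1 ∨ (2 ≤ x.val ∧ y.val = pa x.val)) :=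
  Iff.rfl

/-- color pattern -/
def F (n : ℕ) (i j : ℕ) : ℕ :=
  if i = 0 then (if j = 1 then 1 else 10 * j)
  else if i = 1 then (if pa j < n then 10 * pa j else 10 * j + 5)
  else 10 * j + 7

def c0 (n : ℕ) : Sym2 (Fin n) → ℕ :=
  Sym2.lift ⟨fun a b => F n (min a.val b.val) (max a.val b.val),
    fun a b => by
      show F n (min a.val b.val) (max a.val b.val) = F n (min b.val a.val) (max b.val a.val)
      rw [min_comm, max_comm]⟩

lemma c0_apply {n : ℕ} (a b : Fin n) :
    c0 n s(a, b) = F n (min a.val b.val) (max a.val b.val) := rfl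

lemma c0_proper_at {n : ℕ} (a b b' : Fin n) (hab : (G n).Adj a b) (hab' : (G n).Adj a b')
    (hbb' : b ≠ b') : c0 n s(a, b) ≠ c0 n s(a, b') := by
  obtain ⟨hne, h⟩ := hab
  obtain ⟨hne', h'⟩ := hab'
  have h1 : a.val ≠ b.val := fun hh => hne (Fin.ext hh)
  have h2 : a.val ≠ b'.val := fun hh => hne' (Fin.ext hh)
  have h3 : b.val ≠ b'.val := fun hh => hbb' (Fin.ext hh)
  have hb : b.val < n := b.isLt
  have hb' : b'.val < n := b'.isLt
  have ha : a.val < n := a.isLt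
  rw [c0_apply, c0_apply]
  have hdis : ∀ m : ℕ, (m % 2 = 0 ∧ pa m = m + 1) ∨ (m % 2 = 1 ∧ pa m = m - 1) := by
    intro m; unfold pa; split_ifs <;> omega
  obtain h4 := hdis (max a.val b.val)
  obtain h5 := hdis (max a.val b'.val)
  obtain h6 := hdis a.val
  obtain h7 := hdis b.val
  obtain h8 := hdis b'.val
  unfold F
  split_ifs <;> omega

lemma c0_proper (n : ℕ) : ProperEdgeColoring (G n) (c0 n) := by
  intro e1 he1 e2 he2 hne ⟨v, hv1, hv2⟩
  obtain ⟨b, rfl⟩ := (Sym2.mem_iff_exists).1 hv1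
  obtain ⟨b', rfl⟩ := (Sym2.mem_iff_exists).1 hv2
  have hb : b ≠ b' := by rintro rfl; exact hne rfl
  exact c0_proper_at v b b' ((SimpleGraph.mem_edgeSet _).1 he1) ((SimpleGraph.mem_edgeSet _).1 he2) hb

lemma zmod5_all (motive : ZMod 5 → Prop) (h0 : motive 0) (h1 : motive 1) (h2 : motive 2)
    (h3 : motive 3) (h4 : motive 4) : ∀ i, motive i := by
  intro i; fin_cases i <;> assumption

lemma c0_norainbow (n : ℕ) (hn : 9 ≤ n) : ¬ HasRainbowCycle (G n) (c0 n) 5 := by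
  rintro ⟨f, hinj, hadj, hcol⟩
  have hV0 : (0 : ℕ) < n := by omega
  have hV1 : (1 : ℕ) < n := by omega
  set V0 : Fin n := ⟨0, hV0⟩ with hV0def
  set V1 : Fin n := ⟨1, hV1⟩ with hV1def
  have hK : ∀ i : ZMod 5, 2 ≤ (f i).val → 2 ≤ (f (i+1)).val → (f (i+1)).val = pa (f i).val := by
    intro i h1 h2
    obtain ⟨hne, h⟩ := hadj i
    rcases h with h | h | ⟨_, h⟩
    · omega
    · omega
    · exact h
  have hK3 : ∀ i : ZMod 5, 2 ≤ (f i).val → 2 ≤ (f (i+1)).val → 2 ≤ (f (i+2)).val → False := by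
    intro i h1 h2 h3
    have h12 : i + 1 + 1 = i + 2 := by ring
    have e1 := hK i h1 h2
    have e2 := hK (i+1) h2 (by rw [h12]; exact h3)
    rw [h12] at e2
    have hval : (f (i+2)).val = (f i).val := by rw [e2, e1, pa_pa h1]
    have heq : i + 2 = i := hinj (Fin.ext hval)
    have : ∀ a : ZMod 5, a + 2 ≠ a := by decide
    exact this i heq
  have hge2 : ∀ i : ZMod 5, f i ≠ V0 → f i ≠ V1 → 2 ≤ (f i).val := by
    intro i h0 h1
    by_contra h
    push_neg at h
    have : (f i).val = 0 ∨ (f i).val = 1 := by omega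
    rcases this with h' | h'
    · exact h0 (Fin.ext h')
    · exact h1 (Fin.ext h')
  have hx0 : ∃ i, f i = V0 := by
    by_contra h0
    push_neg at h0
    by_cases h1 : ∃ i, f i = V1
    · obtain ⟨i1, hi1⟩ := h1
      have hne1 : ∀ j : ZMod 5, j ≠ i1 → f j ≠ V1 :=
        fun j hj hEq => hj (hinj (hEq.trans hi1.symm))
      have hd : ∀ a : ZMod 5, a + 1 ≠ a ∧ a + 1 + 1 ≠ a ∧ a + 1 + 2 ≠ a := by decide
      exact hK3 (i1+1) (hge2 _ (h0 _) (hne1 _ (hd i1).1))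
        (hge2 _ (h0 _) (hne1 _ (hd i1).2.1)) (hge2 _ (h0 _) (hne1 _ (hd i1).2.2))
    · push_neg at h1
      exact hK3 0 (hge2 0 (h0 0) (h1 0)) (hge2 _ (h0 _) (h1 _)) (hge2 _ (h0 _) (h1 _))
  have hx1 : ∃ i, f i = V1 := by
    by_contra h1
    push_neg at h1
    obtain ⟨i0, hi0⟩ := hx0
    have hne0 : ∀ j : ZMod 5, j ≠ i0 → f j ≠ V0 :=
      fun j hj hEq => hj (hinj (hEq.trans hi0.symm))
    have hd : ∀ a : ZMod 5, a + 1 ≠ a ∧ a + 1 + 1 ≠ a ∧ a + 1 + 2 ≠ a := by decide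
    exact hK3 (i0+1) (hge2 _ (hne0 _ (hd i0).1) (h1 _))
      (hge2 _ (hne0 _ (hd i0).2.1) (h1 _)) (hge2 _ (hne0 _ (hd i0).2.2) (h1 _))
  obtain ⟨i0, hi0⟩ := hx0
  obtain ⟨i1, hi1⟩ := hx1
  have hne01 : i0 ≠ i1 := by
    intro h
    rw [h, hi1] at hi0
    exact absurd (congrArg Fin.val hi0) (by simp [hV0def, hV1def])
  have hne1 : ∀ j : ZMod 5, j ≠ i1 → f j ≠ V1 :=
    fun j hj hEq => hj (hinj (hEq.trans hi1.symm))
  have hne0 : ∀ j : ZMod 5, j ≠ i0 → f j ≠ V0 :=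
    fun j hj hEq => hj (hinj (hEq.trans hi0.symm))
  have hcases : i1 = i0 + 1 ∨ i1 = i0 + 2 ∨ i1 = i0 + 3 ∨ i1 = i0 + 4 := by
    have : ∀ a b : ZMod 5, a ≠ b → (b = a + 1 ∨ b = a + 2 ∨ b = a + 3 ∨ b = a + 4) := by decide
    exact this _ _ hne01
  -- helper to compute colors
  have hcolor : ∀ i : ZMod 5, (fun j : ZMod 5 => c0 n s(f j, f (j+1))) i
      = F n (min (f i).val (f (i+1)).val) (max (f i).val (f (i+1)).val) := fun i => rfl
  rcases hcases with hc | hc | hc | hc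
  · -- i1 = i0 + 1 : three consecutive pendant positions i0+2, i0+3, i0+4
    have hd : ∀ a : ZMod 5, (a+2 ≠ a ∧ a+2 ≠ a+1) ∧ (a+3 ≠ a ∧ a+3 ≠ a+1) ∧
        (a+4 ≠ a ∧ a+4 ≠ a+1) ∧ (a+2+1 = a+3 ∧ a+2+2 = a+4) := by decide
    obtain ⟨⟨d1,d2⟩,⟨d3,d4⟩,⟨d5,d6⟩,⟨d7,d8⟩⟩ := hd i0
    rw [hc] at hne1
    refine hK3 (i0+2) (hge2 _ (hne0 _ d1) (hne1 _ d2)) ?_ ?_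
    · rw [d7]; exact hge2 _ (hne0 _ d3) (hne1 _ d4)
    · rw [d8]; exact hge2 _ (hne0 _ d5) (hne1 _ d6)
  · -- i1 = i0 + 2 : pendants at i0+3, i0+4 are partners; colors at i0+2 and i0+4 agree
    have hd : ∀ a : ZMod 5, (a+3 ≠ a ∧ a+3 ≠ a+2) ∧ (a+4 ≠ a ∧ a+4 ≠ a+2) ∧
        (a+3+1 = a+4 ∧ a+4+1 = a ∧ a+2+1 = a+3) ∧ a+2 ≠ a+4 := by decide
    obtain ⟨⟨d1,d2⟩,⟨d3,d4⟩,⟨d5,d6,d7⟩,d8⟩ := hd i0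
    rw [hc] at hne1
    have hY : 2 ≤ (f (i0+3)).val := hge2 _ (hne0 _ d1) (hne1 _ d2)
    have hZ : 2 ≤ (f (i0+4)).val := hge2 _ (hne0 _ d3) (hne1 _ d4)
    have e : (f (i0+4)).val = pa (f (i0+3)).val := by
      have := hK (i0+3) hY (by rw [d5]; exact hZ)
      rw [d5] at this; exact this
    have hcol2 : c0 n s(f (i0+2), f (i0+2+1)) = 10 * (f (i0+4)).val := by
      rw [d7]
      rw [show f (i0+2) = V1 from hi1 ▸ (congrArg f hc.symm)]
      rw [c0_apply]
      have hmin : min (V1).val (f (i0+3)).val = 1 := by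
        simp only [hV1def]; omega
      have hmax : max (V1).val (f (i0+3)).val = (f (i0+3)).val := by
        simp only [hV1def]; omega
      rw [hmin, hmax]
      unfold F
      rw [if_neg (by omega), if_pos rfl, if_pos (by rw [← e]; exact (f (i0+4)).isLt), ← e]
    have hcol4 : c0 n s(f (i0+4), f (i0+4+1)) = 10 * (f (i0+4)).val := by
      rw [d6, hi0, c0_apply]
      have hmin : min (f (i0+4)).val (V0).val = 0 := by simp only [hV0def]; omega
      have hmax : max (f (i0+4)).val (V0).val = (f (i0+4)).val := by
        simp only [hV0def]; omega
      rw [hmin, hmax]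
      unfold F
      rw [if_pos rfl, if_neg (by omega)]
    have : i0 + 2 = i0 + 4 := hcol (by
      show c0 n s(f (i0+2), f (i0+2+1)) = c0 n s(f (i0+4), f (i0+4+1))
      rw [hcol2, hcol4])
    exact d8 this
  · -- i1 = i0 + 3 : pendants at i0+1, i0+2 are partners; colors at i0 and i0+2 agree
    have hd : ∀ a : ZMod 5, (a+1 ≠ a ∧ a+1 ≠ a+3) ∧ (a+2 ≠ a ∧ a+2 ≠ a+3) ∧
        (a+1+1 = a+2 ∧ a+2+1 = a+3 ∧ a+0+1 = a+1 ∧ a + 0 = a) ∧ a ≠ a+2 := by decide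
    obtain ⟨⟨d1,d2⟩,⟨d3,d4⟩,⟨d5,d6,d7,d9⟩,d8⟩ := hd i0
    rw [hc] at hne1
    have hX : 2 ≤ (f (i0+1)).val := hge2 _ (hne0 _ d1) (hne1 _ d2)
    have hY : 2 ≤ (f (i0+2)).val := hge2 _ (hne0 _ d3) (hne1 _ d4)
    have e : (f (i0+2)).val = pa (f (i0+1)).val := by
      have := hK (i0+1) hX (by rw [d5]; exact hY)
      rw [d5] at this; exact this
    have hcol0 : c0 n s(f i0, f (i0+1)) = 10 * (f (i0+1)).val := by
      rw [hi0, c0_apply]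
      have hmin : min (V0).val (f (i0+1)).val = 0 := by simp only [hV0def]; omega
      have hmax : max (V0).val (f (i0+1)).val = (f (i0+1)).val := by
        simp only [hV0def]; omega
      rw [hmin, hmax]
      unfold F
      rw [if_pos rfl, if_neg (by omega)]
    have hcol2 : c0 n s(f (i0+2), f (i0+2+1)) = 10 * (f (i0+1)).val := by
      rw [d6]
      rw [show f (i0+3) = V1 from hi1 ▸ (congrArg f hc.symm)]
      rw [c0_apply]
      have hmin : min (f (i0+2)).val (V1).val = 1 := by simp only [hV1def]; omega
      have hmax : max (f (i0+2)).val (V1).val = (f (i0+2)).val := by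
        simp only [hV1def]; omega
      rw [hmin, hmax]
      unfold F
      have hpp : pa (f (i0+2)).val = (f (i0+1)).val := by rw [e, pa_pa hX]
      rw [if_neg (by omega), if_pos rfl, if_pos (by rw [hpp]; exact (f (i0+1)).isLt), hpp]
    have : i0 = i0 + 2 := hcol (by
      show c0 n s(f i0, f (i0+1)) = c0 n s(f (i0+2), f (i0+2+1))
      rw [hcol0, hcol2])
    exact d8 this
  · -- i1 = i0 + 4 : three consecutive pendants at i0+1, i0+2, i0+3
    have hd : ∀ a : ZMod 5, (a+1 ≠ a ∧ a+1 ≠ a+4) ∧ (a+2 ≠ a ∧ a+2 ≠ a+4) ∧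
        (a+3 ≠ a ∧ a+3 ≠ a+4) ∧ (a+1+1 = a+2 ∧ a+1+2 = a+3) := by decide
    obtain ⟨⟨d1,d2⟩,⟨d3,d4⟩,⟨d5,d6⟩,⟨d7,d8⟩⟩ := hd i0
    rw [hc] at hne1
    refine hK3 (i0+1) (hge2 _ (hne0 _ d1) (hne1 _ d2)) ?_ ?_
    · rw [d7]; exact hge2 _ (hne0 _ d3) (hne1 _ d4)
    · rw [d8]; exact hge2 _ (hne0 _ d5) (hne1 _ d6)

lemma inj5 {β : Type*} (g : ZMod 5 → β)
    (h01 : g 0 ≠ g 1) (h02 : g 0 ≠ g 2) (h03 : g 0 ≠ g 3) (h04 : g 0 ≠ g 4)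
    (h12 : g 1 ≠ g 2) (h13 : g 1 ≠ g 3) (h14 : g 1 ≠ g 4)
    (h23 : g 2 ≠ g 3) (h24 : g 2 ≠ g 4) (h34 : g 3 ≠ g 4) :
    Function.Injective g := by
  intro a b hab
  fin_cases a <;> fin_cases b <;> first | rfl | exact absurd hab ‹_› | exact absurd hab.symm ‹_›

lemma kill {V : Type*} {G : SimpleGraph V} {c : Sym2 V → ℕ}
    (hc : ProperEdgeColoring G c) (hnr : ¬ HasRainbowCycle G c 5)
    (v0 v1 v2 v3 v4 : V)
    (h01 : G.Adj v0 v1) (h12 : G.Adj v1 v2) (h23 : G.Adj v2 v3)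
    (h34 : G.Adj v3 v4) (h40 : G.Adj v4 v0)
    (d02 : v0 ≠ v2) (d03 : v0 ≠ v3) (d13 : v1 ≠ v3) (d14 : v1 ≠ v4) (d24 : v2 ≠ v4) :
    c s(v0,v1) = c s(v2,v3) ∨ c s(v1,v2) = c s(v3,v4) ∨ c s(v2,v3) = c s(v4,v0) ∨
      c s(v3,v4) = c s(v0,v1) ∨ c s(v4,v0) = c s(v1,v2) := by
  by_contra hcon
  push_neg at hcon
  obtain ⟨k1, k2, k3, k4, k5⟩ := hcon
  apply hnr
  refine ⟨![v0,v1,v2,v3,v4], ?_, ?_, ?_⟩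
  · exact inj5 _ h01.ne d02 d03 h40.ne.symm h12.ne d13 d14 h23.ne d24 h34.ne
  · exact zmod5_all _ h01 h12 h23 h34 h40
  · have hedge : ∀ a b : V, G.Adj a b → s(a,b) ∈ G.edgeSet := fun a b h => h
    have hne : ∀ a b d : V, a ≠ d → G.Adj a b → G.Adj b d → c s(a,b) ≠ c s(b,d) := by
      intro a b d had hab hbd heq
      refine hc _ (hedge _ _ hab) _ (hedge _ _ hbd) ?_ ⟨b, by simp, by simp⟩ heq
      intro h
      rw [Sym2.eq_iff] at h
      rcases h with ⟨h1, _⟩ | ⟨h1, _⟩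
      · exact hab.ne h1
      · exact had h1
    refine inj5 _ ?_ ?_ ?_ ?_ ?_ ?_ ?_ ?_ ?_ ?_ <;>
      show c s(_,_) ≠ c s(_,_)
    · exact hne _ _ _ d02 h01 h12
    · exact k1
    · exact fun h => k4 h.symm
    · exact fun h => (hne _ _ _ d14.symm h40 h01) h.symm
    · exact hne _ _ _ d13 h12 h23
    · exact k2
    · exact fun h => k5 h.symm
    · exact hne _ _ _ d24 h23 h34
    · exact k3
    · exact hne _ _ _ (d03.symm) h34 h40

lemma slot_eq {α : Type*} (P1 P2 P3 P4 : α → Prop)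
    [∀ a, Decidable (P1 a)] [∀ a, Decidable (P2 a)] [∀ a, Decidable (P3 a)]
    (z z' : α)
    (h : (if P1 z then (0:ℕ) else if P2 z then 1 else if P3 z then 2 else 3)
       = (if P1 z' then (0:ℕ) else if P2 z' then 1 else if P3 z' then 2 else 3))
    (hz : P1 z ∨ P2 z ∨ P3 z ∨ P4 z) (hz' : P1 z' ∨ P2 z' ∨ P3 z' ∨ P4 z') :
    (P1 z ∧ P1 z') ∨ (P2 z ∧ P2 z') ∨ (P3 z ∧ P3 z') ∨ (P4 z ∧ P4 z') := by
  split_ifs at h <;> first | omega | tauto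

lemma sat_aux (n : ℕ) (hn : 9 ≤ n) (x y : Fin n) (hxy : x ≠ y)
    (hx2 : 2 ≤ x.val) (hy2 : 2 ≤ y.val) (hnp : y.val ≠ pa x.val) (hpx : pa x.val < n)
    (c : Sym2 (Fin n) → ℕ)
    (hc : ProperEdgeColoring (G n ⊔ SimpleGraph.fromEdgeSet {s(x, y)}) c)
    (hnr : ¬ HasRainbowCycle (G n ⊔ SimpleGraph.fromEdgeSet {s(x, y)}) c 5) : False := by
  set G' : SimpleGraph (Fin n) := G n ⊔ SimpleGraph.fromEdgeSet {s(x, y)} with hG'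
  have hV0 : (0 : ℕ) < n := by omega
  have hV1 : (1 : ℕ) < n := by omega
  set V0 : Fin n := ⟨0, hV0⟩ with hV0def
  set V1 : Fin n := ⟨1, hV1⟩ with hV1def
  set x' : Fin n := ⟨pa x.val, hpx⟩ with hx'def
  have fv : ∀ (a b : Fin n), a.val ≠ b.val → a ≠ b := fun a b h hh => h (congrArg Fin.val hh)
  have hx'2 : 2 ≤ x'.val := pa_ge hx2
  have hpa2 : 2 ≤ pa x.val := pa_ge hx2
  have hpane : pa x.val ≠ x.val := pa_ne x.val
  have hxV0 : x ≠ V0 := fv _ _ (show x.val ≠ 0 by omega)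
  have hxV1 : x ≠ V1 := fv _ _ (show x.val ≠ 1 by omega)
  have hyV0 : y ≠ V0 := fv _ _ (show y.val ≠ 0 by omega)
  have hyV1 : y ≠ V1 := fv _ _ (show y.val ≠ 1 by omega)
  have hx'V0 : x' ≠ V0 := fv _ _ (show pa x.val ≠ 0 by omega)
  have hx'V1 : x' ≠ V1 := fv _ _ (show pa x.val ≠ 1 by omega)
  have hx'x : x' ≠ x := fv _ _ (show pa x.val ≠ x.val from hpane)
  have hx'y : x' ≠ y := fv _ _ (show pa x.val ≠ y.val from Ne.symm hnp)
  have hV01 : V0 ≠ V1 := fv _ _ (show (0:ℕ) ≠ 1 by omega)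
  -- adjacency helpers
  have hGle : ∀ a b : Fin n, (G n).Adj a b → G'.Adj a b := by
    intro a b h; rw [hG', SimpleGraph.sup_adj]; exact Or.inl h
  have hadj0 : ∀ z : Fin n, z ≠ V0 → G'.Adj V0 z := by
    intro z hz
    exact hGle _ _ ⟨hz.symm, Or.inl (by simp [hV0def])⟩
  have hadj1 : ∀ z : Fin n, z ≠ V1 → G'.Adj V1 z := by
    intro z hz
    exact hGle _ _ ⟨hz.symm, Or.inl (by simp [hV1def])⟩
  have hxyadj : G'.Adj x y := by
    rw [hG', SimpleGraph.sup_adj, SimpleGraph.fromEdgeSet_adj]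
    exact Or.inr ⟨Set.mem_singleton _, hxy⟩
  have hxx' : G'.Adj x' x := by
    refine hGle _ _ ⟨hx'x, Or.inr (Or.inr ⟨hx'2, ?_⟩)⟩
    show x.val = pa x'.val
    simp only [hx'def]
    rw [pa_pa hx2]
  -- injectivity of colors at the hubs
  have hedge : ∀ a b : Fin n, G'.Adj a b → s(a,b) ∈ G'.edgeSet := fun a b h => h
  have hsym2ne : ∀ a b b' : Fin n, b ≠ b' → a ≠ b' → s(a, b) ≠ s(a, b') := by
    intro a b b' h1 h2 hh
    rw [Sym2.eq_iff] at hh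
    rcases hh with ⟨_, h⟩ | ⟨h, _⟩
    · exact h1 h
    · exact h2 h
  have hA : ∀ z z' : Fin n, z ≠ V0 → z' ≠ V0 → c s(V0, z) = c s(V0, z') → z = z' := by
    intro z z' hz hz' heq
    by_contra hne
    exact hc _ (hedge _ _ (hadj0 z hz)) _ (hedge _ _ (hadj0 z' hz'))
      (hsym2ne _ _ _ hne (Ne.symm hz')) ⟨V0, by simp, by simp⟩ heq
  have hB : ∀ z z' : Fin n, z ≠ V1 → z' ≠ V1 → c s(V1, z) = c s(V1, z') → z = z' := by
    intro z z' hz hz' heq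
    by_contra hne
    exact hc _ (hedge _ _ (hadj1 z hz)) _ (hedge _ _ (hadj1 z' hz'))
      (hsym2ne _ _ _ hne (Ne.symm hz')) ⟨V1, by simp, by simp⟩ heq
  -- swap lemmas for convenience
  have sw : ∀ a b : Fin n, s(a,b) = s(b,a) := fun a b => Sym2.eq_swap
  -- the set of "free" vertices
  have hcard : ∀ (B : Finset (Fin n)), B.card ≤ 4 → 4 < (Finset.univ \ B).card := by
    intro B hB
    have h1 : (Finset.univ \ B).card ≥ Finset.univ.card - B.card := Finset.le_card_sdiff _ _
    have h2 : (Finset.univ : Finset (Fin n)).card = n := by simp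
    omega
  have hcard4 : ∀ a b d e : Fin n, ({a,b,d,e} : Finset (Fin n)).card ≤ 4 := by
    intro a b d e
    refine (Finset.card_insert_le _ _).trans (Nat.succ_le_succ ?_)
    refine (Finset.card_insert_le _ _).trans (Nat.succ_le_succ ?_)
    refine (Finset.card_insert_le _ _).trans (Nat.succ_le_succ ?_)
    simp
  -- Step 1: c s(V1,x) = c s(y,V0)
  have step1 : c s(V1, x) = c s(y, V0) := by
    by_contra hAB
    set S : Finset (Fin n) := Finset.univ \ {V0, V1, x, y} with hS
    have hkey : ∀ z ∈ S, (c s(x,y) = c s(V0,z)) ∨ (c s(y,V0) = c s(z,V1)) ∨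
        (c s(V0,z) = c s(V1,x)) ∨ (c s(z,V1) = c s(x,y)) := by
      intro z hz
      rw [hS, Finset.mem_sdiff] at hz
      obtain ⟨-, hz⟩ := hz
      simp only [Finset.mem_insert, Finset.mem_singleton] at hz
      push_neg at hz
      obtain ⟨hz0, hz1, hzx, hzy⟩ := hz
      have := kill hc hnr x y V0 z V1 hxyadj ((hadj0 y hyV0).symm) (hadj0 z hz0)
        ((hadj1 z hz1).symm) (hadj1 x hxV1) hxV0 (Ne.symm hzx) (Ne.symm hzy) hyV1 hV01
      rcases this with h | h | h | h | h
      · exact Or.inl h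
      · exact Or.inr (Or.inl h)
      · exact Or.inr (Or.inr (Or.inl h))
      · exact Or.inr (Or.inr (Or.inr h))
      · exact absurd h hAB
    classical
    obtain ⟨z, hz, z', hz', hnezz, heq⟩ :=
      Finset.exists_ne_map_eq_of_card_lt_of_maps_to (s := S) (t := Finset.range 4)
        (by rw [Finset.card_range]; exact hcard _ (hcard4 _ _ _ _))
        (f := fun z => if c s(x,y) = c s(V0,z) then (0:ℕ) else if c s(y,V0) = c s(z,V1)
          then 1 else if c s(V0,z) = c s(V1,x) then 2 else 3)
        (fun a _ => by dsimp only; split_ifs <;> simp)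
    have hzmem := hz; have hz'mem := hz'
    rw [hS, Finset.mem_sdiff] at hzmem hz'mem
    simp only [Finset.mem_insert, Finset.mem_singleton] at hzmem hz'mem
    push_neg at hzmem hz'mem
    obtain ⟨-, hz0, hz1, -, -⟩ := hzmem
    obtain ⟨-, hz'0, hz'1, -, -⟩ := hz'mem
    have := slot_eq (fun z => c s(x,y) = c s(V0,z)) (fun z => c s(y,V0) = c s(z,V1))
      (fun z => c s(V0,z) = c s(V1,x)) (fun z => c s(z,V1) = c s(x,y)) z z' heq
      (hkey z hz) (hkey z' hz')
    rcases this with ⟨p, q⟩ | ⟨p, q⟩ | ⟨p, q⟩ | ⟨p, q⟩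
    · exact hnezz (hA z z' hz0 hz'0 (p.symm.trans q))
    · exact hnezz (hB z z' hz1 hz'1 (by rw [sw V1 z, sw V1 z']; exact (p.symm.trans q)))
    · exact hnezz (hA z z' hz0 hz'0 (p.trans q.symm))
    · exact hnezz (hB z z' hz1 hz'1 (by rw [sw V1 z, sw V1 z']; exact (p.trans q.symm)))
  -- Step 2: contradiction via the pair (x, x')
  have hglob : c s(V0, x') ≠ c s(x, V1) := by
    intro h
    have h2 : c s(V0, x') = c s(V0, y) := by
      rw [h, sw x V1, step1, sw y V0]
    exact hx'y (hA x' y hx'V0 hyV0 h2)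
  set S2 : Finset (Fin n) := Finset.univ \ {V0, V1, x, x'} with hS2
  have hkey2 : ∀ z ∈ S2, (c s(z,V0) = c s(x',x)) ∨ (c s(x',x) = c s(V1,z)) ∨
      (c s(x,V1) = c s(z,V0)) ∨ (c s(V1,z) = c s(V0,x')) := by
    intro z hz
    rw [hS2, Finset.mem_sdiff] at hz
    obtain ⟨-, hz⟩ := hz
    simp only [Finset.mem_insert, Finset.mem_singleton] at hz
    push_neg at hz
    obtain ⟨hz0, hz1, hzx, hzx'⟩ := hz
    have := kill hc hnr z V0 x' x V1 ((hadj0 z hz0).symm) (hadj0 x' hx'V0) hxx'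
      ((hadj1 x hxV1).symm) (hadj1 z hz1) hzx' hzx (Ne.symm hxV0) hV01 hx'V1
    rcases this with h | h | h | h | h
    · exact Or.inl h
    · exact absurd h hglob
    · exact Or.inr (Or.inl h)
    · exact Or.inr (Or.inr (Or.inl h))
    · exact Or.inr (Or.inr (Or.inr h))
  classical
  obtain ⟨z, hz, z', hz', hnezz, heq⟩ :=
    Finset.exists_ne_map_eq_of_card_lt_of_maps_to (s := S2) (t := Finset.range 4)
      (by rw [Finset.card_range]; exact hcard _ (hcard4 _ _ _ _))
      (f := fun z => if c s(z,V0) = c s(x',x) then (0:ℕ) else if c s(x',x) = c s(V1,z)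
        then 1 else if c s(x,V1) = c s(z,V0) then 2 else 3)
      (fun a _ => by dsimp only; split_ifs <;> simp)
  have hzmem := hz; have hz'mem := hz'
  rw [hS2, Finset.mem_sdiff] at hzmem hz'mem
  simp only [Finset.mem_insert, Finset.mem_singleton] at hzmem hz'mem
  push_neg at hzmem hz'mem
  obtain ⟨-, hz0, hz1, -, -⟩ := hzmem
  obtain ⟨-, hz'0, hz'1, -, -⟩ := hz'mem
  have := slot_eq (fun z => c s(z,V0) = c s(x',x)) (fun z => c s(x',x) = c s(V1,z))
    (fun z => c s(x,V1) = c s(z,V0)) (fun z => c s(V1,z) = c s(V0,x')) z z' heq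
    (hkey2 z hz) (hkey2 z' hz')
  rcases this with ⟨p, q⟩ | ⟨p, q⟩ | ⟨p, q⟩ | ⟨p, q⟩
  · exact hnezz (hA z z' hz0 hz'0 (by rw [sw V0 z, sw V0 z']; exact (p.trans q.symm)))
  · exact hnezz (hB z z' hz1 hz'1 (p.symm.trans q))
  · exact hnezz (hA z z' hz0 hz'0 (by rw [sw V0 z, sw V0 z']; exact (p.symm.trans q)))
  · exact hnezz (hB z z' hz1 hz'1 (p.trans q.symm))

lemma sat_main (n : ℕ) (hn : 9 ≤ n) :
    ∀ x y : Fin n, x ≠ y → ¬ (G n).Adj x y →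
      ∀ c, ProperEdgeColoring (G n ⊔ SimpleGraph.fromEdgeSet {s(x, y)}) c →
        HasRainbowCycle (G n ⊔ SimpleGraph.fromEdgeSet {s(x, y)}) c 5 := by
  intro x y hne hnadj c hc
  by_contra hnr
  rw [G_adj] at hnadj
  push_neg at hnadj
  obtain ⟨hx1, hy1, h3⟩ := hnadj hne
  have hx2 : 2 ≤ x.val := by omega
  have hy2 : 2 ≤ y.val := by omega
  have hnp : y.val ≠ pa x.val := h3 hx2
  have hvne : x.val ≠ y.val := fun h => hne (Fin.ext h)
  have hcase : pa x.val < n ∨ pa y.val < n := by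
    have hx : x.val < n := x.isLt
    have hy : y.val < n := y.isLt
    unfold pa
    split_ifs <;> omega
  rcases hcase with h | h
  · exact sat_aux n hn x y hne hx2 hy2 hnp h c hc hnr
  · have hswap : s(y, x) = s(x, y) := Sym2.eq_swap
    have hnp' : x.val ≠ pa y.val := by
      intro hh
      apply hnp
      have : pa (pa y.val) = y.val := pa_pa hy2
      rw [← hh] at this
      omega
    exact sat_aux n hn y x hne.symm hy2 hx2 hnp' h c (by rwa [hswap]) (by rwa [hswap])

instance (n : ℕ) : DecidableRel (G n).Adj := fun x y => decidable_of_iff _ (G_adj x y).symm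

def pfin {n : ℕ} (z : Fin n) : Fin n := if h : pa z.val < n then ⟨pa z.val, h⟩ else z

lemma count (n : ℕ) (hn : 9 ≤ n) : (G n).edgeSet.ncard ≤ 5 * n / 2 - 4 := by
  classical
  have hV0 : (0 : ℕ) < n := by omega
  have hV1 : (1 : ℕ) < n := by omega
  set V0 : Fin n := ⟨0, hV0⟩ with hV0def
  set V1 : Fin n := ⟨1, hV1⟩ with hV1def
  set F1 : Finset (Sym2 (Fin n)) :=
    (Finset.univ.erase V0).image (fun z => s(V0, z)) with hF1
  set F2 : Finset (Sym2 (Fin n)) :=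
    (Finset.univ.filter (fun z : Fin n => 2 ≤ z.val)).image (fun z => s(V1, z)) with hF2
  set D3 : Finset (Fin n) :=
    Finset.univ.filter (fun z : Fin n => 2 ≤ z.val ∧ z.val % 2 = 0 ∧ pa z.val < n) with hD3
  set F3 : Finset (Sym2 (Fin n)) := D3.image (fun z => s(z, pfin z)) with hF3
  have hsub : (G n).edgeFinset ⊆ F1 ∪ F2 ∪ F3 := by
    intro e he
    rw [SimpleGraph.mem_edgeFinset] at he
    revert he
    refine Sym2.ind ?_ e
    intro a b he
    rw [SimpleGraph.mem_edgeSet, G_adj] at he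
    obtain ⟨hne, h⟩ := he
    have hvne : a.val ≠ b.val := fun h => hne (Fin.ext h)
    have memF1 : ∀ u w : Fin n, u = V0 → w ≠ V0 → s(u, w) ∈ F1 ∪ F2 ∪ F3 := by
      intro u w hu hw
      rw [Finset.mem_union, Finset.mem_union]
      left; left
      rw [hF1, Finset.mem_image]
      exact ⟨w, Finset.mem_erase.2 ⟨hw, Finset.mem_univ _⟩, by rw [hu]⟩
    have memF2 : ∀ u w : Fin n, u = V1 → 2 ≤ w.val → s(u, w) ∈ F1 ∪ F2 ∪ F3 := by
      intro u w hu hw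
      rw [Finset.mem_union, Finset.mem_union]
      left; right
      rw [hF2, Finset.mem_image]
      exact ⟨w, Finset.mem_filter.2 ⟨Finset.mem_univ _, hw⟩, by rw [hu]⟩
    have hne0 : ∀ u : Fin n, u.val ≠ 0 → u ≠ V0 := fun u hu hh => hu (congrArg Fin.val hh)
    rcases h with h | h | ⟨h2, h3⟩
    · -- a.val ≤ 1
      rcases Nat.le_one_iff_eq_zero_or_eq_one.1 h with h0 | h1
      · exact memF1 a b (Fin.ext h0) (fun hh => hvne (by rw [hh]; exact h0.symm ▸ rfl))
      · by_cases hb0 : b.val = 0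
        · rw [Sym2.eq_swap]
          exact memF1 b a (Fin.ext (show b.val = V0.val from hb0)) (hne0 a (by omega))
        · exact memF2 a b (Fin.ext h1) (by omega)
    · -- b.val ≤ 1
      rcases Nat.le_one_iff_eq_zero_or_eq_one.1 h with h0 | h1
      · rw [Sym2.eq_swap]
        exact memF1 b a (Fin.ext h0) (fun hh => hvne (by rw [hh]; exact h0.symm ▸ rfl))
      · by_cases ha0 : a.val = 0
        · exact memF1 a b (Fin.ext (show a.val = V0.val from ha0)) (hne0 b (by omega))
        · rw [Sym2.eq_swap]
          exact memF2 b a (Fin.ext h1) (by omega)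
    · -- partner edge
      have hb2 : 2 ≤ b.val := by rw [h3]; exact pa_ge h2
      have hbparity : b.val = pa a.val := h3
      rw [Finset.mem_union]
      right
      rw [hF3, Finset.mem_image]
      by_cases hpar : a.val % 2 = 0
      · have hpan : pa a.val < n := hbparity ▸ b.isLt
        refine ⟨a, Finset.mem_filter.2 ⟨Finset.mem_univ _, h2, hpar, hpan⟩, ?_⟩
        have : pfin a = b := by
          unfold pfin
          rw [dif_pos hpan]
          exact Fin.ext (by simp [hbparity])
        rw [this]
      · have hbeven : b.val % 2 = 0 := by
          rw [hbparity]; unfold pa; split_ifs <;> omega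
        have hpab : pa b.val = a.val := by rw [hbparity, pa_pa h2]
        have hpbn : pa b.val < n := by rw [hpab]; exact a.isLt
        refine ⟨b, Finset.mem_filter.2 ⟨Finset.mem_univ _, hb2, hbeven, hpbn⟩, ?_⟩
        have : pfin b = a := by
          unfold pfin
          rw [dif_pos hpbn]
          exact Fin.ext (by simp [hpab])
        rw [this, Sym2.eq_swap]
  have hcard1 : F1.card ≤ n - 1 := by
    refine (Finset.card_image_le).trans ?_
    rw [Finset.card_erase_of_mem (Finset.mem_univ _)]
    simp
  have hcard2 : F2.card ≤ n - 2 := by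
    refine (Finset.card_image_le).trans ?_
    rw [← Finset.card_range (n - 2)]
    refine Finset.card_le_card_of_injOn (fun z : Fin n => z.val - 2) ?_ ?_
    · intro z hz
      rw [Finset.mem_coe, Finset.mem_filter] at hz
      rw [Finset.mem_coe, Finset.mem_range]
      have := z.isLt
      dsimp only
      omega
    · intro z hz w hw hzw
      rw [Finset.mem_coe, Finset.mem_filter] at hz hw
      dsimp only at hzw
      exact Fin.ext (by omega)
  have hcard3 : F3.card ≤ n / 2 - 1 := by
    refine (Finset.card_image_le).trans ?_
    rw [← Finset.card_range (n / 2 - 1)]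
    refine Finset.card_le_card_of_injOn (fun z : Fin n => z.val / 2 - 1) ?_ ?_
    · intro z hz
      rw [Finset.mem_coe, hD3, Finset.mem_filter] at hz
      obtain ⟨-, h2, hpar, hpan⟩ := hz
      rw [Finset.mem_coe, Finset.mem_range]
      have := z.isLt
      unfold pa at hpan
      rw [if_pos hpar] at hpan
      dsimp only
      omega
    · intro z hz w hw hzw
      rw [Finset.mem_coe, hD3, Finset.mem_filter] at hz hw
      obtain ⟨-, hz2, hzpar, -⟩ := hz
      obtain ⟨-, hw2, hwpar, -⟩ := hw
      dsimp only at hzw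
      exact Fin.ext (by omega)
  have htotal : (G n).edgeFinset.card ≤ (n - 1) + (n - 2) + (n / 2 - 1) := by
    calc (G n).edgeFinset.card ≤ (F1 ∪ F2 ∪ F3).card := Finset.card_le_card hsub
      _ ≤ (F1 ∪ F2).card + F3.card := Finset.card_union_le _ _
      _ ≤ F1.card + F2.card + F3.card := by
          have := Finset.card_union_le F1 F2
          omega
      _ ≤ (n - 1) + (n - 2) + (n / 2 - 1) := by omega
  have hfin : (G n).edgeSet.ncard = (G n).edgeFinset.card := by
    rw [← SimpleGraph.coe_edgeFinset, Set.ncard_coe_finset]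
  rw [hfin]
  omega

theorem main_thm (n : ℕ) (hn : 9 ≤ n) :
    ∃ Gr : SimpleGraph (Fin n), RainbowSat Gr 5 ∧ Gr.edgeSet.ncard ≤ 5 * n / 2 - 4 := by
  exact ⟨G n, ⟨⟨c0 n, c0_proper n, c0_norainbow n hn⟩, sat_main n hn⟩, count n hn⟩

end RC5

/-- For every `n ≥ 9` there exists an `n`-vertex rainbow `C₅`-saturated graph with
at most `⌊5n/2⌋ − 4` edges; consequently `sat*(n, C₅) ≤ ⌊5n/2⌋ − 4`. -/
theorem rainbow_sat_C5_upper (n : ℕ) (hn : 9 ≤ n) :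
    ∃ G : SimpleGraph (Fin n), RainbowSat G 5 ∧ G.edgeSet.ncard ≤ 5 * n / 2 - 4 := by
  exact RC5.main_thm n hn
end

section
/- If G is a rainbow C_4-saturated graph, then for any two distinct vertices u, v of G, the distance between u and v in G is at most 3 (in particular, G is connected). -/
/-- In a rainbow `C₄`-saturated graph, any two distinct vertices are at distance
at most 3 (in particular the graph is connected). -/
theorem rainbow_sat_C4_dist_le_three {V : Type*} [Fintype V]
    (G : SimpleGraph V) (hG : RainbowSat G 4) :
    ∀ u v : V, u ≠ v → G.Reachable u v ∧ G.dist u v ≤ 3 := by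
  classical
  intro u v huv
  by_cases hadj : G.Adj u v
  · refine ⟨⟨hadj.toWalk⟩, le_trans (SimpleGraph.dist_le hadj.toWalk) (by simp)⟩
  obtain ⟨⟨c, hc, hnc⟩, hsat⟩ := hG
  set e0 : Sym2 V := s(u, v) with he0
  set N : ℕ := (Finset.univ.sup c) + 1 with hN
  set c' : Sym2 V → ℕ := fun e => if e = e0 then N else c e with hcdef
  have hlt : ∀ e : Sym2 V, c e < N :=
    fun e => Nat.lt_succ_of_le (Finset.le_sup (Finset.mem_univ e))
  have he0G : e0 ∉ G.edgeSet := fun h => hadj (G.mem_edgeSet.mp h)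
  have hmem : ∀ e ∈ (G ⊔ SimpleGraph.fromEdgeSet {e0}).edgeSet,
      e = e0 ∨ e ∈ G.edgeSet := by
    intro e he
    rw [SimpleGraph.edgeSet_sup] at he
    rcases he with h | h
    · exact Or.inr h
    · rw [SimpleGraph.edgeSet_fromEdgeSet] at h
      exact Or.inl h.1
  have hc' : ProperEdgeColoring (G ⊔ SimpleGraph.fromEdgeSet {e0}) c' := by
    intro e₁ h₁ e₂ h₂ hne hsh
    rcases hmem e₁ h₁ with h₁e | h₁'
    · rcases hmem e₂ h₂ with h₂e | h₂'
      · exact absurd (h₁e.trans h₂e.symm) hne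
      · have he2 : e₂ ≠ e0 := fun h => he0G (h ▸ h₂')
        simp only [hcdef, if_pos h₁e, if_neg he2]
        exact (ne_of_lt (hlt e₂)).symm
    · rcases hmem e₂ h₂ with h₂e | h₂'
      · have he1 : e₁ ≠ e0 := fun h => he0G (h ▸ h₁')
        simp only [hcdef, if_neg he1, if_pos h₂e]
        exact ne_of_lt (hlt e₁)
      · have he1 : e₁ ≠ e0 := fun h => he0G (h ▸ h₁')
        have he2 : e₂ ≠ e0 := fun h => he0G (h ▸ h₂')
        simp only [hcdef, if_neg he1, if_neg he2]
        exact hc e₁ h₁' e₂ h₂' hne hsh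
  obtain ⟨f, hf, hadjf, hcol⟩ := hsat u v huv hadj c' hc'
  have hGadj : ∀ j : ZMod 4, s(f j, f (j + 1)) ≠ e0 → G.Adj (f j) (f (j + 1)) := by
    intro j hj
    rcases (SimpleGraph.sup_adj _ _ _ _).mp (hadjf j) with h | h
    · exact h
    · exact absurd (((SimpleGraph.fromEdgeSet_adj _).mp h).1) hj
  have hex : ∃ i : ZMod 4, s(f i, f (i + 1)) = e0 := by
    by_contra hno
    push_neg at hno
    apply hnc
    refine ⟨f, hf, fun i => hGadj i (hno i), ?_⟩
    intro i j hij
    apply hcol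
    have hi' : c' s(f i, f (i + 1)) = c s(f i, f (i + 1)) := by
      simp only [hcdef, if_neg (hno i)]
    have hj' : c' s(f j, f (j + 1)) = c s(f j, f (j + 1)) := by
      simp only [hcdef, if_neg (hno j)]
    simpa only [hi', hj'] using hij
  obtain ⟨i, hi⟩ := hex
  have key : ∀ k : ZMod 4, k ≠ 0 → i + k ≠ i := by
    intro k hk h
    exact hk (add_left_cancel (show i + k = i + 0 by rw [add_zero]; exact h))
  have hne_edge : ∀ j : ZMod 4, j ≠ i → s(f j, f (j + 1)) ≠ e0 := by
    intro j hj heq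
    rw [← hi, Sym2.eq_iff] at heq
    rcases heq with ⟨h1, _⟩ | ⟨h1, h2⟩
    · exact hj (hf h1)
    · have hji : j = i + 1 := hf h1
      have hji' : j + 1 = i := hf h2
      rw [hji, add_assoc] at hji'
      exact key (1 + 1) (by decide) hji'
  have h1 : G.Adj (f (i + 1)) (f (i + 1 + 1)) :=
    hGadj _ (hne_edge _ (key 1 (by decide)))
  have h2 : G.Adj (f (i + 1 + 1)) (f (i + 1 + 1 + 1)) :=
    hGadj _ (hne_edge _ (by rw [add_assoc]; exact key (1 + 1) (by decide)))
  have h3 : G.Adj (f (i + 1 + 1 + 1)) (f (i + 1 + 1 + 1 + 1)) :=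
    hGadj _ (hne_edge _ (by rw [add_assoc, add_assoc]; exact key (1 + (1 + 1)) (by decide)))
  have h4 : i + 1 + 1 + 1 + 1 = i := by
    have h40 : (1 : ZMod 4) + (1 + (1 + 1)) = 0 := by decide
    rw [add_assoc, add_assoc, add_assoc, h40, add_zero]
  rw [h4] at h3
  rw [he0, Sym2.eq_iff] at hi
  rcases hi with ⟨hu, hv⟩ | ⟨hv', hu'⟩
  · -- f i = u, f (i+1) = v : walk from v to u
    rw [hv] at h1
    rw [hu] at h3
    have hd : G.dist v u ≤ 3 := by
      simpa using SimpleGraph.dist_le (SimpleGraph.Walk.cons h1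
        (SimpleGraph.Walk.cons h2 (SimpleGraph.Walk.cons h3 SimpleGraph.Walk.nil)))
    have hr : G.Reachable v u := ⟨SimpleGraph.Walk.cons h1
      (SimpleGraph.Walk.cons h2 (SimpleGraph.Walk.cons h3 SimpleGraph.Walk.nil))⟩
    exact ⟨hr.symm, by rw [SimpleGraph.dist_comm]; exact hd⟩
  · -- f i = v, f (i+1) = u : walk from u to v
    rw [hu'] at h1
    rw [hv'] at h3
    have hd : G.dist u v ≤ 3 := by
      simpa using SimpleGraph.dist_le (SimpleGraph.Walk.cons h1
        (SimpleGraph.Walk.cons h2 (SimpleGraph.Walk.cons h3 SimpleGraph.Walk.nil)))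
    have hr : G.Reachable u v := ⟨SimpleGraph.Walk.cons h1
      (SimpleGraph.Walk.cons h2 (SimpleGraph.Walk.cons h3 SimpleGraph.Walk.nil))⟩
    exact ⟨hr, hd⟩
end

section
/- If G is a rainbow C_4-saturated graph, then for any two distinct vertices u, v of G, the number of common neighbors of u and v satisfies |N(u) ∩ N(v)| < 4. -/
lemma inj4 {α : Type*} (g : ZMod 4 → α) (h01 : g 0 ≠ g 1) (h02 : g 0 ≠ g 2)
    (h03 : g 0 ≠ g 3) (h12 : g 1 ≠ g 2) (h13 : g 1 ≠ g 3) (h23 : g 2 ≠ g 3) :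
    Function.Injective g := by
  intro a b hab
  have h4 : ∀ a : ZMod 4, a = 0 ∨ a = 1 ∨ a = 2 ∨ a = 3 := by decide
  rcases h4 a with rfl | rfl | rfl | rfl <;> rcases h4 b with rfl | rfl | rfl | rfl <;> simp_all

lemma colne {V : Type*} {G : SimpleGraph V} {c : Sym2 V → ℕ}
    (hc : ProperEdgeColoring G c) {a b d : V} (h1 : G.Adj a b) (h2 : G.Adj b d)
    (had : a ≠ d) : c s(a, b) ≠ c s(b, d) := by
  apply hc _ h1 _ h2
  · simp only [ne_eq, Sym2.eq_iff]
    rintro (⟨h, h'⟩ | ⟨h, h'⟩)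
    · exact had (h.trans h')
    · exact had h
  · exact ⟨b, by simp, by simp⟩

lemma key_disj {V : Type*} {G : SimpleGraph V} {c : Sym2 V → ℕ}
    (hc : ProperEdgeColoring G c) (hnr : ¬ HasRainbowCycle G c 4)
    {u v x y : V} (huv : u ≠ v) (hxy : x ≠ y)
    (hux : G.Adj u x) (hvx : G.Adj v x) (huy : G.Adj u y) (hvy : G.Adj v y) :
    c s(u, x) = c s(v, y) ∨ c s(u, y) = c s(v, x) := by
  by_contra h
  push_neg at h
  obtain ⟨h1, h2⟩ := h
  apply hnr
  refine ⟨![u, x, v, y], ?_, ?_, ?_⟩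
  · apply inj4 <;> simp [hxy, huv, hux.ne', hvx.ne', huy.ne', hvy.ne', hux.ne, huy.ne, hvy.ne, hvx.ne]
  · intro i
    fin_cases i
    · exact hux
    · exact hvx.symm
    · exact hvy
    · exact huy.symm
  · apply inj4
    · -- c s(u,x) ≠ c s(x,v)
      show c s(u, x) ≠ c s(x, v)
      exact colne hc hux hvx.symm huv
    · show c s(u, x) ≠ c s(v, y)
      exact h1
    · show c s(u, x) ≠ c s(y, u)
      rw [Sym2.eq_swap (a := u) (b := x), Sym2.eq_swap (a := y) (b := u)]
      exact colne hc hux.symm huy hxy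
    · show c s(x, v) ≠ c s(v, y)
      exact colne hc hvx.symm hvy hxy
    · show c s(x, v) ≠ c s(y, u)
      rw [Sym2.eq_swap (a := x) (b := v), Sym2.eq_swap (a := y) (b := u)]
      exact fun hh => h2 hh.symm
    · show c s(v, y) ≠ c s(y, u)
      exact colne hc hvy huy.symm huv.symm

lemma rainbow_sat_C4_aux {V : Type*} [Fintype V]
    (G : SimpleGraph V)
    (hG : ∃ c, ProperEdgeColoring G c ∧ ¬ HasRainbowCycle G c 4) :
    ∀ u v : V, u ≠ v → (G.neighborSet u ∩ G.neighborSet v).ncard < 4 := by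
  intro u v huv
  by_contra hcard
  push_neg at hcard
  obtain ⟨c, hc, hnr⟩ := hG
  set s := G.neighborSet u ∩ G.neighborSet v with hs
  have hfin : s.Finite := Set.toFinite s
  rw [Set.ncard_eq_toFinset_card s hfin] at hcard
  obtain ⟨t, hts, htc⟩ := Finset.exists_subset_card_eq hcard
  have e := t.equivFin
  set w : Fin 4 → V := fun i => (e.symm (Fin.cast htc.symm i) : V) with hw
  have winj : Function.Injective w := by
    intro i j hij
    have := e.symm.injective (Subtype.ext hij)
    exact Fin.cast_injective _ this
  have wmem : ∀ i, w i ∈ s := by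
    intro i
    have := (e.symm (Fin.cast htc.symm i)).2
    have h2 := hts this; rw [Set.Finite.mem_toFinset] at h2
    simpa using h2
  have hu : ∀ i, G.Adj u (w i) := fun i => (wmem i).1
  have hv : ∀ i, G.Adj v (w i) := fun i => (wmem i).2
  -- injectivity of colors at u and at v
  have ha : ∀ i j : Fin 4, i ≠ j → c s(u, w i) ≠ c s(u, w j) := by
    intro i j hij
    have : s(u, w i) ≠ s(u, w j) := by
      simp only [ne_eq, Sym2.eq_iff]
      push_neg
      constructor
      · intro _; exact fun h => hij (winj h)
      · intro h; exact fun h2 => (hu i).ne h2.symm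
    exact hc _ (hu i) _ (hu j) this ⟨u, by simp, by simp⟩
  have hb : ∀ i j : Fin 4, i ≠ j → c s(v, w i) ≠ c s(v, w j) := by
    intro i j hij
    have : s(v, w i) ≠ s(v, w j) := by
      simp only [ne_eq, Sym2.eq_iff]
      push_neg
      constructor
      · intro _; exact fun h => hij (winj h)
      · intro h; exact fun h2 => (hv i).ne h2.symm
    exact hc _ (hv i) _ (hv j) this ⟨v, by simp, by simp⟩
  have key : ∀ i j : Fin 4, w i ≠ w j →
      c s(u, w i) = c s(v, w j) ∨ c s(u, w j) = c s(v, w i) :=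
    fun i j hij => key_disj hc hnr huv hij (hu i) (hv i) (hu j) (hv j)
  have wne : ∀ i j : Fin 4, i ≠ j → w i ≠ w j := fun i j hij h => hij (winj h)
  have k01 := key 0 1 (wne 0 1 (by decide))
  have k02 := key 0 2 (wne 0 2 (by decide))
  have k03 := key 0 3 (wne 0 3 (by decide))
  have k12 := key 1 2 (wne 1 2 (by decide))
  have k13 := key 1 3 (wne 1 3 (by decide))
  have k23 := key 2 3 (wne 2 3 (by decide))
  have a01 := ha 0 1 (by decide); have a02 := ha 0 2 (by decide)
  have a03 := ha 0 3 (by decide); have a12 := ha 1 2 (by decide)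
  have a13 := ha 1 3 (by decide); have a23 := ha 2 3 (by decide)
  have b01 := hb 0 1 (by decide); have b02 := hb 0 2 (by decide)
  have b03 := hb 0 3 (by decide); have b12 := hb 1 2 (by decide)
  have b13 := hb 1 3 (by decide); have b23 := hb 2 3 (by decide)
  omega

/-- In a rainbow `C₄`-saturated graph, any two distinct vertices have fewer than
4 common neighbors. -/
theorem rainbow_sat_C4_common_nbrs_lt_four {V : Type*} [Fintype V]
    (G : SimpleGraph V) (hG : RainbowSat G 4) :
    ∀ u v : V, u ≠ v → (G.neighborSet u ∩ G.neighborSet v).ncard < 4 :=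
  rainbow_sat_C4_aux G hG.1
end

section
/- Let G be a graph that admits a proper edge-coloring under which G is rainbow C_4-free, and let v be a vertex of G. Then the neighborhood N(v) does not contain a triangle with pendant edges from two of its vertices; that is, there do not exist five distinct vertices v_1, v_2, v_3, v_4, v_5 ∈ N(v) such that v_1v_2, v_2v_3, v_1v_3, v_2v_4, v_3v_5 are all edges of G. -/
lemma adjColor_ne {V : Type*} {G : SimpleGraph V} {c : Sym2 V → ℕ}
    (hc : ProperEdgeColoring G c) {x y z : V} (hxy : G.Adj x y) (hyz : G.Adj y z)
    (hxz : x ≠ z) : c s(x, y) ≠ c s(y, z) := by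
  apply hc _ hxy _ hyz
  · intro h
    rcases Sym2.eq_iff.mp h with ⟨h1, h2⟩ | ⟨h1, h2⟩
    · exact hxy.ne h1
    · exact hxz h1
  · exact ⟨y, by simp, by simp⟩

lemma nonRainbowC4 {V : Type*} {G : SimpleGraph V} {c : Sym2 V → ℕ}
    (hc : ProperEdgeColoring G c) (hfree : ¬ HasRainbowCycle G c 4) {w0 w1 w2 w3 : V}
    (h01 : G.Adj w0 w1) (h12 : G.Adj w1 w2) (h23 : G.Adj w2 w3) (h30 : G.Adj w3 w0)
    (d02 : w0 ≠ w2) (d13 : w1 ≠ w3) :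
    c s(w0, w1) = c s(w2, w3) ∨ c s(w1, w2) = c s(w3, w0) := by
  by_contra hcon
  push_neg at hcon
  obtain ⟨hA, hB⟩ := hcon
  have n01 := h01.ne
  have n12 := h12.ne
  have n23 := h23.ne
  have n30 := h30.ne
  have c01 : c s(w0, w1) ≠ c s(w1, w2) := adjColor_ne hc h01 h12 d02
  have c12 : c s(w1, w2) ≠ c s(w2, w3) := adjColor_ne hc h12 h23 d13
  have c23 : c s(w2, w3) ≠ c s(w3, w0) := adjColor_ne hc h23 h30 d02.symm
  have c30 : c s(w3, w0) ≠ c s(w0, w1) := adjColor_ne hc h30 h01 d13.symm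
  apply hfree
  refine ⟨![w0, w1, w2, w3], ?_, ?_, ?_⟩
  · intro i j hij
    fin_cases i <;> fin_cases j <;> first | rfl | (exfalso; simp_all)
  · intro i
    fin_cases i <;> simpa using ‹_›
  · intro i j hij
    fin_cases i <;> fin_cases j <;> first | rfl | exfalso <;>
      first | exact hA hij | exact hA hij.symm | exact hB hij | exact hB hij.symm | exact c01 hij | exact c01 hij.symm | exact c12 hij | exact c12 hij.symm | exact c23 hij | exact c23 hij.symm | exact c30 hij | exact c30 hij.symm <;>
      simp_all [show (0+1 : ZMod 4) = 1 from by decide, show (1+1 : ZMod 4) = 2 from by decide,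
        show (2+1 : ZMod 4) = 3 from by decide, show (3+1 : ZMod 4) = 0 from by decide]

/-- If `G` admits a proper edge-coloring with no rainbow `C₄`-copy, then for any
vertex `v`, the neighborhood `N(v)` does not contain a triangle with pendant edges
from two of its vertices. -/
theorem no_triangle_with_two_pendants_in_nbhd {V : Type*} (G : SimpleGraph V)
    (c : Sym2 V → ℕ) (hc : ProperEdgeColoring G c) (hfree : ¬ HasRainbowCycle G c 4)
    (v : V) :
    ¬ ∃ v₁ v₂ v₃ v₄ v₅ : V,
        v₁ ≠ v₂ ∧ v₁ ≠ v₃ ∧ v₁ ≠ v₄ ∧ v₁ ≠ v₅ ∧ v₂ ≠ v₃ ∧ v₂ ≠ v₄ ∧ v₂ ≠ v₅ ∧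
        v₃ ≠ v₄ ∧ v₃ ≠ v₅ ∧ v₄ ≠ v₅ ∧
        G.Adj v v₁ ∧ G.Adj v v₂ ∧ G.Adj v v₃ ∧ G.Adj v v₄ ∧ G.Adj v v₅ ∧
        G.Adj v₁ v₂ ∧ G.Adj v₂ v₃ ∧ G.Adj v₁ v₃ ∧ G.Adj v₂ v₄ ∧ G.Adj v₃ v₅ := by
  rintro ⟨v₁, v₂, v₃, v₄, v₅, d12, d13, d14, d15, d23, d24, d25, d34, d35, d45,
    ha1, ha2, ha3, ha4, ha5, h12, h23, h13, h24, h35⟩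
  have comm : ∀ x y : V, c s(x, y) = c s(y, x) := fun x y => by rw [Sym2.eq_swap]
  -- color inequalities at v
  have ane : ∀ {x y : V}, G.Adj v x → G.Adj v y → x ≠ y → c s(v, x) ≠ c s(v, y) := by
    intro x y hx hy hxy
    have := adjColor_ne hc hx.symm hy hxy
    rwa [comm x v] at this
  have a13 := ane ha1 ha3 d13
  have a34 := ane ha3 ha4 d34
  have a25 := ane ha2 ha5 d25
  have a12 := ane ha1 ha2 d12
  have a45 := ane ha4 ha5 d45
  -- edge-color inequalities in the neighborhood
  have b2324 : c s(v₂, v₃) ≠ c s(v₂, v₄) := by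
    have := adjColor_ne hc h23.symm h24 d34
    rwa [comm v₃ v₂] at this
  have b2335 : c s(v₂, v₃) ≠ c s(v₃, v₅) := adjColor_ne hc h23 h35 d25
  -- the seven cycles
  have K1 := nonRainbowC4 hc hfree ha2 h12.symm h13 ha3.symm ha1.ne d23
  have K2 := nonRainbowC4 hc hfree ha1 h12 h23 ha3.symm ha2.ne d13
  have K3 := nonRainbowC4 hc hfree ha1 h12 h24 ha4.symm ha2.ne d14
  have K4 := nonRainbowC4 hc hfree ha3 h23.symm h24 ha4.symm ha2.ne d34
  have K5 := nonRainbowC4 hc hfree ha1 h13 h23.symm ha2.symm ha3.ne d12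
  have K6 := nonRainbowC4 hc hfree ha1 h13 h35 ha5.symm ha3.ne d15
  have K7 := nonRainbowC4 hc hfree ha2 h23 h35 ha5.symm ha3.ne d25
  rw [comm v₂ v₁, comm v₃ v] at K1
  rw [comm v₃ v] at K2
  rw [comm v₄ v] at K3
  rw [comm v₃ v₂, comm v₄ v] at K4
  rw [comm v₃ v₂, comm v₂ v] at K5
  rw [comm v₅ v] at K6
  rw [comm v₅ v] at K7
  -- K1 : c s(v,v₂) = c s(v₁,v₃) ∨ c s(v₁,v₂) = c s(v,v₃)
  -- K2 : c s(v,v₁) = c s(v₂,v₃) ∨ c s(v₁,v₂) = c s(v,v₃)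
  -- K3 : c s(v,v₁) = c s(v₂,v₄) ∨ c s(v₁,v₂) = c s(v,v₄)
  -- K4 : c s(v,v₃) = c s(v₂,v₄) ∨ c s(v₂,v₃) = c s(v,v₄)
  -- K5 : c s(v,v₁) = c s(v₂,v₃) ∨ c s(v₁,v₃) = c s(v,v₂)
  -- K6 : c s(v,v₁) = c s(v₃,v₅) ∨ c s(v₁,v₃) = c s(v,v₅)
  -- K7 : c s(v,v₂) = c s(v₃,v₅) ∨ c s(v₂,v₃) = c s(v,v₅)
  rcases K2 with h | h
  · -- case B : c s(v,v₁) = c s(v₂,v₃)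
    rcases K6 with h6 | h6
    · exact b2335 (h.symm.trans h6)
    · rcases K1 with h1 | h1
      · exact a25 (h1.trans h6)
      · rcases K3 with h3 | h3
        · exact b2324 (h.symm.trans h3)
        · exact a34 (h1.symm.trans h3)
  · -- case A : c s(v₁,v₂) = c s(v,v₃)
    rcases K3 with h3 | h3
    · rcases K4 with h4 | h4
      · exact a13 (h3.trans h4.symm)
      · rcases K5 with h5 | h5
        · exact b2324 (h5.symm.trans h3)
        · rcases K6 with h6 | h6
          · rcases K7 with h7 | h7
            · exact a12 (h6.trans h7.symm)
            · exact a45 (h4.symm.trans h7)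
          · exact a25 (h5.symm.trans h6)
    · exact a34 (h.symm.trans h3)
end

section
/- Let G be a graph that admits a proper edge-coloring under which G is rainbow C_4-free, and let v be a vertex of G. Then the neighborhood N(v) does not contain a 4-cycle; that is, there do not exist four distinct vertices v_1, v_2, v_3, v_4 ∈ N(v) such that v_1v_2, v_2v_3, v_3v_4, v_4v_1 are all edges of G. -/
lemma zmod4_cases (i : ZMod 4) : i = 0 ∨ i = 1 ∨ i = 2 ∨ i = 3 := by revert i; decide

lemma sym2_ne {V : Type*} {x y z w : V} (h : x ≠ z ∧ x ≠ w ∨ y ≠ z ∧ y ≠ w) :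
    s(x,y) ≠ s(z,w) := by
  rw [Ne, Sym2.eq_iff]; tauto

lemma rainbow4 {V : Type*} (G : SimpleGraph V) (c : Sym2 V → ℕ)
    (w₁ w₂ w₃ w₄ : V)
    (a12 : G.Adj w₁ w₂) (a23 : G.Adj w₂ w₃) (a34 : G.Adj w₃ w₄) (a41 : G.Adj w₄ w₁)
    (h13 : w₁ ≠ w₃) (h24 : w₂ ≠ w₄)
    (c1 : c s(w₁,w₂) ≠ c s(w₂,w₃)) (c2 : c s(w₁,w₂) ≠ c s(w₃,w₄))
    (c3 : c s(w₁,w₂) ≠ c s(w₄,w₁)) (c4 : c s(w₂,w₃) ≠ c s(w₃,w₄))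
    (c5 : c s(w₂,w₃) ≠ c s(w₄,w₁)) (c6 : c s(w₃,w₄) ≠ c s(w₄,w₁)) :
    HasRainbowCycle G c 4 := by
  have h12 := a12.ne
  have h23 := a23.ne
  have h34 := a34.ne
  have h14 := a41.ne.symm
  have e0 : (0:ZMod 4)+1 = 1 := by decide
  have e1 : (1:ZMod 4)+1 = 2 := by decide
  have e2 : (2:ZMod 4)+1 = 3 := by decide
  have e3 : (3:ZMod 4)+1 = 0 := by decide
  refine ⟨![w₁,w₂,w₃,w₄], ?_, ?_, ?_⟩
  · intro i j h
    rcases zmod4_cases i with rfl|rfl|rfl|rfl <;> rcases zmod4_cases j with rfl|rfl|rfl|rfl <;>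
      simp_all
  · intro i
    rcases zmod4_cases i with rfl|rfl|rfl|rfl <;> simp_all [e0,e1,e2,e3]
  · intro i j h
    rcases zmod4_cases i with rfl|rfl|rfl|rfl <;> rcases zmod4_cases j with rfl|rfl|rfl|rfl <;>
      simp_all [e0,e1,e2,e3, Sym2.eq_swap]

lemma hub_cycle {V : Type*} (G : SimpleGraph V) (c : Sym2 V → ℕ)
    (hc : ProperEdgeColoring G c) (hfree : ¬ HasRainbowCycle G c 4)
    (v x y z : V) (hxz : x ≠ z) (hvy : v ≠ y)
    (bx : G.Adj v x) (bz : G.Adj v z)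
    (exy : G.Adj x y) (eyz : G.Adj y z) :
    c s(v,x) = c s(y,z) ∨ c s(x,y) = c s(v,z) := by
  have P : ∀ {p q r s u : V}, G.Adj p q → G.Adj r s → s(p,q) ≠ s(r,s) →
      u ∈ s(p,q) → u ∈ s(r,s) → c s(p,q) ≠ c s(r,s) := by
    intro p q r s u hpq hrs hne hu1 hu2
    exact hc _ hpq _ hrs hne ⟨u, hu1, hu2⟩
  by_contra h
  push_neg at h
  refine hfree (rainbow4 G c v x y z bx exy eyz bz.symm hvy hxz ?_ h.1 ?_ ?_ ?_ ?_)
  · exact P bx exy (sym2_ne (Or.inl ⟨bx.ne, hvy⟩)) (Sym2.mem_mk_right v x) (Sym2.mem_mk_left x y)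
  · exact P bx bz.symm (sym2_ne (Or.inr ⟨hxz, bx.ne.symm⟩)) (Sym2.mem_mk_left v x)
      (Sym2.mem_mk_right z v)
  · exact P exy eyz (sym2_ne (Or.inl ⟨exy.ne, hxz⟩)) (Sym2.mem_mk_right x y)
      (Sym2.mem_mk_left y z)
  · rw [show s(z,v) = s(v,z) from Sym2.eq_swap]; exact h.2
  · exact P eyz bz.symm (sym2_ne (Or.inl ⟨eyz.ne, hvy.symm⟩)) (Sym2.mem_mk_right y z)
      (Sym2.mem_mk_left z v)

/-- If `G` admits a proper edge-coloring with no rainbow `C₄`-copy, then for any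
vertex `v`, the neighborhood `N(v)` does not contain a 4-cycle. -/
theorem no_C4_in_nbhd {V : Type*} (G : SimpleGraph V)
    (c : Sym2 V → ℕ) (hc : ProperEdgeColoring G c) (hfree : ¬ HasRainbowCycle G c 4)
    (v : V) :
    ¬ ∃ v₁ v₂ v₃ v₄ : V,
        v₁ ≠ v₂ ∧ v₁ ≠ v₃ ∧ v₁ ≠ v₄ ∧ v₂ ≠ v₃ ∧ v₂ ≠ v₄ ∧ v₃ ≠ v₄ ∧
        G.Adj v v₁ ∧ G.Adj v v₂ ∧ G.Adj v v₃ ∧ G.Adj v v₄ ∧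
        G.Adj v₁ v₂ ∧ G.Adj v₂ v₃ ∧ G.Adj v₃ v₄ ∧ G.Adj v₄ v₁ := by
  rintro ⟨v₁, v₂, v₃, v₄, h12, h13, h14, h23, h24, h34, b1, b2, b3, b4, e12, e23, e34, e41⟩
  have n1 := b1.ne
  have n2 := b2.ne
  have n3 := b3.ne
  have n4 := b4.ne
  have P : ∀ {p q r s u : V}, G.Adj p q → G.Adj r s → s(p,q) ≠ s(r,s) →
      u ∈ s(p,q) → u ∈ s(r,s) → c s(p,q) ≠ c s(r,s) := by
    intro p q r s u hpq hrs hne hu1 hu2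
    exact hc _ hpq _ hrs hne ⟨u, hu1, hu2⟩
  have ml : ∀ x y : V, x ∈ s(x,y) := fun x y => Sym2.mem_mk_left x y
  have mr : ∀ x y : V, y ∈ s(x,y) := fun x y => Sym2.mem_mk_right x y
  -- the plain 4-cycle v₁v₂v₃v₄
  have H0 : c s(v₁,v₂) = c s(v₃,v₄) ∨ c s(v₂,v₃) = c s(v₄,v₁) := by
    by_contra h
    push_neg at h
    exact hfree (rainbow4 G c v₁ v₂ v₃ v₄ e12 e23 e34 e41 h13 h24
      (P e12 e23 (sym2_ne (Or.inl ⟨h12, h13⟩)) (mr v₁ v₂) (ml v₂ v₃)) h.1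
      (P e12 e41 (sym2_ne (Or.inr ⟨h24, h12.symm⟩)) (ml v₁ v₂) (mr v₄ v₁))
      (P e23 e34 (sym2_ne (Or.inl ⟨h23, h24⟩)) (mr v₂ v₃) (ml v₃ v₄)) h.2
      (P e34 e41 (sym2_ne (Or.inl ⟨h34, h13.symm⟩)) (mr v₃ v₄) (ml v₄ v₁)))
  have H1 := hub_cycle G c hc hfree v v₁ v₂ v₃ h13 n2 b1 b3 e12 e23
  have H2 := hub_cycle G c hc hfree v v₂ v₃ v₄ h24 n3 b2 b4 e23 e34
  have H3 := hub_cycle G c hc hfree v v₃ v₄ v₁ h13.symm n4 b3 b1 e34 e41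
  have H4 := hub_cycle G c hc hfree v v₄ v₁ v₂ h24.symm n1 b4 b2 e41 e12
  -- properness inequalities
  have iab : c s(v,v₁) ≠ c s(v,v₂) := P b1 b2 (sym2_ne (Or.inr ⟨n1.symm, h12⟩)) (ml v v₁) (ml v v₂)
  have iad : c s(v,v₁) ≠ c s(v,v₃) := P b1 b3 (sym2_ne (Or.inr ⟨n1.symm, h13⟩)) (ml v v₁) (ml v v₃)
  have iae : c s(v,v₁) ≠ c s(v,v₄) := P b1 b4 (sym2_ne (Or.inr ⟨n1.symm, h14⟩)) (ml v v₁) (ml v v₄)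
  have ibd : c s(v,v₂) ≠ c s(v,v₃) := P b2 b3 (sym2_ne (Or.inr ⟨n2.symm, h23⟩)) (ml v v₂) (ml v v₃)
  have ibe : c s(v,v₂) ≠ c s(v,v₄) := P b2 b4 (sym2_ne (Or.inr ⟨n2.symm, h24⟩)) (ml v v₂) (ml v v₄)
  have ide : c s(v,v₃) ≠ c s(v,v₄) := P b3 b4 (sym2_ne (Or.inr ⟨n3.symm, h34⟩)) (ml v v₃) (ml v v₄)
  have ipa : c s(v₁,v₂) ≠ c s(v,v₁) := P e12 b1 (sym2_ne (Or.inr ⟨n2.symm, h12.symm⟩)) (ml v₁ v₂) (mr v v₁)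
  have ipb : c s(v₁,v₂) ≠ c s(v,v₂) := P e12 b2 (sym2_ne (Or.inl ⟨n1.symm, h12⟩)) (mr v₁ v₂) (mr v v₂)
  have iqb : c s(v₂,v₃) ≠ c s(v,v₂) := P e23 b2 (sym2_ne (Or.inr ⟨n3.symm, h23.symm⟩)) (ml v₂ v₃) (mr v v₂)
  have iqd : c s(v₂,v₃) ≠ c s(v,v₃) := P e23 b3 (sym2_ne (Or.inl ⟨n2.symm, h23⟩)) (mr v₂ v₃) (mr v v₃)
  have ird : c s(v₃,v₄) ≠ c s(v,v₃) := P e34 b3 (sym2_ne (Or.inr ⟨n4.symm, h34.symm⟩)) (ml v₃ v₄) (mr v v₃)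
  have ire : c s(v₃,v₄) ≠ c s(v,v₄) := P e34 b4 (sym2_ne (Or.inl ⟨n3.symm, h34⟩)) (mr v₃ v₄) (mr v v₄)
  have ise : c s(v₄,v₁) ≠ c s(v,v₄) := P e41 b4 (sym2_ne (Or.inr ⟨n1.symm, h14⟩)) (ml v₄ v₁) (mr v v₄)
  have isa : c s(v₄,v₁) ≠ c s(v,v₁) := P e41 b1 (sym2_ne (Or.inl ⟨n4.symm, h14.symm⟩)) (mr v₄ v₁) (mr v v₁)
  rcases H0 with h0|h0 <;> rcases H1 with h1|h1 <;> rcases H2 with h2|h2 <;>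
    rcases H3 with h3|h3 <;> rcases H4 with h4|h4 <;> omega
end

section
/- Let G be a graph that admits a proper edge-coloring under which G is rainbow C_4-free, let v be a vertex of G, and let k ≥ 5. Then the neighborhood N(v) does not contain a k-cycle with a pendant edge; that is, there do not exist k+1 distinct vertices v_1, ..., v_k, v_{k+1} ∈ N(v) such that v_1v_2, v_2v_3, ..., v_{k−1}v_k, v_kv_1 and v_kv_{k+1} are all edges of G. -/
lemma pec_ne {V : Type*} {G : SimpleGraph V} {c : Sym2 V → ℕ} (hc : ProperEdgeColoring G c)
    {x y z : V} (h1 : G.Adj x y) (h2 : G.Adj x z) (hyz : y ≠ z) :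
    c s(x, y) ≠ c s(x, z) := by
  apply hc _ ((SimpleGraph.mem_edgeSet G).mpr h1) _ ((SimpleGraph.mem_edgeSet G).mpr h2)
  · intro h
    rw [Sym2.eq_iff] at h
    rcases h with ⟨-, h⟩ | ⟨h1', h2'⟩
    · exact hyz h
    · exact h2.ne h1'
  · exact ⟨x, by simp, by simp⟩

lemma rainbow_c4 {V : Type*} {G : SimpleGraph V} {c : Sym2 V → ℕ}
    (hc : ProperEdgeColoring G c) (hfree : ¬ HasRainbowCycle G c 4)
    {x y z t : V} (hxy : G.Adj x y) (hyz : G.Adj y z) (hzt : G.Adj z t)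
    (htx : G.Adj t x) (hxz : x ≠ z) (hyt : y ≠ t) :
    c s(x, y) = c s(z, t) ∨ c s(y, z) = c s(t, x) := by
  by_contra hcon
  push_neg at hcon
  obtain ⟨h02, h13⟩ := hcon
  apply hfree
  set f : ZMod 4 → V := fun i => if i = 0 then x else if i = 1 then y else if i = 2 then z else t with hf
  have quad : ∀ i : ZMod 4, i = 0 ∨ i = 1 ∨ i = 2 ∨ i = 3 := by decide
  have n1 : (1 : ZMod 4) ≠ 0 := by decide
  have n2 : (2 : ZMod 4) ≠ 0 := by decide
  have n3 : (3 : ZMod 4) ≠ 0 := by decide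
  have n21 : (2 : ZMod 4) ≠ 1 := by decide
  have n31 : (3 : ZMod 4) ≠ 1 := by decide
  have n32 : (3 : ZMod 4) ≠ 2 := by decide
  have f0 : f 0 = x := by simp [hf]
  have f1 : f 1 = y := by simp [hf, n1]
  have f2 : f 2 = z := by simp [hf, n2, n21]
  have f3 : f 3 = t := by simp [hf, n3, n31, n32]
  have e01 : (0 : ZMod 4) + 1 = 1 := by decide
  have e12 : (1 : ZMod 4) + 1 = 2 := by decide
  have e23 : (2 : ZMod 4) + 1 = 3 := by decide
  have e30 : (3 : ZMod 4) + 1 = 0 := by decide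
  have d01 : c s(x, y) ≠ c s(y, z) := by
    rw [Sym2.eq_swap (a := x)]; exact pec_ne hc hxy.symm hyz hxz
  have d12 : c s(y, z) ≠ c s(z, t) := by
    rw [Sym2.eq_swap (a := y)]; exact pec_ne hc hyz.symm hzt hyt
  have d23 : c s(z, t) ≠ c s(t, x) := by
    rw [Sym2.eq_swap (a := z)]; exact pec_ne hc hzt.symm htx (Ne.symm hxz)
  have d30 : c s(t, x) ≠ c s(x, y) := by
    rw [Sym2.eq_swap (a := t)]; exact pec_ne hc htx.symm hxy (Ne.symm hyt)
  refine ⟨f, ?_, ?_, ?_⟩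
  · intro i j h
    rcases quad i with rfl | rfl | rfl | rfl <;> rcases quad j with rfl | rfl | rfl | rfl <;>
      simp only [f0, f1, f2, f3] at h <;>
      first
        | rfl
        | exact absurd h hxy.ne | exact absurd h hyz.ne | exact absurd h hzt.ne
        | exact absurd h htx.ne | exact absurd h hxz | exact absurd h hyt
        | exact absurd h.symm hxy.ne | exact absurd h.symm hyz.ne
        | exact absurd h.symm hzt.ne | exact absurd h.symm htx.ne
        | exact absurd h.symm hxz | exact absurd h.symm hyt
  · intro i
    rcases quad i with rfl | rfl | rfl | rfl
    · rw [e01, f0, f1]; exact hxy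
    · rw [e12, f1, f2]; exact hyz
    · rw [e23, f2, f3]; exact hzt
    · rw [e30, f3, f0]; exact htx
  · intro i j h
    simp only at h
    rcases quad i with rfl | rfl | rfl | rfl <;> rcases quad j with rfl | rfl | rfl | rfl <;>
      simp only [e01, e12, e23, e30, f0, f1, f2, f3] at h <;>
      first
        | rfl
        | exact absurd h d01 | exact absurd h d12 | exact absurd h d23
        | exact absurd h.symm d30 | exact absurd h h02 | exact absurd h h13
        | exact absurd h.symm d01 | exact absurd h.symm d12 | exact absurd h.symm d23
        | exact absurd h d30 | exact absurd h.symm h02 | exact absurd h.symm h13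

lemma zmod_key (k : ℕ) (hk : 5 ≤ k) (A B : ZMod k → ℕ) (q r : ℕ)
    (hA : ∀ i j : ZMod k, i ≠ j → A i ≠ A j)
    (hr : ∀ i, r ≠ A i)
    (step : ∀ i, A i = B (i + 1) ∨ B i = A (i + 2))
    (pend1 : r = B 0 ∨ q = A 1)
    (pend2 : A (-1) = q ∨ B (-1) = r) : False := by
  haveI : NeZero k := ⟨by omega⟩
  have hnz : ∀ m : ℕ, 0 < m → m < k → (m : ZMod k) ≠ 0 := by
    intro m h1 h2 h
    have := (ZMod.natCast_eq_zero_iff m k).mp h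
    have := Nat.le_of_dvd h1 this
    omega
  have h2 : (2 : ZMod k) ≠ 0 := by
    have := hnz 2 (by norm_num) (by omega); exact_mod_cast this
  have h3 : (3 : ZMod k) ≠ 0 := by
    have := hnz 3 (by norm_num) (by omega); exact_mod_cast this
  have hAeq : ∀ i j : ZMod k, A i = A j → i = j := by
    intro i j h
    by_contra hne
    exact hA i j hne h
  have hm1 : (-1 : ZMod k) ≠ 1 := by
    intro h; exact h2 (by linear_combination - h)
  rcases step 0 with h0 | h0
  · -- Case A : A i = B (i+1) for all i
    have P : ∀ n : ℕ, A (n : ZMod k) = B ((n : ZMod k) + 1) := by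
      intro n
      induction n with
      | zero => push_cast; exact h0
      | succ n ih =>
        push_cast
        rcases step ((n : ZMod k) + 1) with h | h
        · exact h
        · exfalso
          have : A (n : ZMod k) = A ((n : ZMod k) + 1 + 2) := by
            rw [ih]; exact h
          have := hAeq _ _ this
          exact h3 (by linear_combination - this)
    have hall : ∀ i : ZMod k, A i = B (i + 1) := by
      intro i
      obtain ⟨n, rfl⟩ := ZMod.natCast_zmod_surjective i
      exact P n
    have hq : q = A 1 := by
      rcases pend1 with h | h
      · exfalso
        have e : A (-1) = B 0 := by
          have := hall (-1)
          rwa [show (-1 : ZMod k) + 1 = 0 by ring] at this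
        exact hr (-1) (h.trans e.symm)
      · exact h
    rcases pend2 with h | h
    · exact hm1 (hAeq _ _ (h.trans hq))
    · have e : A (-2) = B (-1) := by
        have := hall (-2)
        rwa [show (-2 : ZMod k) + 1 = -1 by ring] at this
      exact hr (-2) ((e.trans h).symm)
  · -- Case B : B i = A (i+2) for all i
    have P : ∀ n : ℕ, B (-(n : ZMod k)) = A (-(n : ZMod k) + 2) := by
      intro n
      induction n with
      | zero => push_cast; rw [neg_zero, zero_add]; rwa [zero_add] at h0
      | succ n ih =>
        push_cast
        rcases step (-((n : ZMod k) + 1)) with h | h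
        · exfalso
          have e1 : (-((n : ZMod k) + 1)) + 1 = -(n : ZMod k) := by ring
          rw [e1] at h
          have : A (-((n : ZMod k) + 1)) = A (-(n : ZMod k) + 2) := h.trans ih
          have := hAeq _ _ this
          exact h3 (by linear_combination - this)
        · exact h
    have hall : ∀ i : ZMod k, B i = A (i + 2) := by
      intro i
      obtain ⟨n, hn⟩ := ZMod.natCast_zmod_surjective (-i)
      have hi : -((n : ℕ) : ZMod k) = i := by rw [hn, neg_neg]
      rw [← hi]
      exact P n
    have hq : q = A 1 := by
      rcases pend1 with h | h
      · exfalso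
        have e : B 0 = A 2 := by
          have := hall 0
          rwa [zero_add] at this
        exact hr 2 (h.trans e)
      · exact h
    rcases pend2 with h | h
    · exact hm1 (hAeq _ _ (h.trans hq))
    · have e : B (-1) = A 1 := by
        have := hall (-1)
        rwa [show (-1 : ZMod k) + 2 = 1 by ring] at this
      exact hr 1 ((e.symm.trans h).symm)

/-- If `G` admits a proper edge-coloring with no rainbow `C₄`-copy, then for any
vertex `v` and any `k ≥ 5`, the neighborhood `N(v)` does not contain a `k`-cycle
with a pendant edge. The cycle is given by an injective `w : ZMod k → V` and the
pendant vertex `p` is attached to the cycle vertex `w 0`. -/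
theorem no_cycle_with_pendant_in_nbhd {V : Type*} (G : SimpleGraph V)
    (c : Sym2 V → ℕ) (hc : ProperEdgeColoring G c) (hfree : ¬ HasRainbowCycle G c 4)
    (v : V) (k : ℕ) (hk : 5 ≤ k) :
    ¬ ∃ (w : ZMod k → V) (p : V),
        Function.Injective w ∧ (∀ i, p ≠ w i) ∧
        (∀ i, G.Adj v (w i)) ∧ G.Adj v p ∧
        (∀ i, G.Adj (w i) (w (i + 1))) ∧ G.Adj (w 0) p := by
  rintro ⟨w, p, hinj, hp, hvw, hvp, hcyc, hw0p⟩
  haveI : NeZero k := ⟨by omega⟩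
  have h2 : (2 : ZMod k) ≠ 0 := by
    intro h
    have h' : ((2 : ℕ) : ZMod k) = 0 := by exact_mod_cast h
    have := Nat.le_of_dvd (by norm_num) ((ZMod.natCast_eq_zero_iff 2 k).mp h')
    omega
  refine zmod_key k hk (fun i => c s(v, w i)) (fun i => c s(w i, w (i + 1)))
    (c s(w 0, p)) (c s(v, p)) ?_ ?_ ?_ ?_ ?_
  · intro i j hij
    exact pec_ne hc (hvw i) (hvw j) (fun h => hij (hinj h))
  · intro i
    exact pec_ne hc hvp (hvw i) (hp i)
  · intro i
    show c s(v, w i) = c s(w (i + 1), w (i + 1 + 1)) ∨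
      c s(w i, w (i + 1)) = c s(v, w (i + 2))
    rw [show i + 1 + 1 = i + 2 from by ring]
    have hzt : G.Adj (w (i + 1)) (w (i + 2)) := by
      have := hcyc (i + 1)
      rwa [show i + 1 + 1 = i + 2 from by ring] at this
    have hyt : w i ≠ w (i + 2) := by
      intro h
      have h' := hinj h
      exact h2 (by linear_combination - h')
    rcases rainbow_c4 hc hfree (hvw i) (hcyc i) hzt (hvw (i + 2)).symm
        (hvw (i + 1)).ne hyt with h | h
    · exact Or.inl h
    · right
      rwa [Sym2.eq_swap (a := w (i + 2)) (b := v)] at h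
  · show c s(v, p) = c s(w 0, w (0 + 1)) ∨ c s(w 0, p) = c s(v, w 1)
    rw [zero_add]
    have hzt : G.Adj (w 0) (w 1) := by
      have := hcyc 0; rwa [zero_add] at this
    rcases rainbow_c4 hc hfree hvp hw0p.symm hzt (hvw 1).symm (hvw 0).ne (hp 1)
      with h | h
    · exact Or.inl h
    · right
      rwa [Sym2.eq_swap (a := p) (b := w 0), Sym2.eq_swap (a := w 1) (b := v)] at h
  · show c s(v, w (-1)) = c s(w 0, p) ∨ c s(w (-1), w (-1 + 1)) = c s(v, p)
    rw [show (-1 : ZMod k) + 1 = 0 from by ring]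
    have hyz : G.Adj (w (-1)) (w 0) := by
      have := hcyc (-1)
      rwa [show (-1 : ZMod k) + 1 = 0 from by ring] at this
    rcases rainbow_c4 hc hfree (hvw (-1)) hyz hw0p hvp.symm (hvw 0).ne (hp (-1)).symm
      with h | h
    · exact Or.inl h
    · right
      rwa [Sym2.eq_swap (a := p) (b := v)] at h
end

section
/- Let G be a graph that admits a proper edge-coloring under which G is rainbow C_4-free, and let v be a vertex of G. Then the neighborhood N(v) does not contain the double star D_{2,2} or any subdivision thereof; that is, for every k ≥ 2 there do not exist k+4 distinct vertices v_1, ..., v_k, v_{k+1}, v_{k+2}, v_{k+3}, v_{k+4} ∈ N(v) such that v_1v_2, v_2v_3, ..., v_{k−1}v_k (a path from v_1 to v_k) and v_1v_{k+1}, v_1v_{k+2}, v_kv_{k+3}, v_kv_{k+4} are all edges of G. -/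
lemma vcol {V : Type*} {G : SimpleGraph V} {c : Sym2 V → ℕ}
    (hc : ProperEdgeColoring G c) {v p q : V} (hp : G.Adj v p) (hq : G.Adj v q)
    (h : c s(v, p) = c s(v, q)) : p = q := by
  by_contra hne
  exact hc _ hp _ hq (by simp [Sym2.eq_iff, hne, hq.ne]) ⟨v, by simp⟩ h

lemma key {V : Type*} {G : SimpleGraph V} {c : Sym2 V → ℕ}
    (hc : ProperEdgeColoring G c) (hfree : ¬ HasRainbowCycle G c 4)
    {v x z y : V} (hx : G.Adj v x) (hy : G.Adj v y) (hxz : G.Adj x z)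
    (hyz : G.Adj y z) (hxy : x ≠ y) (hvz : v ≠ z) :
    c s(z, y) = c s(v, x) ∨ c s(z, x) = c s(v, y) := by
  by_contra hcon
  push_neg at hcon
  obtain ⟨h1, h2⟩ := hcon
  apply hfree
  refine ⟨fun i => if i = 0 then v else if i = 1 then x else if i = 2 then z else y, ?_, ?_, ?_⟩
  · have hvx := hx.ne
    have hvy := hy.ne
    have hxz' := hxz.ne
    have hyz' := hyz.ne
    intro i j hij
    fin_cases i <;> fin_cases j <;>
      first
        | rfl
        | exact absurd hij hvx | exact absurd hij hvy | exact absurd hij hvz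
        | exact absurd hij hxz' | exact absurd hij hxy | exact absurd hij hyz'
        | exact absurd hij.symm hvx | exact absurd hij.symm hvy | exact absurd hij.symm hvz
        | exact absurd hij.symm hxz' | exact absurd hij.symm hxy | exact absurd hij.symm hyz'
  · intro i
    fin_cases i
    · exact hx
    · exact hxz
    · exact hyz.symm
    · exact hy.symm
  · have g01 : c s(v, x) ≠ c s(x, z) :=
      hc _ hx _ hxz (by simp [Sym2.eq_iff, hx.ne, hvz]) ⟨x, by simp⟩
    have g03 : c s(v, x) ≠ c s(y, v) :=
      hc _ hx _ hy.symm (by simp [Sym2.eq_iff, hxy, hx.ne.symm]) ⟨v, by simp⟩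
    have g12 : c s(x, z) ≠ c s(z, y) :=
      hc _ hxz _ hyz.symm (by simp [Sym2.eq_iff, hxz.ne, hxy]) ⟨z, by simp⟩
    have g23 : c s(z, y) ≠ c s(y, v) :=
      hc _ hyz.symm _ hy.symm (by simp [Sym2.eq_iff, hyz.ne.symm, hvz.symm]) ⟨y, by simp⟩
    have g02 : c s(v, x) ≠ c s(z, y) := fun h => h1 h.symm
    have g13 : c s(x, z) ≠ c s(y, v) := by
      rw [Sym2.eq_swap, show s(y,v) = s(v,y) from Sym2.eq_swap]
      exact h2
    intro i j hij
    simp only at hij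
    fin_cases i <;> fin_cases j <;>
      first
        | rfl
        | exact absurd hij g01 | exact absurd hij g02 | exact absurd hij g03
        | exact absurd hij g12 | exact absurd hij g13 | exact absurd hij g23
        | exact absurd hij.symm g01 | exact absurd hij.symm g02 | exact absurd hij.symm g03
        | exact absurd hij.symm g12 | exact absurd hij.symm g13 | exact absurd hij.symm g23

set_option maxHeartbeats 1000000 in
lemma main_aux {V : Type*} {G : SimpleGraph V} {c : Sym2 V → ℕ}
    (hc : ProperEdgeColoring G c) (hfree : ¬ HasRainbowCycle G c 4) (v : V)
    (k : ℕ) (hk : 2 ≤ k) (w : Fin k → V) (a₁ a₂ b₁ b₂ : V)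
    (hwinj : Function.Injective w)
    (ha1b1 : a₁ ≠ b₁) (ha1b2 : a₁ ≠ b₂) (hb12 : b₁ ≠ b₂)
    (ha1w : ∀ i, a₁ ≠ w i) (ha2w : ∀ i, a₂ ≠ w i)
    (hb1w : ∀ i, b₁ ≠ w i) (hb2w : ∀ i, b₂ ≠ w i)
    (hvw : ∀ i, G.Adj v (w i))
    (hva1 : G.Adj v a₁) (hva2 : G.Adj v a₂) (hvb1 : G.Adj v b₁) (hvb2 : G.Adj v b₂)
    (hpath : ∀ (i : ℕ) (h : i + 1 < k), G.Adj (w ⟨i, Nat.lt_of_succ_lt h⟩) (w ⟨i + 1, h⟩))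
    (hwa1 : G.Adj (w ⟨0, Nat.lt_of_lt_of_le Nat.zero_lt_two hk⟩) a₁)
    (hwb1 : G.Adj (w ⟨k - 1, Nat.sub_lt (Nat.lt_of_lt_of_le Nat.zero_lt_two hk) Nat.one_pos⟩) b₁)
    (hwb2 : G.Adj (w ⟨k - 1, Nat.sub_lt (Nat.lt_of_lt_of_le Nat.zero_lt_two hk) Nat.one_pos⟩) b₂)
    (hbase : c s(w ⟨0, Nat.lt_of_lt_of_le Nat.zero_lt_two hk⟩, a₁) = c s(v, a₂)) : False := by
  set P : ℕ → V := fun i => if h : 1 ≤ i ∧ i - 1 < k then w ⟨i - 1, h.2⟩ else a₁ with hP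
  have hvP : ∀ i, G.Adj v (P i) := by
    intro i
    by_cases h : 1 ≤ i ∧ i - 1 < k <;> simp [hP, h, hvw, hva1]
  have hPw : ∀ i j (hj : j < k), i + 1 ≤ j → P i ≠ w ⟨j, hj⟩ := by
    intro i j hj hij
    by_cases h : 1 ≤ i ∧ i - 1 < k
    · simp only [hP, dif_pos h]
      intro hEq
      have := hwinj hEq
      simp only [Fin.mk.injEq] at this
      omega
    · simp only [hP, dif_neg h]
      exact ha1w _
  have Q : ∀ i (h : i + 1 < k),
      c s(w ⟨i, by omega⟩, w ⟨i + 1, h⟩) = c s(v, P i) := by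
    intro i
    induction i with
    | zero =>
      intro h
      have hk1 : P 0 = a₁ := by simp [hP]
      rw [hk1]
      rcases key hc hfree hva1 (hvw ⟨1, by omega⟩) hwa1.symm
          ((hpath 0 h).symm) (ha1w _) (hvw _).ne with h' | h'
      · exact h'
      · exfalso
        have : a₂ = w ⟨1, by omega⟩ := vcol hc hva2 (hvw _) (hbase ▸ h')
        exact ha2w _ this
    | succ i ih =>
      intro h
      have hii : i + 1 < k := by omega
      have hQ : c s(w ⟨i, by omega⟩, w ⟨i + 1, by omega⟩) = c s(v, P i) := ih hii
      have hPi1 : P (i + 1) = w ⟨i, by omega⟩ := by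
        simp only [hP]
        rw [dif_pos ⟨by omega, by omega⟩]
        exact congrArg w (Fin.ext (by simp))
      rw [hPi1]
      have hne : w ⟨i, by omega⟩ ≠ w ⟨i + 2, by omega⟩ := by
        intro hEq
        have := hwinj hEq
        simp only [Fin.mk.injEq] at this
        omega
      rcases key hc hfree (hvw ⟨i, by omega⟩) (hvw ⟨i + 2, by omega⟩)
          (hpath i hii) ((hpath (i + 1) h).symm) hne (hvw _).ne with h' | h'
      · exact h'
      · exfalso
        rw [Sym2.eq_swap, hQ] at h'
        have : P i = w ⟨i + 2, by omega⟩ := vcol hc (hvP i) (hvw _) h'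
        exact hPw i (i + 2) (by omega) (by omega) this
  -- final step
  have hQf : c s(w ⟨k - 2, by omega⟩, w ⟨k - 1, by omega⟩) = c s(v, P (k - 2)) := by
    have := Q (k - 2) (by omega)
    have hidx : (⟨k - 2 + 1, by omega⟩ : Fin k) = ⟨k - 1, by omega⟩ := by
      simp only [Fin.mk.injEq]; omega
    rwa [hidx] at this
  have hPne : ∀ b : V, a₁ ≠ b → (∀ i, b ≠ w i) → P (k - 2) ≠ b := by
    intro b hab hbw
    by_cases h : 1 ≤ k - 2 ∧ k - 2 - 1 < k
    · simp only [hP, dif_pos h]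
      exact fun hEq => hbw _ hEq.symm
    · simp only [hP, dif_neg h]
      exact hab
  have hpe : G.Adj (w ⟨k - 2, by omega⟩) (w ⟨k - 1, by omega⟩) := by
    have := hpath (k - 2) (by omega)
    have hidx : (⟨k - 2 + 1, by omega⟩ : Fin k) = ⟨k - 1, by omega⟩ := by
      simp only [Fin.mk.injEq]; omega
    rwa [hidx] at this
  have getb : ∀ b : V, a₁ ≠ b → (∀ i, b ≠ w i) → G.Adj v b →
      G.Adj (w ⟨k - 1, by omega⟩) b →
      c s(w ⟨k - 1, by omega⟩, b) = c s(v, w ⟨k - 2, by omega⟩) := by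
    intro b hab hbw hvb hwb
    have hne : w ⟨k - 2, by omega⟩ ≠ b := fun h => hbw _ h.symm
    rcases key hc hfree (hvw ⟨k - 2, by omega⟩) hvb hpe hwb.symm hne (hvw _).ne with h' | h'
    · exact h'
    · exfalso
      rw [Sym2.eq_swap, hQf] at h'
      exact hPne b hab hbw (vcol hc (hvP _) hvb h')
  have c1 := getb b₁ ha1b1 hb1w hvb1 hwb1
  have c2 := getb b₂ ha1b2 hb2w hvb2 hwb2
  refine hc _ hwb1 _ hwb2 ?_ ⟨w ⟨k - 1, by omega⟩, by simp⟩ (c1.trans c2.symm)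
  simp [Sym2.eq_iff, hb12, (hb2w ⟨k - 1, by omega⟩).symm]

/-- If `G` admits a proper edge-coloring with no rainbow `C₄`-copy, then for any
vertex `v`, the neighborhood `N(v)` does not contain the double star `D_{2,2}`
or any subdivision thereof: for every `k ≥ 2` there is no path `w 0, …, w (k-1)`
in `N(v)` together with two further leaves at each endpoint, all `k + 4`
vertices being distinct and lying in `N(v)`. -/
theorem no_double_star_subdivision_in_nbhd {V : Type*} (G : SimpleGraph V)
    (c : Sym2 V → ℕ) (hc : ProperEdgeColoring G c) (hfree : ¬ HasRainbowCycle G c 4)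
    (v : V) :
    ∀ (k : ℕ) (hk : 2 ≤ k),
      ¬ ∃ (w : Fin k → V) (a₁ a₂ b₁ b₂ : V),
          Function.Injective w ∧
          a₁ ≠ a₂ ∧ a₁ ≠ b₁ ∧ a₁ ≠ b₂ ∧ a₂ ≠ b₁ ∧ a₂ ≠ b₂ ∧ b₁ ≠ b₂ ∧
          (∀ i, a₁ ≠ w i) ∧ (∀ i, a₂ ≠ w i) ∧ (∀ i, b₁ ≠ w i) ∧ (∀ i, b₂ ≠ w i) ∧
          (∀ i, G.Adj v (w i)) ∧ G.Adj v a₁ ∧ G.Adj v a₂ ∧ G.Adj v b₁ ∧ G.Adj v b₂ ∧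
          (∀ (i : ℕ) (h : i + 1 < k), G.Adj (w ⟨i, by omega⟩) (w ⟨i + 1, h⟩)) ∧
          G.Adj (w ⟨0, by omega⟩) a₁ ∧ G.Adj (w ⟨0, by omega⟩) a₂ ∧
          G.Adj (w ⟨k - 1, by omega⟩) b₁ ∧ G.Adj (w ⟨k - 1, by omega⟩) b₂ := by
  intro k hk
  rintro ⟨w, a₁, a₂, b₁, b₂, hwinj, h12, ha1b1, ha1b2, ha2b1, ha2b2, hb12,
    ha1w, ha2w, hb1w, hb2w, hvw, hva1, hva2, hvb1, hvb2, hpath, hwa1, hwa2, hwb1, hwb2⟩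
  rcases key hc hfree hva1 hva2 hwa1.symm hwa2.symm h12 (hvw _).ne with h' | h'
  · exact main_aux hc hfree v k hk w a₂ a₁ b₁ b₂ hwinj ha2b1 ha2b2 hb12
      ha2w ha1w hb1w hb2w hvw hva2 hva1 hvb1 hvb2 hpath hwa2 hwb1 hwb2 h'
  · exact main_aux hc hfree v k hk w a₁ a₂ b₁ b₂ hwinj ha1b1 ha1b2 hb12
      ha1w ha2w hb1w hb2w hvw hva1 hva2 hvb1 hvb2 hpath hwa1 hwb1 hwb2 h'
end

section
/- Fix a real number α with 0 < α < 1/9. There exists n_0 ∈ ℕ such that for any rainbow C_4-saturated graph G on n ≥ n_0 vertices, G contains a dominating set D such that either |D| ≤ α·n, or the induced subgraph G[D] has average degree at least 4 (i.e., 2·|E(G[D])| ≥ 4·|D|). -/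
lemma exists_P3 {n : ℕ} {G : SimpleGraph (Fin n)} (h : RainbowSat G 4)
    {x y : Fin n} (hxy : x ≠ y) (hna : ¬ G.Adj x y) :
    ∃ p q, G.Adj x p ∧ G.Adj p q ∧ G.Adj q y := by
  classical
  obtain ⟨⟨c, hc, hnc⟩, hsat⟩ := h
  set G' := G ⊔ SimpleGraph.fromEdgeSet {s(x, y)} with hG'
  set N : ℕ := (Finset.univ : Finset (Sym2 (Fin n))).sup c + 1 with hN
  have hcle : ∀ e : Sym2 (Fin n), c e < N := by
    intro e
    exact Nat.lt_succ_of_le (Finset.le_sup (Finset.mem_univ e))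
  set c' : Sym2 (Fin n) → ℕ := fun e => if e = s(x, y) then N else c e with hc'
  have hmemG' : ∀ e ∈ G'.edgeSet, e = s(x, y) ∨ e ∈ G.edgeSet := by
    intro e he
    rw [hG', SimpleGraph.edgeSet_sup] at he
    rcases he with he | he
    · exact Or.inr he
    · rw [SimpleGraph.edgeSet_fromEdgeSet] at he
      exact Or.inl he.1
  have hproper : ProperEdgeColoring G' c' := by
    intro e₁ he₁ e₂ he₂ hne hv
    rcases hmemG' e₁ he₁ with h1 | h1 <;> rcases hmemG' e₂ he₂ with h2 | h2
    · exact absurd (h1.trans h2.symm) hne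
    · simp only [hc', if_pos h1, if_neg (fun h : e₂ = s(x,y) => hne (h1.trans h.symm))]
      exact (hcle e₂).ne'
    · simp only [hc', if_pos h2, if_neg (fun h : e₁ = s(x,y) => hne (h.trans h2.symm))]
      exact (hcle e₁).ne
    · have hne1 : e₁ ≠ s(x, y) := by
        intro he; rw [he] at h1
        rw [SimpleGraph.mem_edgeSet] at h1; exact hna h1
      have hne2 : e₂ ≠ s(x, y) := by
        intro he; rw [he] at h2
        rw [SimpleGraph.mem_edgeSet] at h2; exact hna h2
      simp only [hc', if_neg hne1, if_neg hne2]
      exact hc e₁ h1 e₂ h2 hne hv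
  have hrb : HasRainbowCycle G' c' 4 := hsat x y hxy hna c' hproper
  obtain ⟨f, hfinj, hfadj, hcinj⟩ := hrb
  have hadj' : ∀ i : ZMod 4, s(f i, f (i+1)) ≠ s(x, y) → G.Adj (f i) (f (i+1)) := by
    intro i hi
    have := hfadj i
    rw [hG', SimpleGraph.sup_adj, SimpleGraph.fromEdgeSet_adj] at this
    rcases this with h | h
    · exact h
    · exact absurd h.1 (by simpa using hi)
  by_cases hex : ∃ i : ZMod 4, s(f i, f (i+1)) = s(x, y)
  · obtain ⟨i₀, hi₀⟩ := hex
    have hoth : ∀ k : ZMod 4, k ≠ 0 → s(f (i₀+k), f (i₀+k+1)) ≠ s(x, y) := by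
      intro k hk he
      have : c' s(f (i₀+k), f (i₀+k+1)) = c' s(f i₀, f (i₀+1)) := by rw [he, hi₀]
      have := hcinj this
      exact hk (by
        have := congrArg (fun z => z - i₀) this
        simpa using this)
    have h1 := hadj' (i₀+1) (by simpa [add_assoc] using hoth 1 (by decide))
    have h2 := hadj' (i₀+2) (by simpa [add_assoc] using hoth 2 (by decide))
    have h3 : G.Adj (f (i₀+3)) (f i₀) := by
      have h4 : i₀ + 3 + 1 = i₀ := by
        have : (3 : ZMod 4) + 1 = 0 := by decide
        rw [add_assoc, this, add_zero]
      have := hadj' (i₀+3) (by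
        rw [h4]
        intro he
        have : c' s(f (i₀+3), f (i₀+3+1)) = c' s(f i₀, f (i₀+1)) := by rw [h4, he, hi₀]
        have := hcinj this
        have h30 : (3:ZMod 4) ≠ 0 := by decide
        exact h30 (by
          have := congrArg (fun z => z - i₀) this
          simpa using this))
      rwa [h4] at this
    have h1' : G.Adj (f (i₀+1)) (f (i₀+2)) := by
      rw [show i₀+2 = i₀+1+1 by ring]; exact h1
    have h2' : G.Adj (f (i₀+2)) (f (i₀+3)) := by
      rw [show i₀+3 = i₀+2+1 by ring]; exact h2
    rcases Sym2.eq_iff.mp hi₀ with ⟨hx, hy⟩ | ⟨hy, hx⟩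
    · refine ⟨f (i₀+3), f (i₀+2), ?_, ?_, ?_⟩
      · rw [← hx]; exact h3.symm
      · exact h2'.symm
      · rw [← hy]; exact h1'.symm
    · refine ⟨f (i₀+2), f (i₀+3), ?_, ?_, ?_⟩
      · rw [← hx]; exact h1'
      · exact h2'
      · rw [← hy]; exact h3
  · push_neg at hex
    exfalso
    apply hnc
    refine ⟨f, hfinj, fun i => hadj' i (hex i), ?_⟩
    have : (fun i : ZMod 4 => c s(f i, f (i+1))) = (fun i : ZMod 4 => c' s(f i, f (i+1))) := by
      funext i
      simp [hc', if_neg (hex i)]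
    rw [this]
    exact hcinj

lemma edge_count_lower {n : ℕ} (G : SimpleGraph (Fin n)) (D : Finset (Fin n)) (g : Fin n → ℕ)
    (hg : ∀ v ∈ D, ∃ A : Finset (Fin n), A ⊆ D ∧ (∀ u ∈ A, G.Adj v u) ∧ g v ≤ A.card) :
    ∑ v ∈ D, g v ≤ 2 * (G.induce (↑D : Set (Fin n))).edgeSet.ncard := by
  classical
  set GI := G.induce (↑D : Set (Fin n)) with hGI
  have hadj : ∀ a b : ↥(↑D : Set (Fin n)), GI.Adj a b ↔ G.Adj ↑a ↑b := fun a b => Iff.rfl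
  have hcard : (GI.edgeSet).ncard = GI.edgeFinset.card := by
    rw [← SimpleGraph.coe_edgeFinset, Set.ncard_coe_finset]
  rw [hcard, ← SimpleGraph.sum_degrees_eq_twice_card_edges]
  rw [← Finset.sum_coe_sort D g]
  apply Finset.sum_le_sum
  intro v _
  obtain ⟨A, hAD, hAadj, hgA⟩ := hg ↑v v.2
  refine hgA.trans ?_
  have : A.card = A.attach.card := Finset.card_attach.symm
  rw [this]
  unfold SimpleGraph.degree
  apply Finset.card_le_card_of_injOn (fun u => (⟨u.1, hAD u.2⟩ : ↥(↑D : Set (Fin n))))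
  · intro a _
    rw [Finset.mem_coe, SimpleGraph.mem_neighborFinset, hadj]
    exact hAadj a.1 a.2
  · intro a _ b _ hab
    exact Subtype.ext (congrArg Subtype.val hab : ((⟨a.1, hAD a.2⟩ : ↥(↑D : Set (Fin n))) : Fin n) = ↑(⟨b.1, hAD b.2⟩ : ↥(↑D : Set (Fin n))))

set_option maxHeartbeats 1000000 in
/-- For any fixed `0 < α < 1/9` there exists `n₀` such that every rainbow
`C₄`-saturated graph on `n ≥ n₀` vertices contains a dominating set `D` with
either `|D| ≤ α·n` or the induced subgraph `G[D]` having average degree at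
least 4. -/
theorem rainbow_sat_C4_dominating_set (α : ℝ) (hα0 : 0 < α) (hα1 : α < 1 / 9) :
    ∃ n₀ : ℕ, ∀ n : ℕ, n₀ ≤ n → ∀ G : SimpleGraph (Fin n), RainbowSat G 4 →
      ∃ D : Set (Fin n), (∀ v, v ∈ D ∨ ∃ u ∈ D, G.Adj u v) ∧
        ((D.ncard : ℝ) ≤ α * n ∨ 4 * D.ncard ≤ 2 * (G.induce D).edgeSet.ncard) := by
  classical
  set K : ℕ := ⌈(24:ℝ)/α⌉₊ + 40 with hKdef
  have hK40 : 40 ≤ K := by omega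
  have hKR : (24:ℝ)/α ≤ K := by
    calc (24:ℝ)/α ≤ (⌈(24:ℝ)/α⌉₊ : ℝ) := Nat.le_ceil _
    _ ≤ K := by exact_mod_cast Nat.le_add_right _ 40
  have hK40R : (40:ℝ) ≤ (K:ℝ) := by exact_mod_cast hK40
  have hK0R : (0:ℝ) < K := by linarith
  refine ⟨⌈(40:ℝ)*K/α^2⌉₊ + ⌈(4:ℝ)*K/α⌉₊ + 4, ?_⟩
  intro n hn G hGsat
  have hn1 : (40:ℝ)*K/α^2 ≤ n :=
    le_trans (Nat.le_ceil _) (Nat.cast_le.mpr (by omega))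
  have hn2 : (4:ℝ)*K/α ≤ n :=
    le_trans (Nat.le_ceil _) (Nat.cast_le.mpr (by omega))
  have hαn4K : 4*(K:ℝ) ≤ α*n := by
    rw [div_le_iff₀ hα0] at hn2; linarith [hn2]
  have hα2n40K : 40*(K:ℝ) ≤ α^2*n := by
    rw [div_le_iff₀ (by positivity : (0:ℝ) < α^2)] at hn1; linarith [hn1]
  have hn4 : 4 ≤ n := le_trans (by omega) hn
  have hnR : (0:ℝ) < n := by
    have : (4:ℝ) ≤ n := by exact_mod_cast hn4
    linarith
  -- degree notation
  set d : Fin n → ℕ := fun v => G.degree v with hd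
  set S : ℕ := ∑ v, d v with hS
  -- balls
  set Bf : Fin n → Finset (Fin n) := fun v =>
    insert v ((G.neighborFinset v) ∪ (G.neighborFinset v).biUnion (fun u => G.neighborFinset u))
    with hBf
  have hBcard : ∀ v, ((Bf v).card : ℝ) ≤ 1 + d v + ∑ u ∈ G.neighborFinset v, (d u : ℝ) := by
    intro v
    have h1 : (Bf v).card ≤ 1 + (d v + ∑ u ∈ G.neighborFinset v, d u) := by
      refine le_trans (Finset.card_insert_le _ _) ?_
      rw [add_comm 1]
      refine Nat.add_le_add ?_ le_rfl
      refine le_trans (Finset.card_union_le _ _) ?_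
      have h2 : ((G.neighborFinset v).biUnion (fun u => G.neighborFinset u)).card
          ≤ ∑ u ∈ G.neighborFinset v, (G.neighborFinset u).card := Finset.card_biUnion_le
      have h3 : ∀ u, (G.neighborFinset u).card = d u := fun u =>
        SimpleGraph.card_neighborFinset_eq_degree G u
      rw [h3 v] at *
      refine add_le_add le_rfl (le_trans h2 (le_of_eq ?_))
      exact Finset.sum_congr rfl (fun u _ => h3 u)
    calc ((Bf v).card : ℝ) ≤ ((1 + (d v + ∑ u ∈ G.neighborFinset v, d u) : ℕ) : ℝ) := by
          exact_mod_cast h1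
    _ = 1 + d v + ∑ u ∈ G.neighborFinset v, (d u : ℝ) := by push_cast; ring
  have hBdom : ∀ v u, u ∉ Bf v → ∃ p ∈ Bf v, G.Adj p u := by
    intro v u hu
    have hne : u ≠ v := fun h => hu (h ▸ Finset.mem_insert_self _ _)
    have hnadj : ¬ G.Adj u v := by
      intro hadj
      exact hu (Finset.mem_insert_of_mem (Finset.mem_union_left _
        ((SimpleGraph.mem_neighborFinset G v u).mpr hadj.symm)))
    obtain ⟨p, q, h1, h2, h3⟩ := exists_P3 hGsat hne hnadj
    refine ⟨p, ?_, h1.symm⟩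
    refine Finset.mem_insert_of_mem (Finset.mem_union_right _ ?_)
    refine Finset.mem_biUnion.mpr ⟨q, ?_, ?_⟩
    · exact (SimpleGraph.mem_neighborFinset G v q).mpr h3.symm
    · exact (SimpleGraph.mem_neighborFinset G q p).mpr h2.symm
  by_cases hball : ∃ v, ((Bf v).card : ℝ) ≤ α * n
  · obtain ⟨v, hv⟩ := hball
    refine ⟨↑(Bf v), ?_, Or.inl ?_⟩
    · intro u
      by_cases hu : u ∈ Bf v
      · exact Or.inl hu
      · obtain ⟨p, hp, hadj⟩ := hBdom v u hu
        exact Or.inr ⟨p, hp, hadj⟩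
    · rwa [Set.ncard_coe_finset]
  push_neg at hball
  have hballineq : ∀ v, α * n < 1 + d v + ∑ u ∈ G.neighborFinset v, (d u : ℝ) :=
    fun v => lt_of_lt_of_le (hball v) (hBcard v)
  by_cases hScase : 4 * n ≤ S
  · -- dense graph: take everything
    refine ⟨↑(Finset.univ : Finset (Fin n)), fun v => Or.inl (by simp), Or.inr ?_⟩
    have h2 := edge_count_lower G Finset.univ d (fun v _ =>
      ⟨G.neighborFinset v, Finset.subset_univ _,
        fun u hu => (SimpleGraph.mem_neighborFinset G v u).mp hu,
        le_of_eq (SimpleGraph.card_neighborFinset_eq_degree G v).symm⟩)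
    rw [Set.ncard_coe_finset, Finset.card_univ, Fintype.card_fin]
    calc 4 * n ≤ S := hScase
    _ = ∑ v ∈ Finset.univ, d v := rfl
    _ ≤ _ := h2
  push_neg at hScase
  have hSR : (S:ℝ) < 4 * n := by exact_mod_cast hScase
  -- hubs / middle
  set β : ℝ := α / (2*K) with hβ
  have hβ0 : 0 < β := by positivity
  have hKβ : (K:ℝ) * β = α/2 := by rw [hβ, mul_div_assoc', div_eq_div_iff (by positivity) (by norm_num)]; ring
  have hβn2 : (2:ℝ) ≤ β * n := by
    rw [hβ, div_mul_eq_mul_div, le_div_iff₀ (by positivity)]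
    nlinarith [hαn4K]
  set Hf : Finset (Fin n) := Finset.univ.filter (fun v => β*n ≤ (d v:ℝ)) with hHf
  set Mf : Finset (Fin n) := Finset.univ.filter (fun v => K < d v ∧ (d v:ℝ) < β*n) with hMf
  set M'f : Finset (Fin n) := Mf.filter (fun v => ∀ u ∈ G.neighborFinset v, u ∉ Hf) with hM'f
  set MHf : Finset (Fin n) := Mf.filter (fun v => ¬ ∀ u ∈ G.neighborFinset v, u ∉ Hf) with hMHf
  have hsumd : (S:ℝ) = ∑ v, (d v : ℝ) := by push_cast [hS]; rfl
  have hHcard : (Hf.card : ℝ) * (β*n) ≤ S := by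
    have h := Finset.card_nsmul_le_sum Hf (fun v => (d v:ℝ)) (β*n)
      (fun v hv => (Finset.mem_filter.mp hv).2)
    rw [nsmul_eq_mul] at h
    refine le_trans h ?_
    rw [hsumd]
    exact Finset.sum_le_sum_of_subset_of_nonneg (Finset.subset_univ _)
      (fun u _ _ => by positivity)
  have hMcard : (Mf.card : ℝ) * (K+1) ≤ S := by
    have h := Finset.card_nsmul_le_sum Mf (fun v => (d v:ℝ)) ((K:ℝ)+1)
      (fun v hv => by
        have h1 : K + 1 ≤ d v := (Finset.mem_filter.mp hv).2.1
        show (K:ℝ) + 1 ≤ (d v : ℝ)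
        exact_mod_cast h1)
    rw [nsmul_eq_mul] at h
    refine le_trans h ?_
    rw [hsumd]
    exact Finset.sum_le_sum_of_subset_of_nonneg (Finset.subset_univ _)
      (fun u _ _ => by positivity)
  have hMHM : M'f.card + MHf.card = Mf.card :=
    Finset.card_filter_add_card_filter_not _
  have hM'MHdisj : Disjoint M'f MHf := by
    rw [Finset.disjoint_left]
    intro a ha ha'
    exact (Finset.mem_filter.mp ha').2 (Finset.mem_filter.mp ha).2
  have claimA : ∀ v, d v ≤ K → ∃ h ∈ Hf, G.Adj h v := by
    intro v hvK
    by_contra hcon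
    push_neg at hcon
    have hnb : ∀ u ∈ G.neighborFinset v, (d u : ℝ) < β*n := by
      intro u hu
      by_contra hge
      push_neg at hge
      exact hcon u (Finset.mem_filter.mpr ⟨Finset.mem_univ _, hge⟩)
        ((SimpleGraph.mem_neighborFinset G v u).mp hu).symm
    have hsum : ∑ u ∈ G.neighborFinset v, (d u:ℝ) ≤ (d v : ℝ) * (β*n) := by
      have h := Finset.sum_le_card_nsmul (G.neighborFinset v) (fun u => (d u:ℝ)) (β*n)
        (fun u hu => (hnb u hu).le)
      rwa [nsmul_eq_mul, SimpleGraph.card_neighborFinset_eq_degree] at h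
    have hdvK : (d v:ℝ) ≤ K := by exact_mod_cast hvK
    have hKb : (d v:ℝ) * (β*n) ≤ (K:ℝ)*(β*n) :=
      mul_le_mul_of_nonneg_right hdvK (by positivity)
    have hKβn : (K:ℝ)*(β*n) = α/2*n := by rw [← mul_assoc, hKβ]
    have hb := hballineq v
    -- α*n < 1 + K + α/2*n, but α*n ≥ 4K and K ≥ 40: contradiction
    linarith [hb, hsum, hKb, hKβn.le, hKβn.ge, hαn4K, hK40R, hdvK]
  have claimB : ∀ v ∈ M'f, K - 2 ≤ ((G.neighborFinset v) ∩ Mf).card := by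
    intro v hv
    obtain ⟨hvM, hvnb⟩ := Finset.mem_filter.mp hv
    obtain ⟨-, hKlt, hdlt⟩ := Finset.mem_filter.mp hvM
    set m : ℕ := ((G.neighborFinset v) ∩ Mf).card with hm
    have hsplit : ∑ u ∈ (G.neighborFinset v) ∩ Mf, (d u:ℝ)
        + ∑ u ∈ (G.neighborFinset v) \ Mf, (d u:ℝ)
        = ∑ u ∈ G.neighborFinset v, (d u:ℝ) := Finset.sum_inter_add_sum_sdiff _ _ _
    have hbound1 : ∑ u ∈ (G.neighborFinset v) ∩ Mf, (d u:ℝ) ≤ (m:ℝ) * (β*n) := by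
      have h := Finset.sum_le_card_nsmul ((G.neighborFinset v) ∩ Mf) (fun u => (d u:ℝ)) (β*n)
        (fun u hu => ((Finset.mem_filter.mp (Finset.mem_inter.mp hu).2).2.2).le)
      rwa [nsmul_eq_mul] at h
    have hbound2 : ∑ u ∈ (G.neighborFinset v) \ Mf, (d u:ℝ) ≤ (d v:ℝ) * K := by
      have hle : ∀ u ∈ (G.neighborFinset v) \ Mf, (d u:ℝ) ≤ (K:ℝ) := by
        intro u hu
        obtain ⟨hun, hunM⟩ := Finset.mem_sdiff.mp hu
        have huH : u ∉ Hf := hvnb u hun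
        have hult : (d u:ℝ) < β*n := by
          by_contra hge
          push_neg at hge
          exact huH (Finset.mem_filter.mpr ⟨Finset.mem_univ _, hge⟩)
        have : ¬ (K < d u ∧ (d u:ℝ) < β*n) := fun hc =>
          hunM (Finset.mem_filter.mpr ⟨Finset.mem_univ _, hc⟩)
        have hduK : d u ≤ K := by
          by_contra hgt
          push_neg at hgt
          exact this ⟨hgt, hult⟩
        exact_mod_cast hduK
      have h := Finset.sum_le_card_nsmul ((G.neighborFinset v) \ Mf) (fun u => (d u:ℝ)) (K:ℝ) hle
      rw [nsmul_eq_mul] at h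
      refine le_trans h ?_
      refine mul_le_mul_of_nonneg_right ?_ (by positivity)
      have hc : ((G.neighborFinset v) \ Mf).card ≤ d v := by
        show ((G.neighborFinset v) \ Mf).card ≤ (G.neighborFinset v).card
        exact Finset.card_le_card (Finset.sdiff_subset)
      exact_mod_cast hc
    have hb := hballineq v
    have hKβn : (K:ℝ)*(β*n) = α/2*n := by rw [← mul_assoc, hKβ]
    have hdvβ : (d v:ℝ) * K ≤ (β*n) * K := mul_le_mul_of_nonneg_right hdlt.le (by positivity)
    -- derive (K:ℝ)*(β*n) < ((m:ℝ) + 3/2)*(β*n)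
    have hmain : (K:ℝ)*(β*n) < ((m:ℝ) + 3/2)*(β*n) := by
      linarith [hb, hsplit, hbound1, hbound2, hdlt, hβn2, hKβn, hdvβ]
    have hKm : (K:ℝ) < (m:ℝ) + 3/2 := lt_of_mul_lt_mul_right hmain (by positivity)
    have : K < m + 2 := by
      by_contra hle
      push_neg at hle
      have h2 : ((m:ℝ) + 2) ≤ (K:ℝ) := by exact_mod_cast hle
      linarith
    omega
  have claimBH : ∀ v ∈ MHf, ∃ h ∈ Hf, G.Adj v h := by
    intro v hv
    have h2 := (Finset.mem_filter.mp hv).2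
    push_neg at h2
    obtain ⟨u, hun, huH⟩ := h2
    exact ⟨u, huH, (SimpleGraph.mem_neighborFinset G v u).mp hun⟩
  have hnotHM : ∀ v, v ∉ Hf → v ∉ Mf → d v ≤ K := by
    intro v hvH hvM
    by_contra hgt
    push_neg at hgt
    have hlt : (d v:ℝ) < β*n := by
      by_contra hge
      push_neg at hge
      exact hvH (Finset.mem_filter.mpr ⟨Finset.mem_univ _, hge⟩)
    exact hvM (Finset.mem_filter.mpr ⟨Finset.mem_univ _, hgt, hlt⟩)
  by_cases hbr : 4 * Hf.card + 3 * MHf.card + 4 * M'f.card ≤ (K - 2) * M'f.card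
  · -- dense dominating set H ∪ M
    refine ⟨↑(Hf ∪ Mf), ?_, Or.inr ?_⟩
    · intro v
      by_cases hv : v ∈ Hf ∪ Mf
      · exact Or.inl (Finset.mem_coe.mpr hv)
      · have hvH : v ∉ Hf := fun h => hv (Finset.mem_union_left _ h)
        have hvM : v ∉ Mf := fun h => hv (Finset.mem_union_right _ h)
        obtain ⟨h, hH, hadj⟩ := claimA v (hnotHM v hvH hvM)
        exact Or.inr ⟨h, Finset.mem_coe.mpr (Finset.mem_union_left _ hH), hadj⟩
    · rw [Set.ncard_coe_finset]
      set g : Fin n → ℕ := fun v => if v ∈ M'f then K - 2 else if v ∈ MHf then 1 else 0 with hg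
      have hsum := edge_count_lower G (Hf ∪ Mf) g (by
        intro v _
        by_cases h1 : v ∈ M'f
        · refine ⟨(G.neighborFinset v) ∩ Mf, ?_, ?_, ?_⟩
          · exact (Finset.inter_subset_right).trans Finset.subset_union_right
          · intro u hu
            exact (SimpleGraph.mem_neighborFinset G v u).mp (Finset.mem_inter.mp hu).1
          · show (if v ∈ M'f then K - 2 else if v ∈ MHf then 1 else 0) ≤ _
            rw [if_pos h1]
            exact claimB v h1
        · by_cases h2 : v ∈ MHf
          · obtain ⟨h, hH, hadj⟩ := claimBH v h2
            refine ⟨{h}, ?_, ?_, ?_⟩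
            · rw [Finset.singleton_subset_iff]
              exact Finset.mem_union_left _ hH
            · intro u hu
              rw [Finset.mem_singleton] at hu
              exact hu ▸ hadj
            · show (if v ∈ M'f then K - 2 else if v ∈ MHf then 1 else 0) ≤ _
              rw [if_neg h1, if_pos h2, Finset.card_singleton]
          · refine ⟨∅, Finset.empty_subset _, fun u hu => absurd hu (Finset.notMem_empty u), ?_⟩
            show (if v ∈ M'f then K - 2 else if v ∈ MHf then 1 else 0) ≤ _
            rw [if_neg h1, if_neg h2]
            exact Nat.zero_le _)
      have hsub : M'f ∪ MHf ⊆ Hf ∪ Mf :=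
        Finset.union_subset
          ((Finset.filter_subset _ _).trans Finset.subset_union_right)
          ((Finset.filter_subset _ _).trans Finset.subset_union_right)
      have hgeq : (K-2) * M'f.card + MHf.card ≤ ∑ v ∈ Hf ∪ Mf, g v := by
        have e1 : ∑ v ∈ M'f, g v = M'f.card * (K-2) := by
          rw [Finset.sum_congr rfl (fun v hv => by
            show (if v ∈ M'f then K - 2 else if v ∈ MHf then 1 else 0) = K - 2
            rw [if_pos hv]), Finset.sum_const, smul_eq_mul]
        have e2 : ∑ v ∈ MHf, g v = MHf.card := by
          rw [Finset.sum_congr rfl (fun v hv => by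
            show (if v ∈ M'f then K - 2 else if v ∈ MHf then 1 else 0) = 1
            rw [if_neg (Finset.disjoint_right.mp hM'MHdisj hv), if_pos hv]),
            Finset.sum_const, smul_eq_mul, mul_one]
        calc (K-2) * M'f.card + MHf.card = ∑ v ∈ M'f, g v + ∑ v ∈ MHf, g v := by
              rw [e1, e2, mul_comm]
        _ = ∑ v ∈ M'f ∪ MHf, g v := (Finset.sum_union hM'MHdisj).symm
        _ ≤ ∑ v ∈ Hf ∪ Mf, g v := Finset.sum_le_sum_of_subset hsub
      calc 4 * (Hf ∪ Mf).card ≤ 4 * (Hf.card + Mf.card) :=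
            Nat.mul_le_mul_left _ (Finset.card_union_le _ _)
      _ = 4 * Hf.card + 3 * MHf.card + 4 * M'f.card + MHf.card := by omega
      _ ≤ (K-2) * M'f.card + MHf.card := by omega
      _ ≤ ∑ v ∈ Hf ∪ Mf, g v := hgeq
      _ ≤ 2 * (G.induce (↑(Hf ∪ Mf) : Set (Fin n))).edgeSet.ncard := hsum
  · -- small dominating set H ∪ M'
    push_neg at hbr
    refine ⟨↑(Hf ∪ M'f), ?_, Or.inl ?_⟩
    · intro v
      by_cases hv : v ∈ Hf ∪ M'f
      · exact Or.inl (Finset.mem_coe.mpr hv)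
      · right
        have hvH : v ∉ Hf := fun h => hv (Finset.mem_union_left _ h)
        have hvM' : v ∉ M'f := fun h => hv (Finset.mem_union_right _ h)
        by_cases hvM : v ∈ Mf
        · have hvMH : v ∈ MHf := Finset.mem_filter.mpr ⟨hvM, fun hall =>
            hvM' (Finset.mem_filter.mpr ⟨hvM, hall⟩)⟩
          obtain ⟨h, hH, hadj⟩ := claimBH v hvMH
          exact ⟨h, Finset.mem_coe.mpr (Finset.mem_union_left _ hH), hadj.symm⟩
        · obtain ⟨h, hH, hadj⟩ := claimA v (hnotHM v hvH hvM)
          exact ⟨h, Finset.mem_coe.mpr (Finset.mem_union_left _ hH), hadj⟩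
    · rw [Set.ncard_coe_finset]
      -- natural number manipulation
      have hbrN : (K-6) * M'f.card ≤ 4 * Hf.card + 3 * MHf.card := by
        have he : (K-2) * M'f.card = (K-6) * M'f.card + 4 * M'f.card := by
          have h6 : K - 2 = (K - 6) + 4 := by omega
          rw [h6, add_mul]
        omega
      have hK6R : (0:ℝ) < (K:ℝ) - 6 := by linarith
      have hbrR : ((K:ℝ) - 6) * M'f.card ≤ 4 * Hf.card + 3 * MHf.card := by
        have hc := (Nat.cast_le (α := ℝ)).mpr hbrN
        push_cast [Nat.cast_sub (show 6 ≤ K by omega)] at hc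
        convert hc using 2 <;> push_cast <;> ring
      set Hc : ℝ := (Hf.card : ℝ) with hHc
      set Mc : ℝ := (Mf.card : ℝ) with hMc
      set MHc : ℝ := (MHf.card : ℝ) with hMHc
      set M'c : ℝ := (M'f.card : ℝ) with hM'c
      have hHc0 : 0 ≤ Hc := Nat.cast_nonneg _
      have hMHc0 : 0 ≤ MHc := Nat.cast_nonneg _
      have hM'c0 : 0 ≤ M'c := Nat.cast_nonneg _
      -- Hc * α ≤ 8K
      have hβval : β * n = α * n / (2*(K:ℝ)) := by rw [hβ]; ring
      have hf1 : Hc * (α*(n:ℝ)) < 4*(n:ℝ)*(2*(K:ℝ)) := by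
        have h0 : Hc * (β*n) < 4*n := lt_of_le_of_lt hHcard hSR
        rw [hβval, ← mul_div_assoc] at h0
        exact (div_lt_iff₀ (by positivity)).mp h0
      have hg1 : Hc * α ≤ 8 * (K:ℝ) := by
        by_contra hcon
        push_neg at hcon
        have h2 := mul_lt_mul_of_pos_right hcon hnR
        nlinarith [hf1, h2]
      -- MHc * K ≤ 4n
      have hf2 : MHc * ((K:ℝ)+1) ≤ Mc * ((K:ℝ)+1) := by
        refine mul_le_mul_of_nonneg_right ?_ (by positivity)
        have h5 : MHf.card ≤ Mf.card := by omega
        rw [hMHc, hMc]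
        exact_mod_cast h5
      have hg2 : MHc * (K:ℝ) ≤ 4 * n := by
        have h3 : MHc * (K:ℝ) ≤ MHc * ((K:ℝ)+1) :=
          mul_le_mul_of_nonneg_left (by linarith) hMHc0
        linarith [hMcard, hSR, hf2]
      -- combine:  (Hc + M'c) * (K-6) ≤ α n (K-6)
      have hcardle : ((Hf ∪ M'f).card : ℝ) ≤ Hc + M'c := by
        have h5 := Finset.card_union_le Hf M'f
        rw [hHc, hM'c]
        exact_mod_cast h5
      refine le_trans hcardle ?_
      rw [← mul_le_mul_iff_left₀ hK6R]
      -- goal : (Hc + M'c) * (K-6) ≤ α n (K-6)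
      have hstep : (Hc + M'c) * ((K:ℝ)-6) ≤ Hc * ((K:ℝ)-2) + 3 * MHc := by
        have : M'c * ((K:ℝ)-6) ≤ 4*Hc + 3*MHc := by
          calc M'c * ((K:ℝ)-6) = ((K:ℝ)-6) * M'c := by ring
          _ ≤ 4 * Hc + 3 * MHc := hbrR
        nlinarith [this]
      refine le_trans hstep ?_
      -- Hc(K-2) + 3 MHc ≤ α n (K-6)
      -- Hc(K-2) ≤ Hc*K ≤ (8K/α)*K = 8K²/α ≤ (αn/2)(K-6) since α²n ≥ 40K
      -- 3MHc ≤ 12n/K ≤ (αn/2)(K-6) since αK(K-6) ≥ 24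
      have hs1 : Hc * ((K:ℝ)-2) * α ≤ 8*(K:ℝ)*(K:ℝ) := by
        have t1 : Hc * α * ((K:ℝ)-2) ≤ 8*(K:ℝ)*((K:ℝ)-2) :=
          mul_le_mul_of_nonneg_right hg1 (by linarith)
        have t2 : 8*(K:ℝ)*((K:ℝ)-2) ≤ 8*(K:ℝ)*(K:ℝ) :=
          mul_le_mul_of_nonneg_left (by linarith) (by linarith)
        linarith [t1, t2]
      have hs2 : 8*(K:ℝ)*(K:ℝ) ≤ (α*n*((K:ℝ)-6)/2) * α := by
        have u1 : (K:ℝ)/2 ≤ (K:ℝ)-6 := by linarith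
        have u2 : (40*(K:ℝ))*((K:ℝ)/2) ≤ (α^2*n)*((K:ℝ)-6) :=
          mul_le_mul hα2n40K u1 (by linarith) (by positivity)
        nlinarith [u2, mul_self_nonneg (K:ℝ)]
      have hpart1 : Hc * ((K:ℝ)-2) ≤ α*n*((K:ℝ)-6)/2 := by
        have := le_trans hs1 hs2
        exact le_of_mul_le_mul_right (by linarith [this]) hα0
      have hpart2 : 3 * MHc ≤ α*n*((K:ℝ)-6)/2 := by
        -- MHc*K ≤ 4n ; αK(K-6) ≥ 24·34/40... need 24 ≤ α K and K-6 ≥ 34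
        -- 3 MHc * K ≤ 12 n ≤ (αn(K-6)/2)*K  ⇐  24 ≤ α(K-6)K/... : α K ≥ 24, K-6 ≥ 1
        have h24 : (24:ℝ) ≤ α * K := by
          rw [div_le_iff₀ hα0] at hKR
          linarith
        have hmul : 3 * MHc * (K:ℝ) ≤ (α*n*((K:ℝ)-6)/2) * (K:ℝ) := by
          have w0 : α*(K:ℝ) ≤ α*(K:ℝ)*((K:ℝ)-6) := by
            have := mul_le_mul_of_nonneg_left (by linarith : (1:ℝ) ≤ (K:ℝ)-6)
              (by positivity : (0:ℝ) ≤ α*(K:ℝ))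
            linarith [this]
          have w1 : (24:ℝ) ≤ α*(K:ℝ)*((K:ℝ)-6) := by linarith
          have w2 := mul_le_mul_of_nonneg_right w1 hnR.le
          linarith [hg2, w2]
        exact le_of_mul_le_mul_right (by linarith [hmul]) hK0R
      linarith [hpart1, hpart2]
end

section
/- Let ℓ ≥ 4 and n > 2. If G is an n-vertex rainbow C_ℓ-saturated graph, then G contains no acyclic connected component; that is, every connected component of G contains a cycle. -/
section AUX

lemma edge_step_inj {V : Type*} {ℓ : ℕ} (hℓ : 4 ≤ ℓ) {f : ZMod ℓ → V}
    (hinj : Function.Injective f) {i j : ZMod ℓ}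
    (h : s(f i, f (i+1)) = s(f j, f (j+1))) : i = j := by
  haveI : NeZero ℓ := ⟨by omega⟩
  rw [Sym2.eq_iff] at h
  rcases h with ⟨h1, _⟩ | ⟨h1, h2⟩
  · exact hinj h1
  · exfalso
    have hij : i = j + 1 := hinj h1
    have hji : i + 1 = j := hinj h2
    have h2' : j + 2 = j + 0 := by
      rw [add_zero]
      have : j + 1 + 1 = j := by rw [← hij, hji]
      calc j + 2 = j + 1 + 1 := by ring
        _ = j := this
    have h0 : ((2:ℕ) : ZMod ℓ) = 0 := by
      have := add_left_cancel h2'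
      exact_mod_cast this
    rw [ZMod.natCast_eq_zero_iff] at h0
    have := Nat.le_of_dvd (by omega) h0
    omega

lemma exists_path_of_cycle_steps {V : Type*} {G : SimpleGraph V} {ℓ : ℕ} (hℓ : 4 ≤ ℓ)
    {f : ZMod ℓ → V} (hinj : Function.Injective f) (i : ZMod ℓ)
    (hadj : ∀ j : ZMod ℓ, j ≠ i → G.Adj (f j) (f (j+1))) :
    ∃ p : G.Walk (f (i+1)) (f i), p.IsPath ∧ p.length = ℓ - 1 := by
  haveI : NeZero ℓ := ⟨by omega⟩
  have key : ∀ m : ℕ, m ≤ ℓ - 1 → ∃ p : G.Walk (f (i+1)) (f (i+1+(m:ZMod ℓ))),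
      p.length = m ∧ p.support = (List.range (m+1)).map (fun k : ℕ => f (i+1+(k:ZMod ℓ))) := by
    intro m
    induction m with
    | zero =>
      intro _
      refine ⟨SimpleGraph.Walk.nil.copy rfl (congrArg f (by push_cast; ring)), by simp,
        by rw [show List.range 1 = [0] from rfl]; simp⟩
    | succ m ih =>
      intro hm
      obtain ⟨p, hlen, hsup⟩ := ih (by omega)
      have hne : (i+1+(m:ZMod ℓ)) ≠ i := by
        intro h
        have h0 : ((m+1:ℕ) : ZMod ℓ) = 0 := by
          have : i + ((m:ZMod ℓ) + 1) = i + 0 := by rw [add_zero]; calc i + ((m:ZMod ℓ)+1) = i + 1 + (m:ZMod ℓ) := by ring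
                                                      _ = i := h
          have := add_left_cancel this
          push_cast
          rw [add_comm] at this ⊢
          exact this
        rw [ZMod.natCast_eq_zero_iff] at h0
        have := Nat.le_of_dvd (by omega) h0
        omega
      have hstep : G.Adj (f (i+1+(m:ZMod ℓ))) (f (i+1+((m+1:ℕ):ZMod ℓ))) := by
        have := hadj _ hne
        convert this using 2
        push_cast
        ring
      refine ⟨p.concat hstep, by simp [hlen], ?_⟩
      have hr : (List.range (m+1+1)) = (List.range (m+1)).concat (m+1) := by
        rw [List.concat_eq_append, List.range_succ]
      rw [SimpleGraph.Walk.support_concat, hsup, hr, List.map_concat, List.concat_eq_append]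
  obtain ⟨p, hlen, hsup⟩ := key (ℓ-1) le_rfl
  have hend : i + 1 + ((ℓ-1 : ℕ) : ZMod ℓ) = i := by
    have h0 : ((1 + (ℓ-1) : ℕ) : ZMod ℓ) = 0 := by
      rw [show 1 + (ℓ-1) = ℓ by omega]; exact ZMod.natCast_self ℓ
    push_cast at h0
    calc i + 1 + ((ℓ-1:ℕ) : ZMod ℓ) = i + (1 + ((ℓ-1:ℕ):ZMod ℓ)) := by ring
      _ = i := by rw [h0, add_zero]
  refine ⟨p.copy rfl (congrArg f hend), ?_, by simp [hlen]⟩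
  rw [SimpleGraph.Walk.isPath_def, SimpleGraph.Walk.support_copy, hsup]
  refine List.Nodup.map_on ?_ List.nodup_range
  intro k₁ hk₁ k₂ hk₂ heq
  rw [List.mem_range] at hk₁ hk₂
  have hc : (k₁ : ZMod ℓ) = (k₂ : ZMod ℓ) := by
    have := hinj heq
    have := add_left_cancel this
    exact this
  have := congrArg ZMod.val hc
  rwa [ZMod.val_cast_of_lt (by omega), ZMod.val_cast_of_lt (by omega)] at this

end AUX

/-- Any edge of `G ⊔ fromEdgeSet {e₀}` other than `e₀` is an edge of `G`. -/
lemma mem_edgeSet_of_ne {V : Type*} (G : SimpleGraph V) (e₀ e : Sym2 V)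
    (he : e ∈ (G ⊔ SimpleGraph.fromEdgeSet {e₀}).edgeSet) (hne : e ≠ e₀) :
    e ∈ G.edgeSet := by
  rw [SimpleGraph.edgeSet_sup] at he
  rcases he with h | h
  · exact h
  · rw [SimpleGraph.edgeSet_fromEdgeSet] at h
    exact absurd h.1 (by simpa using hne)

/-- For `ℓ ≥ 4` and `n > 2`, an `n`-vertex rainbow `C_ℓ`-saturated graph has no
acyclic connected component: every connected component contains a cycle. -/
theorem rainbow_sat_no_acyclic_component (ℓ n : ℕ) (hℓ : 4 ≤ ℓ) (hn : 2 < n)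
    (G : SimpleGraph (Fin n)) (hG : RainbowSat G ℓ) :
    ∀ v : Fin n, ∃ (u : Fin n) (p : G.Walk u u), p.IsCycle ∧ G.Reachable v u := by
  classical
  intro v
  by_contra hcon
  push_neg at hcon
  obtain ⟨⟨c, hcp, hcr⟩, hsat⟩ := hG
  haveI : NeZero ℓ := ⟨by omega⟩
  by_cases hreach : ∀ y, G.Reachable v y
  · -- G is connected; its acyclicity gives path uniqueness
    have hac : G.IsAcyclic := by intro u p hp; exact hcon u p hp (hreach u)
    have huniq := SimpleGraph.isAcyclic_iff_path_unique.mp hac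
    have hpre : G.Preconnected := fun a b => (hreach a).symm.trans (hreach b)
    -- find a vertex z with two distinct neighbors x, y
    obtain ⟨z, x, y, hzx, hzy, hxy⟩ :
        ∃ z x y : Fin n, G.Adj z x ∧ G.Adj z y ∧ x ≠ y := by
      have h01 : (⟨0, by omega⟩ : Fin n) ≠ ⟨1, by omega⟩ := by simp
      obtain ⟨W⟩ := hpre ⟨0, by omega⟩ ⟨1, by omega⟩
      obtain ⟨b, hab, -, -⟩ := SimpleGraph.Walk.exists_eq_cons_of_ne h01 W
      set a : Fin n := ⟨0, by omega⟩ with ha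
      obtain ⟨w, hwa, hwb⟩ : ∃ w : Fin n, w ≠ a ∧ w ≠ b := by
        by_contra h
        push_neg at h
        have hsub : (Finset.univ : Finset (Fin n)) ⊆ {a, b} := by
          intro w _
          by_cases hwa : w = a
          · simp [hwa]
          · simp [h w hwa]
        have h1 := Finset.card_le_card hsub
        have h2 : ({a, b} : Finset (Fin n)).card ≤ 2 := by
          have := Finset.card_insert_le a ({b} : Finset (Fin n))
          simpa using this
        rw [Finset.card_univ, Fintype.card_fin] at h1
        omega
      obtain ⟨Wp⟩ := hpre w a
      have hp : Wp.toPath.1.IsPath := Wp.toPath.2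
      have hq : (Wp.toPath.1.reverse).IsPath := hp.reverse
      obtain ⟨u1, hau1, q', hq'⟩ :=
        SimpleGraph.Walk.exists_eq_cons_of_ne hwa.symm Wp.toPath.1.reverse
      by_cases hu1b : u1 = b
      · subst hu1b
        obtain ⟨u2, hbu2, q'', hq''⟩ :=
          SimpleGraph.Walk.exists_eq_cons_of_ne hwb.symm q'
        have hu2a : u2 ≠ a := by
          rw [hq', hq''] at hq
          rw [SimpleGraph.Walk.cons_isPath_iff] at hq
          intro h
          apply hq.2
          rw [SimpleGraph.Walk.support_cons]
          right
          exact h ▸ q''.start_mem_support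
        exact ⟨u1, a, u2, hab.symm, hbu2, fun h => hu2a h.symm⟩
      · exact ⟨a, b, u1, hab, hau1, fun h => hu1b h.symm⟩
    have hnadj : ¬ G.Adj x y := by
      intro hadjxy
      have hp1 : (SimpleGraph.Walk.cons hadjxy SimpleGraph.Walk.nil : G.Walk x y).IsPath := by
        simp [hadjxy.ne]
      have hp2 : (SimpleGraph.Walk.cons hzx.symm
          (SimpleGraph.Walk.cons hzy SimpleGraph.Walk.nil) : G.Walk x y).IsPath := by
        simp [SimpleGraph.Walk.isPath_def, hzx.ne', hxy, hzy.ne]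
      have heqp := huniq ⟨_, hp1⟩ ⟨_, hp2⟩
      have := congrArg (fun P : G.Path x y => P.1.length) heqp
      simp at this
    -- color all edges with distinct colors
    let eqv := Fintype.equivFin (Sym2 (Fin n))
    let c' : Sym2 (Fin n) → ℕ := fun e => (eqv e : ℕ)
    have hproper : ProperEdgeColoring (G ⊔ SimpleGraph.fromEdgeSet {s(x, y)}) c' := by
      intro e₁ _ e₂ _ hne _ hcc
      exact hne (eqv.injective (Fin.val_injective hcc))
    obtain ⟨f, finj, fadj, -⟩ := hsat x y hxy hnadj c' hproper
    by_cases hstep : ∃ i : ZMod ℓ, s(f i, f (i+1)) = s(x, y)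
    · obtain ⟨i, hi⟩ := hstep
      have hGadj : ∀ j : ZMod ℓ, j ≠ i → G.Adj (f j) (f (j+1)) := by
        intro j hj
        rcases (SimpleGraph.sup_adj _ _ _ _).mp (fadj j) with h | h
        · exact h
        · rw [SimpleGraph.fromEdgeSet_adj] at h
          have : s(f j, f (j+1)) = s(f i, f (i+1)) := by
            rw [hi]; simpa using h.1
          exact absurd (edge_step_inj hℓ finj this) hj
      obtain ⟨p, hp, hplen⟩ := exists_path_of_cycle_steps hℓ finj i hGadj
      obtain ⟨q, hqp, hqlen⟩ : ∃ q : G.Walk (f (i+1)) (f i), q.IsPath ∧ q.length = 2 := by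
        rw [Sym2.eq_iff] at hi
        rcases hi with ⟨h1, h2⟩ | ⟨h1, h2⟩
        · rw [h1, h2]
          exact ⟨SimpleGraph.Walk.cons hzy.symm (SimpleGraph.Walk.cons hzx SimpleGraph.Walk.nil),
            by simp [SimpleGraph.Walk.isPath_def, hzy.ne', hxy.symm, hzx.ne], rfl⟩
        · rw [h1, h2]
          exact ⟨SimpleGraph.Walk.cons hzx.symm (SimpleGraph.Walk.cons hzy SimpleGraph.Walk.nil),
            by simp [SimpleGraph.Walk.isPath_def, hzx.ne', hxy, hzy.ne], rfl⟩
      have heqp := huniq ⟨p, hp⟩ ⟨q, hqp⟩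
      have hl := congrArg (fun P : G.Path (f (i+1)) (f i) => P.1.length) heqp
      simp only [hplen, hqlen] at hl
      omega
    · push_neg at hstep
      have hGadj : ∀ j : ZMod ℓ, G.Adj (f j) (f (j+1)) := by
        intro j
        rcases (SimpleGraph.sup_adj _ _ _ _).mp (fadj j) with h | h
        · exact h
        · rw [SimpleGraph.fromEdgeSet_adj] at h
          exact absurd (by simpa using h.1) (hstep j)
      obtain ⟨p, hp, hplen⟩ := exists_path_of_cycle_steps hℓ finj 0 (fun j _ => hGadj j)
      have hqp : (SimpleGraph.Walk.cons (hGadj 0).symm SimpleGraph.Walk.nil :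
          G.Walk (f (0+1)) (f 0)).IsPath := by
        simpa using (hGadj 0).ne'
      have heqp := huniq ⟨p, hp⟩ ⟨_, hqp⟩
      have hl := congrArg (fun P : G.Path (f (0+1)) (f 0) => P.1.length) heqp
      simp only [hplen] at hl
      simp at hl
      omega
  · -- some vertex y is unreachable from v
    push_neg at hreach
    obtain ⟨y, hy⟩ := hreach
    have hvy : v ≠ y := fun h => hy (h ▸ SimpleGraph.Reachable.refl v)
    have hnadj : ¬ G.Adj v y := fun h => hy h.reachable
    let c' : Sym2 (Fin n) → ℕ := fun e => if e = s(v, y) then 1 else 2 * c e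
    have hproper : ProperEdgeColoring (G ⊔ SimpleGraph.fromEdgeSet {s(v, y)}) c' := by
      intro e₁ he₁ e₂ he₂ hne hsh
      by_cases h1 : e₁ = s(v, y) <;> by_cases h2 : e₂ = s(v, y)
      · exact absurd (h1.trans h2.symm) hne
      · simp only [c', if_pos h1, if_neg h2]
        omega
      · simp only [c', if_neg h1, if_pos h2]
        omega
      · simp only [c', if_neg h1, if_neg h2]
        intro hcc
        exact hcp e₁ (mem_edgeSet_of_ne G _ _ he₁ h1) e₂ (mem_edgeSet_of_ne G _ _ he₂ h2)
          hne hsh (by omega)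
    obtain ⟨f, finj, fadj, fcinj⟩ := hsat v y hvy hnadj c' hproper
    by_cases hstep : ∃ i : ZMod ℓ, s(f i, f (i+1)) = s(v, y)
    · obtain ⟨i, hi⟩ := hstep
      have hGadj : ∀ j : ZMod ℓ, j ≠ i → G.Adj (f j) (f (j+1)) := by
        intro j hj
        rcases (SimpleGraph.sup_adj _ _ _ _).mp (fadj j) with h | h
        · exact h
        · rw [SimpleGraph.fromEdgeSet_adj] at h
          have : s(f j, f (j+1)) = s(f i, f (i+1)) := by
            rw [hi]; simpa using h.1
          exact absurd (edge_step_inj hℓ finj this) hj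
      obtain ⟨p, -, -⟩ := exists_path_of_cycle_steps hℓ finj i hGadj
      have hr : G.Reachable (f (i+1)) (f i) := ⟨p⟩
      rw [Sym2.eq_iff] at hi
      rcases hi with ⟨h1, h2⟩ | ⟨h1, h2⟩
      · rw [h1, h2] at hr
        exact hy hr.symm
      · rw [h1, h2] at hr
        exact hy hr
    · push_neg at hstep
      have hGadj : ∀ j : ZMod ℓ, G.Adj (f j) (f (j+1)) := by
        intro j
        rcases (SimpleGraph.sup_adj _ _ _ _).mp (fadj j) with h | h
        · exact h
        · rw [SimpleGraph.fromEdgeSet_adj] at h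
          exact absurd (by simpa using h.1) (hstep j)
      apply hcr
      refine ⟨f, finj, hGadj, ?_⟩
      intro i j hcc
      apply fcinj
      show c' s(f i, f (i+1)) = c' s(f j, f (j+1))
      simp only [c', if_neg (hstep i), if_neg (hstep j)]
      simp only at hcc
      omega
end

section
/- Let ℓ ≥ 4 and n > 2. Every n-vertex rainbow C_ℓ-saturated graph has at least n edges; consequently sat*(n, C_ℓ) ≥ n. -/
open SimpleGraph

/-- From an injective cyclic sequence whose consecutive pairs (except possibly at
index `0`) are adjacent, build a long path from `g 1` to `g 0`. -/
private lemma chain_path {V : Type*} {G : SimpleGraph V} {ℓ : ℕ} (hℓ : 4 ≤ ℓ)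
    (g : ZMod ℓ → V) (hg : Function.Injective g)
    (hadj : ∀ i : ZMod ℓ, i ≠ 0 → G.Adj (g i) (g (i + 1))) :
    ∃ p : G.Walk (g 1) (g 0), p.IsPath ∧ p.length = ℓ - 1 := by
  haveI : NeZero ℓ := ⟨by omega⟩
  have hne : ∀ a b : ℕ, 1 ≤ a → a < b → b ≤ ℓ → g (a : ℕ) ≠ g (b : ℕ) := by
    intro a b ha hab hb hEq
    have : (a : ZMod ℓ) = (b : ZMod ℓ) := hg hEq
    have hmod : a % ℓ = b % ℓ := (ZMod.natCast_eq_natCast_iff' a b ℓ).mp this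
    rcases eq_or_lt_of_le hb with rfl | hlt
    · rw [Nat.mod_self, Nat.mod_eq_of_lt (by omega)] at hmod; omega
    · rw [Nat.mod_eq_of_lt (by omega), Nat.mod_eq_of_lt hlt] at hmod; omega
  have hadj' : ∀ m : ℕ, 1 ≤ m → m < ℓ → G.Adj (g (m : ℕ)) ((g ((m : ZMod ℓ) + 1))) := by
    intro m h1 h2
    apply hadj
    intro hc
    have := Nat.eq_zero_of_dvd_of_lt ((ZMod.natCast_eq_zero_iff m ℓ).mp hc) h2
    omega
  have key : ∀ k : ℕ, k ≤ ℓ - 1 →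
      ∃ p : G.Walk (g ((ℓ - k : ℕ))) (g ((ℓ : ℕ))), p.IsPath ∧ p.length = k ∧
        ∀ x ∈ p.support, ∃ j : ℕ, ℓ - k ≤ j ∧ j ≤ ℓ ∧ x = g (j : ℕ) := by
    intro k
    induction k with
    | zero =>
      intro _
      exact ⟨Walk.nil, by simp, rfl, by
        intro x hx
        simp only [Walk.support_nil, List.mem_singleton] at hx
        exact ⟨ℓ, by omega, le_rfl, hx⟩⟩
    | succ k ih =>
      intro hk1
      obtain ⟨p, hp, hlen, hsup⟩ := ih (by omega)
      have hm : ((ℓ - (k+1) : ℕ) : ZMod ℓ) + 1 = ((ℓ - k : ℕ) : ZMod ℓ) := by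
        have h' : (ℓ - (k+1)) + 1 = ℓ - k := by omega
        rw [← h']
        push_cast
        ring
      have hadj2 : G.Adj (g ((ℓ - (k+1) : ℕ))) (g ((ℓ - k : ℕ))) := by
        have := hadj' (ℓ - (k+1)) (by omega) (by omega)
        rwa [hm] at this
      have hnotmem : g ((ℓ - (k+1) : ℕ)) ∉ p.support := by
        intro hmem
        obtain ⟨j, hj1, hj2, hx⟩ := hsup _ hmem
        exact hne (ℓ - (k+1)) j (by omega) (by omega) hj2 hx
      refine ⟨Walk.cons hadj2 p, hp.cons hnotmem, by simp [hlen], ?_⟩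
      intro x hx
      rw [Walk.support_cons, List.mem_cons] at hx
      rcases hx with rfl | hx
      · exact ⟨ℓ - (k+1), le_rfl, by omega, rfl⟩
      · obtain ⟨j, hj1, hj2, hx⟩ := hsup _ hx
        exact ⟨j, by omega, hj2, hx⟩
  obtain ⟨p, hp, hlen, -⟩ := key (ℓ - 1) le_rfl
  refine ⟨p.copy (congrArg g ?_) (congrArg g ?_), by simpa, by simpa using hlen⟩
  · rw [show ℓ - (ℓ - 1) = 1 by omega, Nat.cast_one]
  · rw [ZMod.natCast_self]

/-- A rainbow cycle in `G + xy` either avoids the new edge entirely, or it yields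
a long path in `G` between the endpoints of the new edge. -/
private lemma cycle_core {V : Type*} {G : SimpleGraph V} {ℓ : ℕ} (hℓ : 4 ≤ ℓ) {x y : V}
    (f : ZMod ℓ → V) (hf : Function.Injective f)
    (hadj : ∀ i, (G ⊔ SimpleGraph.fromEdgeSet {s(x, y)}).Adj (f i) (f (i + 1))) :
    (∀ i, G.Adj (f i) (f (i + 1)) ∧ s(f i, f (i + 1)) ≠ s(x, y)) ∨
    (∃ a b : V, s(a, b) = s(x, y) ∧ ∃ p : G.Walk b a, p.IsPath ∧ p.length = ℓ - 1) := by
  haveI : NeZero ℓ := ⟨by omega⟩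
  by_cases hex : ∃ i, s(f i, f (i + 1)) = s(x, y)
  · obtain ⟨i₀, hi₀⟩ := hex
    right
    refine ⟨f i₀, f (i₀ + 1), hi₀, ?_⟩
    have h2 : (2 : ZMod ℓ) ≠ 0 := by
      intro hc
      have : ((2 : ℕ) : ZMod ℓ) = 0 := by push_cast; exact hc
      have := Nat.le_of_dvd (by norm_num) ((ZMod.natCast_eq_zero_iff 2 ℓ).mp this)
      omega
    set g : ZMod ℓ → V := fun j => f (i₀ + j) with hgdef
    have hginj : Function.Injective g := fun a b hab => by
      have := hf hab
      exact add_left_cancel this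
    have huniq : ∀ i : ZMod ℓ, s(f (i₀ + i), f (i₀ + i + 1)) = s(x, y) → i = 0 := by
      intro i hsi
      rw [← hi₀, Sym2.eq_iff] at hsi
      rcases hsi with ⟨h1, -⟩ | ⟨h1, h2'⟩
      · exact add_eq_left.mp (hf h1)
      · exfalso
        have e1 : i = 1 := add_left_cancel (hf h1)
        have e2 : i + 1 = 0 := by
          have := hf h2'
          rw [add_assoc] at this
          exact add_eq_left.mp this
        rw [e1, one_add_one_eq_two] at e2
        exact h2 e2
    have hadjg : ∀ i : ZMod ℓ, i ≠ 0 → G.Adj (g i) (g (i + 1)) := by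
      intro i hi
      show G.Adj (f (i₀ + i)) (f (i₀ + (i + 1)))
      rw [← add_assoc]
      rcases (SimpleGraph.sup_adj _ _ _ _).mp (hadj (i₀ + i)) with h | h
      · exact h
      · rw [SimpleGraph.fromEdgeSet_adj] at h
        exact absurd (huniq i h.1) hi
    obtain ⟨p, hp, hl⟩ := chain_path hℓ g hginj hadjg
    exact ⟨p.copy rfl (congrArg f (add_zero i₀)), by simpa, by simpa⟩
  · left
    intro i
    refine ⟨?_, fun hc => hex ⟨i, hc⟩⟩
    rcases (SimpleGraph.sup_adj _ _ _ _).mp (hadj i) with h | h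
    · exact h
    · rw [SimpleGraph.fromEdgeSet_adj] at h
      exact absurd h.1 (fun hc => hex ⟨i, hc⟩)

/-- Any connected graph on a finite vertex set has at least `|V| - 1` edges. -/
private lemma conn_count {V : Type*} [Fintype V] [DecidableEq V]
    (G : SimpleGraph V) (hconn : G.Connected) :
    Fintype.card V - 1 ≤ G.edgeSet.ncard := by
  classical
  obtain ⟨x₀⟩ := hconn.nonempty
  have hstep : ∀ w : V, w ≠ x₀ → ∃ w', G.Adj w w' ∧ G.dist w' x₀ < G.dist w x₀ := by
    intro w hw
    obtain ⟨p, hp⟩ := (hconn w x₀).exists_walk_length_eq_dist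
    have hd : 0 < G.dist w x₀ := (hconn w x₀).pos_dist_of_ne hw
    revert hp
    cases p with
    | nil => exact absurd rfl hw
    | cons h q =>
      rename_i u
      intro hp
      refine ⟨u, h, ?_⟩
      have h1 : G.dist u x₀ ≤ q.length := SimpleGraph.dist_le q
      rw [SimpleGraph.Walk.length_cons] at hp
      omega
  choose F hF1 hF2 using hstep
  set Φ : V → Sym2 V := fun w => if h : w = x₀ then s(x₀, x₀) else s(w, F w h) with hΦ
  have hinj : Set.InjOn Φ {w | w ≠ x₀} := by
    intro a ha b hb hab
    simp only [Set.mem_setOf_eq] at ha hb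
    rw [hΦ] at hab
    simp only [dif_neg ha, dif_neg hb] at hab
    rcases Sym2.eq_iff.mp hab with ⟨h1, h2⟩ | ⟨h1, h2⟩
    · exact h1
    · exfalso
      have d1 := hF2 a ha
      have d2 := hF2 b hb
      rw [h2] at d1
      rw [← h1] at d2
      omega
  have himg : Φ '' {w | w ≠ x₀} ⊆ G.edgeSet := by
    rintro e ⟨w, hw, rfl⟩
    simp only [Set.mem_setOf_eq] at hw
    rw [hΦ]
    simp only [dif_neg hw]
    exact (hF1 w hw)
  have hs : ({w : V | w ≠ x₀} : Set V).ncard = Fintype.card V - 1 := by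
    have he : ({w : V | w ≠ x₀} : Set V) = ↑(Finset.univ.erase x₀) := by
      ext w; simp
    rw [he, Set.ncard_coe_finset, Finset.card_erase_of_mem (Finset.mem_univ _),
      Finset.card_univ]
  calc Fintype.card V - 1 = ({w : V | w ≠ x₀} : Set V).ncard := hs.symm
    _ = (Φ '' {w | w ≠ x₀}).ncard := (Set.ncard_image_of_injOn hinj).symm
    _ ≤ G.edgeSet.ncard := Set.ncard_le_ncard himg (Set.toFinite _)

private lemma reach_transfer {V : Type*} {G H : SimpleGraph V}
    (hsub : ∀ a b : V, G.Adj a b → H.Reachable a b) {x y : V}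
    (h : G.Reachable x y) : H.Reachable x y := by
  obtain ⟨q⟩ := h
  induction q with
  | nil => exact Reachable.refl _
  | cons hadj q ih => exact (hsub _ _ hadj).trans ih

private lemma two_path_aux {V : Type*} {G : SimpleGraph V} {u a b : V}
    (hba : b ≠ a) (hbu : b ≠ u) (hua : u ≠ a)
    (h1 : G.Adj b u) (h2 : G.Adj u a) :
    ∃ q : G.Walk b a, q.IsPath ∧ q.length = 2 := by
  refine ⟨Walk.cons h1 (Walk.cons h2 Walk.nil), ?_, by simp⟩
  simp [Walk.isPath_def, hba, hbu, hua]

/-- An acyclic graph cannot satisfy the saturation condition. -/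
private lemma tree_case {n ℓ : ℕ} (hℓ : 4 ≤ ℓ) (hn : 2 < n) {G : SimpleGraph (Fin n)}
    (hsat : ∀ x y : Fin n, x ≠ y → ¬ G.Adj x y →
      ∀ c, ProperEdgeColoring (G ⊔ SimpleGraph.fromEdgeSet {s(x, y)}) c →
        HasRainbowCycle (G ⊔ SimpleGraph.fromEdgeSet {s(x, y)}) c ℓ)
    (ht : G.IsTree) : False := by
  classical
  haveI : NeZero ℓ := ⟨by omega⟩
  have hacyc := ht.IsAcyclic
  have hcard : G.edgeFinset.card + 1 = Fintype.card (Fin n) := ht.card_edgeFinset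
  rw [Fintype.card_fin] at hcard
  have hsum : ∑ v, G.degree v = 2 * G.edgeFinset.card := G.sum_degrees_eq_twice_card_edges
  have hdeg : ∃ u, 2 ≤ G.degree u := by
    by_contra hcon
    push_neg at hcon
    have hle : ∑ v, G.degree v ≤ ∑ _v : Fin n, 1 :=
      Finset.sum_le_sum (fun i _ => by have := hcon i; omega)
    simp only [Finset.sum_const, Finset.card_univ, Fintype.card_fin, smul_eq_mul, mul_one] at hle
    omega
  obtain ⟨u, hu⟩ := hdeg
  obtain ⟨v, hv, w, hw, hvw⟩ := Finset.one_lt_card.mp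
    (lt_of_lt_of_le one_lt_two hu : 1 < (G.neighborFinset u).card)
  rw [SimpleGraph.mem_neighborFinset] at hv hw
  have hnadj : ¬ G.Adj v w := by
    intro hadjvw
    obtain ⟨q, hq, hqlen⟩ := two_path_aux hvw hv.ne' hw.ne hv.symm hw
    have hpq := hacyc.path_unique ⟨q, hq⟩ (Path.singleton hadjvw)
    have hL := congrArg (fun P : G.Path v w => P.1.length) hpq
    simp only [Path.singleton] at hL
    rw [hqlen] at hL
    simp at hL
  set c₀ : Sym2 (Fin n) → ℕ := fun e => ((Fintype.equivFin (Sym2 (Fin n))) e : ℕ) with hc₀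
  have hc₀inj : Function.Injective c₀ := fun a b hab =>
    (Fintype.equivFin (Sym2 (Fin n))).injective (Fin.val_injective hab)
  have hprop : ProperEdgeColoring (G ⊔ SimpleGraph.fromEdgeSet {s(v, w)}) c₀ :=
    fun e₁ _ e₂ _ hne _ hcc => hne (hc₀inj hcc)
  obtain ⟨f, hfinj, hfadj, -⟩ := hsat v w hvw hnadj c₀ hprop
  rcases cycle_core hℓ f hfinj hfadj with hleft | ⟨a, b, hab, p, hp, hplen⟩
  · obtain ⟨p, hp, hlen⟩ := chain_path hℓ f hfinj (fun i _ => (hleft i).1)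
    have hadj10 : G.Adj (f 1) (f 0) := by
      have := (hleft 0).1
      rw [zero_add] at this
      exact this.symm
    have hpq := hacyc.path_unique ⟨p, hp⟩ (Path.singleton hadj10)
    have hL := congrArg (fun P : G.Path (f 1) (f 0) => P.1.length) hpq
    simp only [Path.singleton] at hL
    rw [hlen] at hL
    simp at hL
    omega
  · have key : ∀ a b : Fin n, G.Adj b u → G.Adj u a → b ≠ a →
        ∀ p : G.Walk b a, p.IsPath → p.length = ℓ - 1 → False := by
      intro a b h1 h2 hba p hp hplen
      obtain ⟨q, hq, hqlen⟩ := two_path_aux hba h1.ne h2.ne h1 h2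
      have hpq := hacyc.path_unique ⟨p, hp⟩ ⟨q, hq⟩
      have hL := congrArg (fun P : G.Path b a => P.1.length) hpq
      simp only at hL
      rw [hplen, hqlen] at hL
      omega
    rcases Sym2.eq_iff.mp hab with ⟨h1, h2⟩ | ⟨h1, h2⟩
    · exact key a b (by rw [h2]; exact hw.symm) (by rw [h1]; exact hv) (by rw [h1, h2]; exact hvw.symm) p hp hplen
    · exact key a b (by rw [h2]; exact hv.symm) (by rw [h1]; exact hw) (by rw [h1, h2]; exact hvw) p hp hplen

/-- For `ℓ ≥ 4` and `n > 2`, every `n`-vertex rainbow `C_ℓ`-saturated graph has at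
least `n` edges; consequently `sat*(n, C_ℓ) ≥ n`. -/
theorem rainbow_sat_cycle_lower (ℓ n : ℕ) (hℓ : 4 ≤ ℓ) (hn : 2 < n)
    (G : SimpleGraph (Fin n)) (hG : RainbowSat G ℓ) :
    n ≤ G.edgeSet.ncard := by
  classical
  haveI : NeZero ℓ := ⟨by omega⟩
  obtain ⟨⟨c, hc, hnc⟩, hsat⟩ := hG
  have hpre : G.Preconnected := by
    intro x y
    by_contra hr
    have hxy : x ≠ y := fun h => hr (h ▸ Reachable.refl x)
    have hnadj : ¬ G.Adj x y := fun h => hr h.reachable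
    set N : ℕ := (Finset.univ.sup c) + 1 with hN
    set c' : Sym2 (Fin n) → ℕ := fun e => if e = s(x, y) then N else c e with hc'
    have hNlt : ∀ e : Sym2 (Fin n), c e < N :=
      fun e => Nat.lt_succ_of_le (Finset.le_sup (Finset.mem_univ e))
    have hmem : ∀ e, e ∈ (G ⊔ SimpleGraph.fromEdgeSet {s(x, y)}).edgeSet → e ≠ s(x, y) →
        e ∈ G.edgeSet := by
      intro e he hexy
      rw [SimpleGraph.edgeSet_sup, SimpleGraph.edgeSet_fromEdgeSet] at he
      rcases he with he | he
      · exact he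
      · exact absurd he.1 (by simpa using hexy)
    have hprop : ProperEdgeColoring (G ⊔ SimpleGraph.fromEdgeSet {s(x, y)}) c' := by
      intro e₁ he₁ e₂ he₂ hne hsh
      by_cases h1 : e₁ = s(x, y) <;> by_cases h2 : e₂ = s(x, y)
      · exact absurd (h1.trans h2.symm) hne
      · simp only [hc', if_pos h1, if_neg h2]
        exact (hNlt e₂).ne'
      · simp only [hc', if_neg h1, if_pos h2]
        exact (hNlt e₁).ne
      · simp only [hc', if_neg h1, if_neg h2]
        exact hc e₁ (hmem _ he₁ h1) e₂ (hmem _ he₂ h2) hne hsh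
    obtain ⟨f, hfinj, hfadj, hfrb⟩ := hsat x y hxy hnadj c' hprop
    rcases cycle_core hℓ f hfinj hfadj with hleft | ⟨a, b, hab, p, hp, hplen⟩
    · apply hnc
      refine ⟨f, hfinj, fun i => (hleft i).1, ?_⟩
      have hfun : (fun i : ZMod ℓ => c' s(f i, f (i + 1))) =
          fun i : ZMod ℓ => c s(f i, f (i + 1)) :=
        funext fun i => by simp only [hc', if_neg (hleft i).2]
      rwa [hfun] at hfrb
    · have hre : G.Reachable b a := p.reachable
      rcases Sym2.eq_iff.mp hab with ⟨rfl, rfl⟩ | ⟨rfl, rfl⟩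
      · exact hr hre.symm
      · exact hr hre
  haveI : Nonempty (Fin n) := ⟨⟨0, by omega⟩⟩
  have hconn : G.Connected := ⟨hpre⟩
  by_cases hacyc : G.IsAcyclic
  · exact (tree_case hℓ hn hsat ⟨hconn, hacyc⟩).elim
  · simp only [SimpleGraph.IsAcyclic, not_forall, not_not] at hacyc
    obtain ⟨u, p, hcyc⟩ := hacyc
    have h3 : 3 ≤ p.length := hcyc.three_le_length
    have hnonnil : p.edges ≠ [] := by
      intro h
      have := congrArg List.length h
      rw [SimpleGraph.Walk.length_edges, List.length_nil] at this
      omega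
    obtain ⟨e, he⟩ := List.exists_mem_of_ne_nil _ hnonnil
    induction e using Sym2.ind with
    | _ v w =>
    have hGadj : G.Adj v w ∧ (G \ fromEdgeSet {s(v, w)}).Reachable v w :=
      SimpleGraph.adj_and_reachable_delete_edges_iff_exists_cycle.mpr ⟨u, p, hcyc, he⟩
    set G' : SimpleGraph (Fin n) := G \ fromEdgeSet {s(v, w)} with hG'
    have hpre' : G'.Preconnected := by
      intro a b
      refine reach_transfer ?_ (hpre a b)
      intro a₁ a₂ hadj
      by_cases hevw : s(a₁, a₂) = s(v, w)
      · rcases Sym2.eq_iff.mp hevw with ⟨h1, h2⟩ | ⟨h1, h2⟩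
        · rw [h1, h2]; exact hGadj.2
        · rw [h1, h2]; exact hGadj.2.symm
      · refine SimpleGraph.Adj.reachable ?_
        rw [hG', SimpleGraph.sdiff_adj]
        refine ⟨hadj, ?_⟩
        rw [SimpleGraph.fromEdgeSet_adj]
        rintro ⟨hm, -⟩
        exact hevw (by simpa using hm)
    have hconn' : G'.Connected := ⟨hpre'⟩
    have hcnt := conn_count G' hconn'
    rw [Fintype.card_fin] at hcnt
    have hE : G'.edgeSet = G.edgeSet \ {s(v, w)} := by
      rw [hG', SimpleGraph.edgeSet_sdiff, SimpleGraph.edgeSet_fromEdgeSet]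
      ext e
      simp only [Set.mem_diff, Set.mem_singleton_iff, Set.mem_setOf_eq, not_and, not_not]
      constructor
      · rintro ⟨heG, hee⟩
        refine ⟨heG, fun hee' => ?_⟩
        have := hee hee'
        rw [hee'] at this
        exact absurd (Sym2.mk_isDiag_iff.mp this) hGadj.1.ne
      · rintro ⟨heG, hee⟩
        exact ⟨heG, fun h => absurd h hee⟩
    have hmemvw : s(v, w) ∈ G.edgeSet := hGadj.1
    have hpos : 0 < G.edgeSet.ncard := (Set.ncard_pos (Set.toFinite _)).mpr ⟨_, hmemvw⟩
    have hdiff : (G.edgeSet \ {s(v, w)}).ncard = G.edgeSet.ncard - 1 :=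
      Set.ncard_diff_singleton_of_mem hmemvw
    rw [hE, hdiff] at hcnt
    omega
end

section
/- Let G be a graph on n ≥ 9 vertices containing two distinct vertices u and v each adjacent to every other vertex of G, and let c be a proper edge-coloring of G. If G contains a rainbow path on 4 vertices with endpoints u and v (i.e., distinct vertices x, y with edges ux, xy, yv whose colors c(ux), c(xy), c(yv) are pairwise distinct), then G contains a rainbow 5-cycle under c. -/
lemma build_c5 {V : Type*} {G : SimpleGraph V} {c : Sym2 V → ℕ}
    (u x y v w : V)
    (huv : u ≠ v) (hxu : x ≠ u) (hxv : x ≠ v) (hyu : y ≠ u) (hyv : y ≠ v) (hxy : x ≠ y)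
    (hwu : w ≠ u) (hwv : w ≠ v) (hwx : w ≠ x) (hwy : w ≠ y)
    (hux : G.Adj u x) (hxy' : G.Adj x y) (hyv' : G.Adj y v)
    (havw : G.Adj v w) (hauw : G.Adj u w)
    (h₁ : c s(u, x) ≠ c s(x, y)) (h₂ : c s(u, x) ≠ c s(y, v)) (h₃ : c s(x, y) ≠ c s(y, v))
    (e30 : c s(v, w) ≠ c s(u, x)) (e31 : c s(v, w) ≠ c s(x, y)) (e32 : c s(v, w) ≠ c s(y, v))
    (e40 : c s(w, u) ≠ c s(u, x)) (e41 : c s(w, u) ≠ c s(x, y)) (e42 : c s(w, u) ≠ c s(y, v))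
    (e34 : c s(v, w) ≠ c s(w, u)) :
    HasRainbowCycle G c 5 := by
  refine ⟨![u, x, y, v, w], ?_, ?_, ?_⟩
  · intro i j hij
    fin_cases i <;> fin_cases j <;> first
      | rfl
      | exact absurd hij huv | exact absurd hij.symm huv
      | exact absurd hij hxu | exact absurd hij.symm hxu
      | exact absurd hij hxv | exact absurd hij.symm hxv
      | exact absurd hij hyu | exact absurd hij.symm hyu
      | exact absurd hij hyv | exact absurd hij.symm hyv
      | exact absurd hij hxy | exact absurd hij.symm hxy
      | exact absurd hij hwu | exact absurd hij.symm hwu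
      | exact absurd hij hwv | exact absurd hij.symm hwv
      | exact absurd hij hwx | exact absurd hij.symm hwx
      | exact absurd hij hwy | exact absurd hij.symm hwy
  · intro i
    fin_cases i <;> first
      | exact hux | exact hxy' | exact hyv' | exact havw | exact hauw.symm
  · intro i j hij
    fin_cases i <;> fin_cases j <;> first
      | rfl
      | exact absurd hij h₁ | exact absurd hij.symm h₁
      | exact absurd hij h₂ | exact absurd hij.symm h₂
      | exact absurd hij h₃ | exact absurd hij.symm h₃
      | exact absurd hij e30 | exact absurd hij.symm e30
      | exact absurd hij e31 | exact absurd hij.symm e31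
      | exact absurd hij e32 | exact absurd hij.symm e32
      | exact absurd hij e40 | exact absurd hij.symm e40
      | exact absurd hij e41 | exact absurd hij.symm e41
      | exact absurd hij e42 | exact absurd hij.symm e42
      | exact absurd hij e34 | exact absurd hij.symm e34

lemma pec_aux {V : Type*} {G : SimpleGraph V} {c : Sym2 V → ℕ}
    (hc : ProperEdgeColoring G c) {a w₁ w₂ : V}
    (h1 : G.Adj a w₁) (h2 : G.Adj a w₂) (h : w₁ ≠ w₂) :
    c s(a, w₁) ≠ c s(a, w₂) := by
  refine hc _ h1 _ h2 ?_ ⟨a, by simp, by simp⟩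
  simp only [ne_eq, Sym2.eq, Sym2.rel_iff', Prod.mk.injEq, Prod.swap_prod_mk, not_or]
  constructor
  · rintro ⟨-, h'⟩; exact h h'
  · rintro ⟨h1', h2'⟩; exact h (h2'.trans h1')

/-- Let `G` have at least 9 vertices with two distinct vertices `u, v` adjacent to
every other vertex, and let `c` be a proper edge-coloring of `G`. If `G` contains a
rainbow path on 4 vertices with endpoints `u` and `v`, then `G` contains a rainbow
5-cycle under `c`. -/
theorem rainbow_P4_gives_rainbow_C5 {V : Type*} [Fintype V]
    (hcard : 9 ≤ Fintype.card V) (G : SimpleGraph V) (u v : V) (huv : u ≠ v)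
    (hu : ∀ w, w ≠ u → G.Adj u w) (hv : ∀ w, w ≠ v → G.Adj v w)
    (c : Sym2 V → ℕ) (hc : ProperEdgeColoring G c)
    (x y : V) (hxy : x ≠ y) (hxu : x ≠ u) (hxv : x ≠ v) (hyu : y ≠ u) (hyv : y ≠ v)
    (hux : G.Adj u x) (hxy' : G.Adj x y) (hyv' : G.Adj y v)
    (h₁ : c s(u, x) ≠ c s(x, y)) (h₂ : c s(u, x) ≠ c s(y, v))
    (h₃ : c s(x, y) ≠ c s(y, v)) :
    HasRainbowCycle G c 5 := by
  classical
  -- adjacency facts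
  have hadj : ∀ w, w ∉ ({u, v, x, y} : Finset V) → w ≠ u ∧ w ≠ v ∧ w ≠ x ∧ w ≠ y := by
    intro w hw; simp only [Finset.mem_insert, Finset.mem_singleton, not_or] at hw
    exact hw
  set S : Finset V := Finset.univ \ {u, v, x, y} with hSdef
  have hScard : 5 ≤ S.card := by
    have h4 : ({u, v, x, y} : Finset V).card ≤ 4 := by
      refine le_trans (Finset.card_insert_le _ _) (Nat.succ_le_succ ?_)
      refine le_trans (Finset.card_insert_le _ _) (Nat.succ_le_succ ?_)
      refine le_trans (Finset.card_insert_le _ _) (Nat.succ_le_succ ?_)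
      simp
    have := Finset.card_sdiff_of_subset (Finset.subset_univ ({u, v, x, y} : Finset V))
    rw [hSdef, this, Finset.card_univ]
    omega
  -- bad sets
  set b1 : Finset V := S.filter (fun w => c s(v, w) = c s(u, x)) with hb1
  set b2 : Finset V := S.filter (fun w => c s(v, w) = c s(x, y)) with hb2
  set b3 : Finset V := S.filter (fun w => c s(u, w) = c s(x, y)) with hb3
  set b4 : Finset V := S.filter (fun w => c s(u, w) = c s(y, v)) with hb4
  have hb_v : ∀ (d : ℕ), (S.filter (fun w => c s(v, w) = d)).card ≤ 1 := by
    intro d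
    refine Finset.card_le_one.2 (fun w₁ hw₁ w₂ hw₂ => ?_)
    simp only [Finset.mem_filter, hSdef, Finset.mem_sdiff] at hw₁ hw₂
    by_contra hne
    obtain ⟨-, hw₁v, -, -⟩ := hadj w₁ hw₁.1.2
    obtain ⟨-, hw₂v, -, -⟩ := hadj w₂ hw₂.1.2
    exact pec_aux hc (hv w₁ hw₁v) (hv w₂ hw₂v) hne (hw₁.2.trans hw₂.2.symm)
  have hb_u : ∀ (d : ℕ), (S.filter (fun w => c s(u, w) = d)).card ≤ 1 := by
    intro d
    refine Finset.card_le_one.2 (fun w₁ hw₁ w₂ hw₂ => ?_)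
    simp only [Finset.mem_filter, hSdef, Finset.mem_sdiff] at hw₁ hw₂
    by_contra hne
    obtain ⟨hw₁u, -, -, -⟩ := hadj w₁ hw₁.1.2
    obtain ⟨hw₂u, -, -, -⟩ := hadj w₂ hw₂.1.2
    exact pec_aux hc (hu w₁ hw₁u) (hu w₂ hw₂u) hne (hw₁.2.trans hw₂.2.symm)
  have hB : (b1 ∪ b2 ∪ b3 ∪ b4).card ≤ 4 := by
    calc (b1 ∪ b2 ∪ b3 ∪ b4).card ≤ (b1 ∪ b2 ∪ b3).card + b4.card :=
          Finset.card_union_le _ _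
      _ ≤ (b1 ∪ b2).card + b3.card + b4.card := by
          have := Finset.card_union_le (b1 ∪ b2) b3; omega
      _ ≤ b1.card + b2.card + b3.card + b4.card := by
          have := Finset.card_union_le b1 b2; omega
      _ ≤ 4 := by
          have := hb_v (c s(u, x)); have := hb_v (c s(x, y))
          have := hb_u (c s(x, y)); have := hb_u (c s(y, v))
          rw [hb1, hb2, hb3, hb4]; omega
  have hex : ∃ w ∈ S, w ∉ b1 ∪ b2 ∪ b3 ∪ b4 := by
    rw [← Finset.not_subset] at *
    intro hsub
    have := Finset.card_le_card hsub
    omega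
  obtain ⟨w, hwS, hwB⟩ := hex
  have hwS' : w ∉ ({u, v, x, y} : Finset V) := by
    rw [hSdef, Finset.mem_sdiff] at hwS; exact hwS.2
  obtain ⟨hwu, hwv, hwx, hwy⟩ := hadj w hwS'
  simp only [Finset.mem_union, not_or, hb1, hb2, hb3, hb4, Finset.mem_filter, hwS,
    true_and, not_and] at hwB
  obtain ⟨⟨⟨g1, g2⟩, g3⟩, g4⟩ := hwB
  -- adjacency of w
  have havw : G.Adj v w := hv w hwv
  have hauw : G.Adj u w := hu w hwu
  -- the five colors are pairwise distinct
  have e30 : c s(v, w) ≠ c s(u, x) := g1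
  have e31 : c s(v, w) ≠ c s(x, y) := g2
  have e32 : c s(v, w) ≠ c s(y, v) := by
    have := pec_aux hc havw (hv y hyv) hwy
    rwa [show s(v, y) = s(y, v) from Sym2.eq_swap] at this
  have e40 : c s(w, u) ≠ c s(u, x) := by
    have := pec_aux hc hauw hux hwx
    rwa [show s(u, w) = s(w, u) from Sym2.eq_swap] at this
  have e41 : c s(w, u) ≠ c s(x, y) := by
    rwa [show s(u, w) = s(w, u) from Sym2.eq_swap] at g3
  have e42 : c s(w, u) ≠ c s(y, v) := by
    rwa [show s(u, w) = s(w, u) from Sym2.eq_swap] at g4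
  have e34 : c s(v, w) ≠ c s(w, u) := by
    have := pec_aux hc havw.symm hauw.symm huv.symm
    rwa [show s(w, v) = s(v, w) from Sym2.eq_swap] at this
  -- build the cycle
  exact build_c5 u x y v w huv hxu hxv hyu hyv hxy hwu hwv hwx hwy hux hxy' hyv'
    havw hauw h₁ h₂ h₃ e30 e31 e32 e40 e41 e42 e34
end

section
/- Let n ≥ 9 and let G(n,C_5) be the graph on vertex set {u, v} ∪ W with |W| = n − 2, whose edges are uv, all edges from u and from v to every vertex of W, and a maximum matching on W (a set of ⌊(n−2)/2⌋ pairwise disjoint edges inside W). Then for every pair of nonadjacent vertices a, b of G(n,C_5), every proper edge-coloring of G(n,C_5) + ab contains a rainbow path on 4 vertices with endpoints u and v (three edges with pairwise distinct colors). -/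
/-- The graph `G(n, C₅)`: two universal vertices `0` and `1`, together with a
maximum matching on the remaining `n - 2` vertices (vertex `i ≥ 2` is matched to
the other vertex `j ≥ 2` with `i / 2 = j / 2`, i.e. the pairs `(2k, 2k+1)`,
giving `⌊(n-2)/2⌋` matching edges). -/
def GnC5 (n : ℕ) : SimpleGraph (Fin n) :=
  SimpleGraph.fromRel (fun i j => i.val ≤ 1 ∨ j.val ≤ 1 ∨ i.val / 2 = j.val / 2)


lemma GnC5_aux_core (n : ℕ) (u v : Fin n) (hu : u.val = 0) (hv : v.val = 1)
    (a b : Fin n)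
    (c : Sym2 (Fin n) → ℕ)
    (hc : ProperEdgeColoring (GnC5 n ⊔ SimpleGraph.fromEdgeSet {s(a, b)}) c)
    (x y : Fin n) (hx2 : 2 ≤ x.val) (hy2 : 2 ≤ y.val) (hxy : x ≠ y)
    (hadjxy : (GnC5 n ⊔ SimpleGraph.fromEdgeSet {s(a, b)}).Adj x y)
    (hne : c s(u, x) ≠ c s(y, v)) :
    ∃ x y : Fin n, x ≠ y ∧ x ≠ u ∧ x ≠ v ∧ y ≠ u ∧ y ≠ v ∧
      (GnC5 n ⊔ SimpleGraph.fromEdgeSet {s(a, b)}).Adj u x ∧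
      (GnC5 n ⊔ SimpleGraph.fromEdgeSet {s(a, b)}).Adj x y ∧
      (GnC5 n ⊔ SimpleGraph.fromEdgeSet {s(a, b)}).Adj y v ∧
      c s(u, x) ≠ c s(x, y) ∧ c s(u, x) ≠ c s(y, v) ∧ c s(x, y) ≠ c s(y, v) := by
  have hxu : x ≠ u := fun h => by rw [h, hu] at hx2; omega
  have hxv : x ≠ v := fun h => by rw [h, hv] at hx2; omega
  have hyu : y ≠ u := fun h => by rw [h, hu] at hy2; omega
  have hyv : y ≠ v := fun h => by rw [h, hv] at hy2; omega
  have hadjux : (GnC5 n ⊔ SimpleGraph.fromEdgeSet {s(a, b)}).Adj u x := by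
    left
    rw [GnC5, SimpleGraph.fromRel_adj]
    exact ⟨hxu.symm, Or.inl (Or.inl (by omega))⟩
  have hadjyv : (GnC5 n ⊔ SimpleGraph.fromEdgeSet {s(a, b)}).Adj y v := by
    left
    rw [GnC5, SimpleGraph.fromRel_adj]
    exact ⟨hyv, Or.inl (Or.inr (Or.inl (by omega)))⟩
  refine ⟨x, y, hxy, hxu, hxv, hyu, hyv, hadjux, hadjxy, hadjyv, ?_, hne, ?_⟩
  · apply hc _ ((SimpleGraph.mem_edgeSet _).mpr hadjux) _ ((SimpleGraph.mem_edgeSet _).mpr hadjxy)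
    · intro h
      rw [Sym2.eq_iff] at h
      rcases h with ⟨h1, h2⟩ | ⟨h1, h2⟩
      · exact hxy (h1 ▸ h2)
      · exact hyu (h1.symm)
    · exact ⟨x, by simp, by simp⟩
  · apply hc _ ((SimpleGraph.mem_edgeSet _).mpr hadjxy) _ ((SimpleGraph.mem_edgeSet _).mpr hadjyv)
    · intro h
      rw [Sym2.eq_iff] at h
      rcases h with ⟨h1, h2⟩ | ⟨h1, h2⟩
      · exact hxy h1
      · exact hxv h1
    · exact ⟨y, by simp, by simp⟩

/-- For `n ≥ 9` and any pair of nonadjacent vertices `a, b` of `G(n, C₅)`, every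
proper edge-coloring of `G(n, C₅) + ab` contains a rainbow path on 4 vertices with
endpoints the two universal vertices `u` and `v`. -/
theorem GnC5_added_edge_gives_rainbow_P4 (n : ℕ) (hn : 9 ≤ n)
    (u v : Fin n) (hu : u.val = 0) (hv : v.val = 1)
    (a b : Fin n) (hab : a ≠ b) (hnadj : ¬ (GnC5 n).Adj a b)
    (c : Sym2 (Fin n) → ℕ)
    (hc : ProperEdgeColoring (GnC5 n ⊔ SimpleGraph.fromEdgeSet {s(a, b)}) c) :
    ∃ x y : Fin n, x ≠ y ∧ x ≠ u ∧ x ≠ v ∧ y ≠ u ∧ y ≠ v ∧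
      (GnC5 n ⊔ SimpleGraph.fromEdgeSet {s(a, b)}).Adj u x ∧
      (GnC5 n ⊔ SimpleGraph.fromEdgeSet {s(a, b)}).Adj x y ∧
      (GnC5 n ⊔ SimpleGraph.fromEdgeSet {s(a, b)}).Adj y v ∧
      c s(u, x) ≠ c s(x, y) ∧ c s(u, x) ≠ c s(y, v) ∧ c s(x, y) ≠ c s(y, v) := by
  classical
  have haadj : a.val ≤ 1 ∨ b.val ≤ 1 ∨ a.val / 2 = b.val / 2 → (GnC5 n).Adj a b := by
    intro h
    rw [GnC5, SimpleGraph.fromRel_adj]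
    exact ⟨hab, Or.inl h⟩
  have hkey : ¬ (a.val ≤ 1 ∨ b.val ≤ 1 ∨ a.val / 2 = b.val / 2) := fun h => hnadj (haadj h)
  push_neg at hkey
  obtain ⟨ha2, hb2, hdiv⟩ := hkey
  have ha2 : 2 ≤ a.val := by omega
  have hb2 : 2 ≤ b.val := by omega
  have hadjab : (GnC5 n ⊔ SimpleGraph.fromEdgeSet {s(a, b)}).Adj a b := by
    right
    rw [SimpleGraph.fromEdgeSet_adj]
    exact ⟨rfl, hab⟩
  by_cases h1 : c s(u, a) = c s(b, v)
  swap
  · exact GnC5_aux_core n u v hu hv a b c hc a b ha2 hb2 hab hadjab h1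
  by_cases h2 : c s(u, b) = c s(a, v)
  swap
  · exact GnC5_aux_core n u v hu hv a b c hc b a hb2 ha2 hab.symm hadjab.symm h2
  -- both equal: find the one of a, b that has a matching partner
  have hmain : ∀ d e : Fin n, 2 ≤ d.val → 2 ≤ e.val → d.val / 2 ≠ e.val / 2 →
      c s(u, d) = c s(e, v) → ∀ d' : Fin n, d'.val / 2 = d.val / 2 → d ≠ d' →
      ∃ x y : Fin n, x ≠ y ∧ x ≠ u ∧ x ≠ v ∧ y ≠ u ∧ y ≠ v ∧
        (GnC5 n ⊔ SimpleGraph.fromEdgeSet {s(a, b)}).Adj u x ∧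
        (GnC5 n ⊔ SimpleGraph.fromEdgeSet {s(a, b)}).Adj x y ∧
        (GnC5 n ⊔ SimpleGraph.fromEdgeSet {s(a, b)}).Adj y v ∧
        c s(u, x) ≠ c s(x, y) ∧ c s(u, x) ≠ c s(y, v) ∧ c s(x, y) ≠ c s(y, v) := by
    intro d e hd2 he2 hde heq d' hd'div hdd'
    have hd'2 : 2 ≤ d'.val := by omega
    have hed' : e ≠ d' := fun h => hde (by rw [h] at he2 ⊢; omega)
    have hev : e ≠ v := fun h => by rw [h, hv] at he2; omega
    have hd'v : d' ≠ v := fun h => by rw [h, hv] at hd'2; omega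
    have hadjev : (GnC5 n ⊔ SimpleGraph.fromEdgeSet {s(a, b)}).Adj e v := by
      left; rw [GnC5, SimpleGraph.fromRel_adj]
      exact ⟨hev, Or.inl (Or.inr (Or.inl (by omega)))⟩
    have hadjd'v : (GnC5 n ⊔ SimpleGraph.fromEdgeSet {s(a, b)}).Adj d' v := by
      left; rw [GnC5, SimpleGraph.fromRel_adj]
      exact ⟨hd'v, Or.inl (Or.inr (Or.inl (by omega)))⟩
    have hadjdd' : (GnC5 n ⊔ SimpleGraph.fromEdgeSet {s(a, b)}).Adj d d' := by
      left; rw [GnC5, SimpleGraph.fromRel_adj]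
      exact ⟨hdd', Or.inl (Or.inr (Or.inr hd'div.symm))⟩
    have hne : c s(u, d) ≠ c s(d', v) := by
      rw [heq]
      apply hc _ ((SimpleGraph.mem_edgeSet _).mpr hadjev) _ ((SimpleGraph.mem_edgeSet _).mpr hadjd'v)
      · intro h
        rw [Sym2.eq_iff] at h
        rcases h with ⟨h1, h2⟩ | ⟨h1, h2⟩
        · exact hed' h1
        · exact hd'v h2.symm
      · exact ⟨v, by simp, by simp⟩
    exact GnC5_aux_core n u v hu hv a b c hc d d' hd2 hd'2 hdd' hadjdd' hne
  by_cases hpar : a.val % 2 = 1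
  · exact hmain a b ha2 hb2 hdiv h1 ⟨a.val - 1, by omega⟩ (by show (a.val - 1) / 2 = a.val / 2; omega)
      (fun h => by have := congrArg Fin.val h; simp at this; try omega)
  · by_cases hlast : a.val + 1 < n
    · exact hmain a b ha2 hb2 hdiv h1 ⟨a.val + 1, hlast⟩ (by show (a.val + 1) / 2 = a.val / 2; omega)
        (fun h => by have := congrArg Fin.val h; simp at this; try omega)
    · have hbn : b.val ≠ n - 1 := fun h => hab (Fin.ext (by omega))
      by_cases hparb : b.val % 2 = 1
      · exact hmain b a hb2 ha2 (Ne.symm hdiv) h2 ⟨b.val - 1, by omega⟩ (by show (b.val - 1) / 2 = b.val / 2; omega)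
          (fun h => by have := congrArg Fin.val h; simp at this; try omega)
      · exact hmain b a hb2 ha2 (Ne.symm hdiv) h2 ⟨b.val + 1, by omega⟩ (by show (b.val + 1) / 2 = b.val / 2; omega)
          (fun h => by have := congrArg Fin.val h; simp at this; try omega)
end

section
/- Let n ≥ 8 and let G(n,C_5) be the graph on vertex set {u, v} ∪ W with |W| = n − 2, whose edges are uv, all edges from u and from v to every vertex of W, and a maximum matching on W (a set of ⌊(n−2)/2⌋ pairwise disjoint edges inside W). Then G(n,C_5) admits a proper edge-coloring under which it contains no rainbow copy of C_5. -/
/-- The color of an edge `{a, b}` (as a function of the two natural labels). -/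
def colv (a b : ℕ) : ℕ :=
  if min a b = 0 then 3 * (max a b / 2) + max a b % 2
  else if min a b = 1 then 3 * (max a b / 2) + (1 - max a b % 2)
  else 3 * (max a b / 2) + 2

lemma colv_comm (a b : ℕ) : colv a b = colv b a := by
  unfold colv; rw [Nat.min_comm, Nat.max_comm]

lemma colv_ne (a b d : ℕ) (hbd : b ≠ d) (hab : a ≠ b) (had : a ≠ d)
    (h1 : a ≤ 1 ∨ b ≤ 1 ∨ a / 2 = b / 2) (h2 : a ≤ 1 ∨ d ≤ 1 ∨ a / 2 = d / 2) :
    colv a b ≠ colv a d := by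
  unfold colv; split_ifs <;> omega

lemma colv_cross (x y a b : ℕ) (ha : 2 ≤ a) (hb : 2 ≤ b) (hab : a ≠ b) (h2 : a / 2 = b / 2)
    (hxy : (x = 0 ∧ y = 1) ∨ (x = 1 ∧ y = 0)) : colv x a = colv b y := by
  unfold colv; split_ifs <;> omega

/-- The coloring on `Sym2 (Fin n)`. -/
def gcol (n : ℕ) : Sym2 (Fin n) → ℕ :=
  Sym2.lift ⟨fun i j => colv i.val j.val, fun i j => colv_comm i.val j.val⟩

lemma gcol_apply {n : ℕ} (i j : Fin n) : gcol n s(i, j) = colv i.val j.val := rfl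

lemma gnc5_adj {n : ℕ} {i j : Fin n} (h : (GnC5 n).Adj i j) :
    i ≠ j ∧ (i.val ≤ 1 ∨ j.val ≤ 1 ∨ i.val / 2 = j.val / 2) := by
  rw [GnC5, SimpleGraph.fromRel_adj] at h
  obtain ⟨h1, h2⟩ := h
  exact ⟨h1, by omega⟩

lemma fin_val_ne {n : ℕ} {p q : Fin n} (h : p ≠ q) : p.val ≠ q.val :=
  fun hv => h (Fin.val_injective hv)

/-- For `n ≥ 8`, the graph `G(n, C₅)` admits a proper edge-coloring with no
rainbow copy of `C₅`. -/

theorem GnC5_admits_rainbow_C5_free_coloring (n : ℕ) (hn : 8 ≤ n) :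
    ∃ c : Sym2 (Fin n) → ℕ,
      ProperEdgeColoring (GnC5 n) c ∧ ¬ HasRainbowCycle (GnC5 n) c 5 := by
  classical
  refine ⟨gcol n, ?_, ?_⟩
  · -- properness
    intro e₁ he₁ e₂ he₂ hne hsh
    induction e₁ using Sym2.ind with | _ a b =>
    induction e₂ using Sym2.ind with | _ x y =>
    rw [SimpleGraph.mem_edgeSet] at he₁ he₂
    obtain ⟨v, hv1, hv2⟩ := hsh
    rw [Sym2.mem_iff] at hv1 hv2
    have H : ∀ p q r : Fin n, (GnC5 n).Adj p q → (GnC5 n).Adj p r → q ≠ r →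
        colv p.val q.val ≠ colv p.val r.val := by
      intro p q r h1 h2 hqr
      obtain ⟨hpq, hd1⟩ := gnc5_adj h1
      obtain ⟨hpr, hd2⟩ := gnc5_adj h2
      exact colv_ne _ _ _ (fin_val_ne hqr) (fin_val_ne hpq) (fin_val_ne hpr) hd1 hd2
    rcases hv1 with rfl | rfl <;> rcases hv2 with rfl | rfl
    · -- v = a, v = x
      have hby : b ≠ y := fun h => hne (by rw [h])
      rw [gcol_apply, gcol_apply]
      exact H v b y he₁ he₂ hby
    · -- v = a, v = y
      have hbx : b ≠ x := fun h => hne (by rw [h, Sym2.eq_swap])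
      rw [gcol_apply, gcol_apply, colv_comm x.val v.val]
      exact H v b x he₁ he₂.symm hbx
    · -- v = b, v = x
      have hay : a ≠ y := fun h => hne (by rw [h, Sym2.eq_swap])
      rw [gcol_apply, gcol_apply, colv_comm a.val v.val]
      exact H v a y he₁.symm he₂ hay
    · -- v = b, v = y
      have hax : a ≠ x := fun h => hne (by rw [h])
      rw [gcol_apply, gcol_apply, colv_comm a.val v.val, colv_comm x.val v.val]
      exact H v a x he₁.symm he₂.symm hax
  · -- no rainbow C5
    rintro ⟨f, hfinj, hadj, hcinj⟩
    have hne5 : ∀ (i a b : ZMod 5), a ≠ b → f (i + a) ≠ f (i + b) :=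
      fun i a b h hf => h (by have := hfinj hf; exact add_left_cancel this)
    have hA : ∀ i, f i ≠ f (i + 1) ∧
        ((f i).val ≤ 1 ∨ (f (i + 1)).val ≤ 1 ∨ (f i).val / 2 = (f (i + 1)).val / 2) :=
      fun i => gnc5_adj (hadj i)
    have e40 : (4 : ZMod 5) + 1 = 0 := by decide
    have hmatch : ∃ i : ZMod 5, 2 ≤ (f i).val ∧ 2 ≤ (f (i + 1)).val := by
      by_contra hcon
      push_neg at hcon
      have h0 := (hA 0).2; have h1 := (hA 1).2; have h2 := (hA 2).2
      have h3 := (hA 3).2; have h4 := (hA 4).2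
      have g0 := hcon 0; have g1 := hcon 1; have g2 := hcon 2
      have g3 := hcon 3; have g4 := hcon 4
      rw [e40] at h4 g4
      have D : ∀ a b : ZMod 5, a ≠ b → (f a).val ≠ (f b).val :=
        fun a b h => fin_val_ne (fun hf => h (hfinj hf))
      have d01 := D 0 1 (by decide); have d02 := D 0 2 (by decide)
      have d03 := D 0 3 (by decide); have d04 := D 0 4 (by decide)
      have d12 := D 1 2 (by decide); have d13 := D 1 3 (by decide)
      have d14 := D 1 4 (by decide); have d23 := D 2 3 (by decide)
      have d24 := D 2 4 (by decide); have d34 := D 3 4 (by decide)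
      have n12 : (1 : ZMod 5) + 1 = 2 := by decide
      have n23 : (2 : ZMod 5) + 1 = 3 := by decide
      have n34 : (3 : ZMod 5) + 1 = 4 := by decide
      have n01 : (0 : ZMod 5) + 1 = 1 := by decide
      rw [n01] at h0 g0; rw [n12] at h1 g1; rw [n23] at h2 g2; rw [n34] at h3 g3
      omega
    obtain ⟨i, ha2, hb2⟩ := hmatch
    have hi5 : i + 4 + 1 = i := by
      have : (4 : ZMod 5) + 1 = 0 := by decide
      rw [add_assoc, this, add_zero]
    have hi2 : i + 1 + 1 = i + 2 := by rw [add_assoc]; norm_num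
    have hiv : i + 0 = i := add_zero i
    have hab := hA i
    have habv : (f i).val ≠ (f (i + 1)).val := fin_val_ne hab.1
    have hEdge : (f i).val / 2 = (f (i + 1)).val / 2 := by
      rcases hab.2 with h | h | h
      · omega
      · omega
      · exact h
    -- f (i+4) has value ≤ 1
    have h4 := hA (i + 4)
    rw [hi5] at h4
    have d40 : (f (i + 4)).val ≠ (f i).val := by
      have := hne5 i 4 0 (by decide); rw [hiv] at this; exact fin_val_ne this
    have d41 : (f (i + 4)).val ≠ (f (i + 1)).val := fin_val_ne (hne5 i 4 1 (by decide))
    have hx : (f (i + 4)).val ≤ 1 := by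
      rcases h4.2 with h | h | h
      · exact h
      · omega
      · omega
    -- f (i+2) has value ≤ 1
    have h1e := hA (i + 1)
    rw [hi2] at h1e
    have d20 : (f (i + 2)).val ≠ (f i).val := by
      have := hne5 i 2 0 (by decide); rw [hiv] at this; exact fin_val_ne this
    have d21 : (f (i + 2)).val ≠ (f (i + 1)).val := fin_val_ne (hne5 i 2 1 (by decide))
    have hy : (f (i + 2)).val ≤ 1 := by
      rcases h1e.2 with h | h | h
      · omega
      · exact h
      · omega
    have d42 : (f (i + 4)).val ≠ (f (i + 2)).val := fin_val_ne (hne5 i 4 2 (by decide))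
    -- the two cross edges get the same color
    have hceq : (fun j : ZMod 5 => gcol n s(f j, f (j + 1))) (i + 4)
        = (fun j : ZMod 5 => gcol n s(f j, f (j + 1))) (i + 1) := by
      simp only
      rw [hi5, hi2, gcol_apply, gcol_apply]
      exact colv_cross _ _ _ _ ha2 hb2 habv hEdge (by omega)
    have h41 : i + 4 = i + 1 := hcinj hceq
    have : (4 : ZMod 5) = 1 := add_left_cancel h41
    exact absurd this (by decide)
end
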